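/- arXiv:math/9407223 — 4 statements merged into one kernel-verified Lean document; each statement's English description precedes it below -/
import Mathlib

section
/- Let f₁, f₂ : ℝ → ℝ be continuous and T-periodic, let t* ∈ ℝ, ε₁ > 0 and k ∈ {1, 2}. Assume f₁ and f₂ are Cᵏ on (t* − ε₁, t*), that f₁(t) < f₂(t) for all t ∈ (t* − ε₁, t*), that f₁, f₂ and their derivatives up to order k extend continuously from the left to t*, and that the one-sided limits satisfy f₁⁽ʲ⁾(t*) = f₂⁽ʲ⁾(t*) for j = 0, 1, …, k−1 while f₁⁽ᵏ⁾(t*) ≠ f₂⁽ᵏ⁾(t*). Then there exist positive constants K and ε such that every trajectory of the Fermi–Ulam model whose initial condition satisfies v₀ > K and t₀ ∈ (t* − ε, t*) has unbounded velocity at time t*: tₙ < t* for all n, tₙ → t*, and vₙ → ∞ as n → ∞. -/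
set_option maxHeartbeats 4000000
open Filter Topology Set

private lemma FU_not_summable {m A B : ℝ} (hm : 0 < m) (hA : 0 < A) (hB : 0 < B) :
    ¬ Summable (fun n : ℕ => m / (A + B * n)) := by
  intro h
  have h2 : Summable (fun n : ℕ => (m / (A + B)) * (1 / ((n : ℝ) + 1))) := by
    apply h.of_nonneg_of_le
    · intro n; positivity
    · intro n
      rw [div_mul_eq_mul_div, mul_one_div, div_div]
      apply div_le_div_of_nonneg_left hm.le
      · positivity
      · have : (0:ℝ) ≤ (n:ℝ) := Nat.cast_nonneg n
        nlinarith
  have h3 : Summable (fun n : ℕ => 1 / ((n : ℝ) + 1)) := by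
    have hne : m / (A + B) ≠ 0 := by positivity
    simpa [hne, mul_comm] using h2.div_const (m / (A+B))
  have h4 : Summable (fun n : ℕ => 1 / ((n : ℝ))) := by
    rw [← summable_nat_add_iff 1]
    simpa using h3
  exact Real.not_summable_one_div_natCast h4

private lemma FU_mvt {f : ℝ → ℝ} {a b lo hi : ℝ} (hab : a < b)
    (hc : ContinuousOn f (Set.Icc a b)) (hd : DifferentiableOn ℝ f (Set.Ioo a b))
    (hlo : ∀ x ∈ Set.Ioo a b, lo ≤ deriv f x) (hhi : ∀ x ∈ Set.Ioo a b, deriv f x ≤ hi) :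
    lo * (b - a) ≤ f b - f a ∧ f b - f a ≤ hi * (b - a) := by
  obtain ⟨ξ, hξ, hslope⟩ := exists_deriv_eq_slope f hab hc hd
  have hba : 0 < b - a := sub_pos.2 hab
  have hfba : f b - f a = deriv f ξ * (b - a) := by
    field_simp at hslope; linarith
  constructor
  · rw [hfba]; exact mul_le_mul_of_nonneg_right (hlo ξ hξ) hba.le
  · rw [hfba]; exact mul_le_mul_of_nonneg_right (hhi ξ hξ) hba.le

/-- A trajectory of the Fermi–Ulam model in an external field with downward
acceleration `g`, lower plate `f₁` and upper plate `f₂`. -/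
def IsFUTrajectory (g : ℝ) (f₁ f₂ : ℝ → ℝ) (t v tt vv : ℕ → ℝ) : Prop :=
  ∀ n : ℕ,
    0 < v n ∧ vv n < 0 ∧
    t n < tt n ∧ tt n < t (n + 1) ∧
    f₂ (tt n) - f₁ (t n) = v n * (tt n - t n) - g / 2 * (tt n - t n) ^ 2 ∧
    (∀ s : ℝ, t n < s →
      f₂ s - f₁ (t n) = v n * (s - t n) - g / 2 * (s - t n) ^ 2 → tt n ≤ s) ∧
    vv n = -(v n) + g * (tt n - t n) + 2 * deriv f₂ (tt n) ∧
    f₂ (tt n) - f₁ (t (n + 1)) =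
      -(vv n) * (t (n + 1) - tt n) + g / 2 * (t (n + 1) - tt n) ^ 2 ∧
    (∀ s : ℝ, tt n < s →
      f₂ (tt n) - f₁ s = -(vv n) * (s - tt n) + g / 2 * (s - tt n) ^ 2 →
      t (n + 1) ≤ s) ∧
    v (n + 1) = v n + g * (t (n + 1) - 2 * tt n + t n)
      + 2 * deriv f₁ (t (n + 1)) - 2 * deriv f₂ (tt n)

/-- Theorem 2,2: if the plates touch at time `t*` with contact of finite order
`k ∈ {1,2}` (derivatives up to order `k-1` agree at `t*` from the left, while
the `k`-th one-sided derivatives differ), then any trajectory starting close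
enough to `t*` with large enough velocity has unbounded velocity at time `t*`. -/
theorem fermi_ulam_touching_plates_unbounded_velocity
    (g T : ℝ) (hg : 0 ≤ g) (hT : 0 < T) (f₁ f₂ : ℝ → ℝ)
    (hc₁ : Continuous f₁) (hc₂ : Continuous f₂)
    (hper₁ : Function.Periodic f₁ T) (hper₂ : Function.Periodic f₂ T)
    (tstar ε₁ : ℝ) (hε₁ : 0 < ε₁) (k : ℕ) (hk : k = 1 ∨ k = 2)
    (hsm₁ : ContDiffOn ℝ k f₁ (Set.Ioo (tstar - ε₁) tstar))
    (hsm₂ : ContDiffOn ℝ k f₂ (Set.Ioo (tstar - ε₁) tstar))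
    (hlt : ∀ s ∈ Set.Ioo (tstar - ε₁) tstar, f₁ s < f₂ s)
    (d₁ d₂ : ℕ → ℝ)
    (hd₁ : ∀ j ≤ k, Tendsto
      (iteratedDerivWithin j f₁ (Set.Ioo (tstar - ε₁) tstar))
      (𝓝[Set.Ioo (tstar - ε₁) tstar] tstar) (𝓝 (d₁ j)))
    (hd₂ : ∀ j ≤ k, Tendsto
      (iteratedDerivWithin j f₂ (Set.Ioo (tstar - ε₁) tstar))
      (𝓝[Set.Ioo (tstar - ε₁) tstar] tstar) (𝓝 (d₂ j)))
    (heq : ∀ j < k, d₁ j = d₂ j) (hne : d₁ k ≠ d₂ k) :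
    ∃ K > (0 : ℝ), ∃ ε > (0 : ℝ), ∀ t v tt vv : ℕ → ℝ,
      IsFUTrajectory g f₁ f₂ t v tt vv →
      K < v 0 → t 0 ∈ Set.Ioo (tstar - ε) tstar →
      (∀ n : ℕ, t n < tstar) ∧
      Tendsto t atTop (𝓝 tstar) ∧
      Tendsto v atTop atTop := by
  have hk1 : 1 ≤ k := by rcases hk with h | h <;> omega
  -- The key local structure near `tstar`, uniform for `k = 1, 2`.
  obtain ⟨ε₂, c, C, L, M, hε₂, hε₂ε₁, hε₂1, hcpos, hCpos, hLpos, hMnn, hprop⟩ :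
      ∃ ε₂ c C L M : ℝ, 0 < ε₂ ∧ ε₂ ≤ ε₁ ∧ ε₂ ≤ 1 ∧ 0 < c ∧ 0 < C ∧ 0 < L ∧ 0 ≤ M ∧
        ∀ s, tstar - ε₂ < s → s < tstar →
          (DifferentiableAt ℝ f₁ s ∧ DifferentiableAt ℝ f₂ s) ∧
          (|deriv f₁ s| ≤ L ∧ |deriv f₂ s| ≤ L) ∧
          f₂ s - f₁ s ≤ C * (tstar - s) ^ k ∧
          c * (tstar - s) ^ (k - 1) ≤ deriv f₁ s - deriv f₂ s ∧
          (∀ u, s ≤ u → u < tstar →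
            -(c / 2) * (tstar - s) ^ (k - 1) - M * (u - s) ≤ deriv f₁ u - deriv f₁ s) := by
    have hIopen : IsOpen (Set.Ioo (tstar - ε₁) tstar) := isOpen_Ioo
    have hne1 : tstar - ε₁ < tstar := by linarith
    haveI hNB : (𝓝[Set.Ioo (tstar - ε₁) tstar] tstar).NeBot := by
      apply mem_closure_iff_nhdsWithin_neBot.1
      rw [closure_Ioo (ne_of_lt hne1)]
      exact right_mem_Icc.2 hne1.le
    have hder : ∀ f : ℝ → ℝ, ContDiffOn ℝ k f (Set.Ioo (tstar - ε₁) tstar) →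
        (∀ s ∈ Set.Ioo (tstar - ε₁) tstar, DifferentiableAt ℝ f s) ∧
        Set.EqOn (iteratedDerivWithin 1 f (Set.Ioo (tstar - ε₁) tstar)) (deriv f)
          (Set.Ioo (tstar - ε₁) tstar) := by
      intro f hf
      have hdiff : DifferentiableOn ℝ f (Set.Ioo (tstar - ε₁) tstar) :=
        hf.differentiableOn (by exact_mod_cast (show k ≠ 0 by omega))
      refine ⟨fun s hs => (hdiff s hs).differentiableAt (hIopen.mem_nhds hs), fun s hs => ?_⟩
      rw [iteratedDerivWithin_one]
      exact derivWithin_of_isOpen hIopen hs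
    have hD₁ : Tendsto (deriv f₁) (𝓝[Set.Ioo (tstar - ε₁) tstar] tstar) (𝓝 (d₁ 1)) := by
      apply (hd₁ 1 hk1).congr'
      filter_upwards [self_mem_nhdsWithin] with s hs
      exact (hder f₁ hsm₁).2 hs
    have hD₂ : Tendsto (deriv f₂) (𝓝[Set.Ioo (tstar - ε₁) tstar] tstar) (𝓝 (d₂ 1)) := by
      apply (hd₂ 1 hk1).congr'
      filter_upwards [self_mem_nhdsWithin] with s hs
      exact (hder f₂ hsm₂).2 hs
    have hf₁star : f₁ tstar = d₁ 0 := by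
      have h1 : Tendsto f₁ (𝓝[Set.Ioo (tstar - ε₁) tstar] tstar) (𝓝 (d₁ 0)) := by
        simpa [iteratedDerivWithin_zero] using hd₁ 0 (Nat.zero_le k)
      exact tendsto_nhds_unique ((hc₁.tendsto tstar).mono_left nhdsWithin_le_nhds) h1
    have hf₂star : f₂ tstar = d₂ 0 := by
      have h1 : Tendsto f₂ (𝓝[Set.Ioo (tstar - ε₁) tstar] tstar) (𝓝 (d₂ 0)) := by
        simpa [iteratedDerivWithin_zero] using hd₂ 0 (Nat.zero_le k)
      exact tendsto_nhds_unique ((hc₂.tendsto tstar).mono_left nhdsWithin_le_nhds) h1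
    have hstar : f₂ tstar - f₁ tstar = 0 := by
      rw [hf₁star, hf₂star, heq 0 (by omega)]; ring
    have hext : ∀ (G : ℝ → ℝ) (l η : ℝ), 0 < η →
        Tendsto G (𝓝[Set.Ioo (tstar - ε₁) tstar] tstar) (𝓝 l) →
        ∃ δ, 0 < δ ∧ δ ≤ ε₁ ∧ ∀ s, tstar - δ < s → s < tstar → |G s - l| ≤ η := by
      intro G l η hη hG
      obtain ⟨δ, hδ, hδ'⟩ := Metric.tendsto_nhdsWithin_nhds.1 hG η hη
      refine ⟨min δ ε₁, lt_min hδ hε₁, min_le_right _ _, fun s h1 h2 => ?_⟩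
      have hsI : s ∈ Set.Ioo (tstar - ε₁) tstar :=
        ⟨by have := min_le_right δ ε₁; linarith, h2⟩
      have hds : dist s tstar < δ := by
        rw [Real.dist_eq, abs_lt]
        have := min_le_left δ ε₁
        constructor <;> linarith
      have := hδ' hsI hds
      rw [Real.dist_eq] at this
      exact this.le
    have hMVTend : ∀ s lo hi : ℝ, tstar - ε₁ < s → s < tstar →
        (∀ x, s < x → x < tstar →
          lo ≤ deriv f₂ x - deriv f₁ x ∧ deriv f₂ x - deriv f₁ x ≤ hi) →
        lo * (tstar - s) ≤ -(f₂ s - f₁ s) ∧ -(f₂ s - f₁ s) ≤ hi * (tstar - s) := by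
      intro s lo hi h1 h2 hbd
      have hd : ∀ x ∈ Set.Ioo s tstar,
          deriv (fun y => f₂ y - f₁ y) x = deriv f₂ x - deriv f₁ x := by
        intro x hx
        exact deriv_sub ((hder f₂ hsm₂).1 x ⟨by linarith [hx.1], hx.2⟩)
          ((hder f₁ hsm₁).1 x ⟨by linarith [hx.1], hx.2⟩)
      have hmv := FU_mvt (f := fun y => f₂ y - f₁ y) (lo := lo) (hi := hi) h2
        ((hc₂.sub hc₁).continuousOn)
        (fun x hx => (((hder f₂ hsm₂).1 x ⟨by linarith [hx.1], hx.2⟩).sub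
          ((hder f₁ hsm₁).1 x ⟨by linarith [hx.1], hx.2⟩)).differentiableWithinAt)
        (fun x hx => by rw [hd x hx]; exact (hbd x hx.1 hx.2).1)
        (fun x hx => by rw [hd x hx]; exact (hbd x hx.1 hx.2).2)
      constructor
      · linarith [hmv.1]
      · linarith [hmv.2]
    rcases hk with hk' | hk'
    · -- k = 1
      subst hk'
      have hane : d₁ 1 - d₂ 1 ≠ 0 := sub_ne_zero.2 hne
      have ha : 0 < d₁ 1 - d₂ 1 := by
        rcases hane.lt_or_gt with hneg | hpos
        · exfalso
          have hb : 0 < d₂ 1 - d₁ 1 := by linarith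
          obtain ⟨δ₁, hδ₁, hδ₁ε, hb₁⟩ := hext (deriv f₁) (d₁ 1) ((d₂ 1 - d₁ 1) / 4)
            (by linarith) hD₁
          obtain ⟨δ₂, hδ₂, hδ₂ε, hb₂⟩ := hext (deriv f₂) (d₂ 1) ((d₂ 1 - d₁ 1) / 4)
            (by linarith) hD₂
          have hδm : 0 < min δ₁ δ₂ := lt_min hδ₁ hδ₂
          have hs2 : tstar - min δ₁ δ₂ / 2 < tstar := by linarith
          have hs1 : tstar - ε₁ < tstar - min δ₁ δ₂ / 2 := by
            have := min_le_right δ₁ δ₂; linarith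
          have hmv := hMVTend (tstar - min δ₁ δ₂ / 2) ((d₂ 1 - d₁ 1) / 2)
            (2 * (d₂ 1 - d₁ 1)) hs1 hs2 ?_
          · have hgap2 := hlt (tstar - min δ₁ δ₂ / 2) ⟨hs1, hs2⟩
            nlinarith [hmv.1, hδm]
          · intro x hx1 hx2
            have hx1' : tstar - δ₁ < x := by
              have := min_le_left δ₁ δ₂; linarith
            have hx2' : tstar - δ₂ < x := by
              have := min_le_right δ₁ δ₂; linarith
            have e1 := abs_le.1 (hb₁ x hx1' hx2)
            have e2 := abs_le.1 (hb₂ x hx2' hx2)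
            constructor <;> [linarith [e1.2, e2.1]; linarith [e1.1, e2.2]]
        · exact hpos
      obtain ⟨δ₁, hδ₁, hδ₁ε, hb₁⟩ := hext (deriv f₁) (d₁ 1) ((d₁ 1 - d₂ 1) / 8)
        (by linarith) hD₁
      obtain ⟨δ₂, hδ₂, hδ₂ε, hb₂⟩ := hext (deriv f₂) (d₂ 1) ((d₁ 1 - d₂ 1) / 8)
        (by linarith) hD₂
      refine ⟨min (min δ₁ δ₂) 1, (d₁ 1 - d₂ 1) / 2, 2 * (d₁ 1 - d₂ 1),
        |d₁ 1| + |d₂ 1| + (d₁ 1 - d₂ 1), 0,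
        lt_min (lt_min hδ₁ hδ₂) one_pos, le_trans (min_le_left _ _) (le_trans (min_le_left _ _) hδ₁ε),
        min_le_right _ _, by linarith, by linarith,
        by positivity, le_refl 0, ?_⟩
      intro s hs1 hs2
      have hsJ1 : tstar - δ₁ < s := by
        have h1 := min_le_left δ₁ δ₂; have h2 := min_le_left (min δ₁ δ₂) 1; linarith
      have hsJ2 : tstar - δ₂ < s := by
        have h1 := min_le_right δ₁ δ₂; have h2 := min_le_left (min δ₁ δ₂) 1; linarith
      have hsI : s ∈ Set.Ioo (tstar - ε₁) tstar := ⟨by linarith, hs2⟩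
      have e1 := abs_le.1 (hb₁ s hsJ1 hs2)
      have e2 := abs_le.1 (hb₂ s hsJ2 hs2)
      refine ⟨⟨(hder f₁ hsm₁).1 s hsI, (hder f₂ hsm₂).1 s hsI⟩, ⟨?_, ?_⟩, ?_, ?_, ?_⟩
      · calc |deriv f₁ s| = |d₁ 1 + (deriv f₁ s - d₁ 1)| := by ring_nf
          _ ≤ |d₁ 1| + |deriv f₁ s - d₁ 1| := abs_add_le _ _
          _ ≤ |d₁ 1| + |d₂ 1| + (d₁ 1 - d₂ 1) := by
              have := abs_nonneg (d₂ 1); linarith [hb₁ s hsJ1 hs2]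
      · calc |deriv f₂ s| = |d₂ 1 + (deriv f₂ s - d₂ 1)| := by ring_nf
          _ ≤ |d₂ 1| + |deriv f₂ s - d₂ 1| := abs_add_le _ _
          _ ≤ |d₁ 1| + |d₂ 1| + (d₁ 1 - d₂ 1) := by
              have := abs_nonneg (d₁ 1); linarith [hb₂ s hsJ2 hs2]
      · have hmv := hMVTend s (-(2 * (d₁ 1 - d₂ 1))) (-((d₁ 1 - d₂ 1) / 2))
          (by linarith) hs2 ?_
        · rw [pow_one]
          linarith [hmv.1]
        · intro x hx1 hx2
          have f1 := abs_le.1 (hb₁ x (by linarith) hx2)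
          have f2 := abs_le.1 (hb₂ x (by linarith) hx2)
          constructor <;> [linarith [f1.2, f2.1]; linarith [f1.1, f2.2]]
      · rw [pow_zero, mul_one]
        linarith [e1.1, e2.2]
      · intro u hu1 hu2
        have f1 := abs_le.1 (hb₁ u (by linarith) hu2)
        rw [pow_zero]
        have hM0 : (0:ℝ) * (u - s) = 0 := by ring
        linarith [f1.1, e1.2]
    · -- k = 2
      subst hk'
      have hder2 : ∀ f : ℝ → ℝ, ContDiffOn ℝ 2 f (Set.Ioo (tstar - ε₁) tstar) →
          (∀ s ∈ Set.Ioo (tstar - ε₁) tstar, DifferentiableAt ℝ (deriv f) s) ∧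
          Set.EqOn (iteratedDerivWithin 2 f (Set.Ioo (tstar - ε₁) tstar)) (deriv (deriv f))
            (Set.Ioo (tstar - ε₁) tstar) := by
        intro f hf
        have hcd : ContDiffOn ℝ 1 (deriv f) (Set.Ioo (tstar - ε₁) tstar) := by
          apply hf.deriv_of_isOpen hIopen
          norm_num
        have hdiff : DifferentiableOn ℝ (deriv f) (Set.Ioo (tstar - ε₁) tstar) :=
          hcd.differentiableOn one_ne_zero
        refine ⟨fun s hs => (hdiff s hs).differentiableAt (hIopen.mem_nhds hs), fun s hs => ?_⟩
        have h21 : (2:ℕ) = 1 + 1 := rfl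
        rw [h21, iteratedDerivWithin_succ]
        rw [derivWithin_congr (hder f hf).2 ((hder f hf).2 hs)]
        exact derivWithin_of_isOpen hIopen hs
      have hDD₁ : Tendsto (deriv (deriv f₁)) (𝓝[Set.Ioo (tstar - ε₁) tstar] tstar)
          (𝓝 (d₁ 2)) := by
        apply (hd₁ 2 (le_refl 2)).congr'
        filter_upwards [self_mem_nhdsWithin] with s hs
        exact (hder2 f₁ hsm₁).2 hs
      have hDD₂ : Tendsto (deriv (deriv f₂)) (𝓝[Set.Ioo (tstar - ε₁) tstar] tstar)
          (𝓝 (d₂ 2)) := by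
        apply (hd₂ 2 (le_refl 2)).congr'
        filter_upwards [self_mem_nhdsWithin] with s hs
        exact (hder2 f₂ hsm₂).2 hs
      have heq1 : d₁ 1 = d₂ 1 := heq 1 (by omega)
      have hD0 : Tendsto (fun x => deriv f₂ x - deriv f₁ x)
          (𝓝[Set.Ioo (tstar - ε₁) tstar] tstar) (𝓝 0) := by
        have h := hD₂.sub hD₁
        rw [heq1] at h
        simpa using h
      have hd'est : ∀ δ lo2 hi2 : ℝ, 0 < δ → δ ≤ ε₁ →
          (∀ x, tstar - δ < x → x < tstar →
            lo2 ≤ deriv (deriv f₂) x - deriv (deriv f₁) x ∧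
            deriv (deriv f₂) x - deriv (deriv f₁) x ≤ hi2) →
          ∀ s, tstar - δ < s → s < tstar →
            lo2 * (tstar - s) ≤ -(deriv f₂ s - deriv f₁ s) ∧
            -(deriv f₂ s - deriv f₁ s) ≤ hi2 * (tstar - s) := by
        intro δ lo2 hi2 hδ hδε hbd s h1 h2
        have hkey : ∀ u, s < u → u < tstar →
            lo2 * (u - s) ≤ (deriv f₂ u - deriv f₁ u) - (deriv f₂ s - deriv f₁ s) ∧
            (deriv f₂ u - deriv f₁ u) - (deriv f₂ s - deriv f₁ s) ≤ hi2 * (u - s) := by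
          intro u hu1 hu2
          have hmemI : ∀ x : ℝ, s ≤ x → x ≤ u → x ∈ Set.Ioo (tstar - ε₁) tstar :=
            fun x hx1 hx2 => ⟨by linarith, by linarith⟩
          have hdx : ∀ x ∈ Set.Ioo s u,
              deriv (fun y => deriv f₂ y - deriv f₁ y) x
                = deriv (deriv f₂) x - deriv (deriv f₁) x := by
            intro x hx
            exact deriv_sub ((hder2 f₂ hsm₂).1 x (hmemI x hx.1.le hx.2.le))
              ((hder2 f₁ hsm₁).1 x (hmemI x hx.1.le hx.2.le))
          have hmv := FU_mvt (f := fun y => deriv f₂ y - deriv f₁ y)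
            (lo := lo2) (hi := hi2) hu1
            (fun x hx => (((hder2 f₂ hsm₂).1 x (hmemI x hx.1 hx.2)).sub
              ((hder2 f₁ hsm₁).1 x (hmemI x hx.1 hx.2))).continuousAt.continuousWithinAt)
            (fun x hx => (((hder2 f₂ hsm₂).1 x (hmemI x hx.1.le hx.2.le)).sub
              ((hder2 f₁ hsm₁).1 x (hmemI x hx.1.le hx.2.le))).differentiableWithinAt)
            (fun x hx => by
              rw [hdx x hx]
              exact (hbd x (by linarith [hx.1]) (by linarith [hx.2])).1)
            (fun x hx => by
              rw [hdx x hx]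
              exact (hbd x (by linarith [hx.1]) (by linarith [hx.2])).2)
          exact hmv
        haveI : (𝓝[Set.Ioo s tstar] tstar).NeBot := by
          apply mem_closure_iff_nhdsWithin_neBot.1
          rw [closure_Ioo (ne_of_lt h2)]
          exact right_mem_Icc.2 h2.le
        have hDlim : Tendsto (fun u => deriv f₂ u - deriv f₁ u)
            (𝓝[Set.Ioo s tstar] tstar) (𝓝 0) :=
          hD0.mono_left (nhdsWithin_mono _ fun x hx => ⟨by linarith [hx.1], hx.2⟩)
        have hlin : ∀ b : ℝ, Tendsto (fun u : ℝ => b * (u - s)) (𝓝 tstar)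
            (𝓝 (b * (tstar - s))) := fun b =>
          (continuous_const.mul (continuous_id.sub continuous_const)).tendsto tstar
        constructor
        · have hT : Tendsto (fun u => (deriv f₂ u - deriv f₁ u) - lo2 * (u - s))
              (𝓝[Set.Ioo s tstar] tstar) (𝓝 (0 - lo2 * (tstar - s))) :=
            hDlim.sub ((hlin lo2).mono_left nhdsWithin_le_nhds)
          have hev : ∀ᶠ u in 𝓝[Set.Ioo s tstar] tstar,
              deriv f₂ s - deriv f₁ s ≤ (deriv f₂ u - deriv f₁ u) - lo2 * (u - s) := by
            filter_upwards [self_mem_nhdsWithin] with u hu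
            linarith [(hkey u hu.1 hu.2).1]
          have := ge_of_tendsto hT hev
          linarith
        · have hT : Tendsto (fun u => (deriv f₂ u - deriv f₁ u) - hi2 * (u - s))
              (𝓝[Set.Ioo s tstar] tstar) (𝓝 (0 - hi2 * (tstar - s))) :=
            hDlim.sub ((hlin hi2).mono_left nhdsWithin_le_nhds)
          have hev : ∀ᶠ u in 𝓝[Set.Ioo s tstar] tstar,
              (deriv f₂ u - deriv f₁ u) - hi2 * (u - s) ≤ deriv f₂ s - deriv f₁ s := by
            filter_upwards [self_mem_nhdsWithin] with u hu
            linarith [(hkey u hu.1 hu.2).2]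
          have := le_of_tendsto hT hev
          linarith
      have ha : 0 < d₂ 2 - d₁ 2 := by
        rcases (sub_ne_zero.2 hne.symm).lt_or_gt with hneg | hpos
        · exfalso
          have hb : 0 < d₁ 2 - d₂ 2 := by linarith
          obtain ⟨δ₁, hδ₁, hδ₁ε, hb₁⟩ := hext (deriv (deriv f₁)) (d₁ 2)
            ((d₁ 2 - d₂ 2) / 4) (by linarith) hDD₁
          obtain ⟨δ₂, hδ₂, hδ₂ε, hb₂⟩ := hext (deriv (deriv f₂)) (d₂ 2)
            ((d₁ 2 - d₂ 2) / 4) (by linarith) hDD₂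
          have hδm : 0 < min δ₁ δ₂ := lt_min hδ₁ hδ₂
          have hδε : min δ₁ δ₂ ≤ ε₁ := le_trans (min_le_left _ _) hδ₁ε
          have hDD := hd'est (min δ₁ δ₂) (-(2 * (d₁ 2 - d₂ 2))) (-((d₁ 2 - d₂ 2) / 2))
            hδm hδε ?_
          · have hs01 : tstar - ε₁ < tstar - min δ₁ δ₂ / 2 := by linarith
            have hs02 : tstar - min δ₁ δ₂ / 2 < tstar := by linarith
            have hmv := hMVTend (tstar - min δ₁ δ₂ / 2) 0 (2 * (d₁ 2 - d₂ 2) * ε₁)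
              hs01 hs02 ?_
            · have hgap2 := hlt (tstar - min δ₁ δ₂ / 2) ⟨hs01, hs02⟩
              linarith [hmv.1]
            · intro x hx1 hx2
              have hDx := hDD x (by linarith) hx2
              have h0x : 0 ≤ tstar - x := by linarith
              have hxε : tstar - x ≤ ε₁ := by linarith
              constructor
              · have h5 : 0 ≤ (d₁ 2 - d₂ 2) / 2 * (tstar - x) :=
                  mul_nonneg (by linarith) h0x
                linarith [hDx.2]
              · have h6 : 2 * (d₁ 2 - d₂ 2) * (tstar - x) ≤ 2 * (d₁ 2 - d₂ 2) * ε₁ :=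
                  mul_le_mul_of_nonneg_left hxε (by linarith)
                linarith [hDx.1]
          · intro x hx1 hx2
            have g1 := abs_le.1 (hb₁ x (by have := min_le_left δ₁ δ₂; linarith) hx2)
            have g2 := abs_le.1 (hb₂ x (by have := min_le_right δ₁ δ₂; linarith) hx2)
            constructor
            · linarith [g1.2, g2.1]
            · linarith [g1.1, g2.2]
        · exact hpos
      obtain ⟨δ₁, hδ₁, hδ₁ε, hb₁⟩ := hext (deriv (deriv f₁)) (d₁ 2)
        ((d₂ 2 - d₁ 2) / 8) (by linarith) hDD₁
      obtain ⟨δ₂, hδ₂, hδ₂ε, hb₂⟩ := hext (deriv (deriv f₂)) (d₂ 2)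
        ((d₂ 2 - d₁ 2) / 8) (by linarith) hDD₂
      obtain ⟨δ₃, hδ₃, hδ₃ε, hb₃⟩ := hext (deriv f₁) (d₁ 1) 1 one_pos hD₁
      obtain ⟨δ₄, hδ₄, hδ₄ε, hb₄⟩ := hext (deriv f₂) (d₂ 1) 1 one_pos hD₂
      have hbd2 : ∀ x, tstar - min δ₁ δ₂ < x → x < tstar →
          3 * (d₂ 2 - d₁ 2) / 4 ≤ deriv (deriv f₂) x - deriv (deriv f₁) x ∧
          deriv (deriv f₂) x - deriv (deriv f₁) x ≤ 5 * (d₂ 2 - d₁ 2) / 4 := by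
        intro x hx1 hx2
        have g1 := abs_le.1 (hb₁ x (by have := min_le_left δ₁ δ₂; linarith) hx2)
        have g2 := abs_le.1 (hb₂ x (by have := min_le_right δ₁ δ₂; linarith) hx2)
        constructor
        · linarith [g1.2, g2.1]
        · linarith [g1.1, g2.2]
      have hDs := hd'est (min δ₁ δ₂) (3 * (d₂ 2 - d₁ 2) / 4) (5 * (d₂ 2 - d₁ 2) / 4)
        (lt_min hδ₁ hδ₂) (le_trans (min_le_left _ _) hδ₁ε) hbd2
      refine ⟨min (min δ₁ δ₂) (min δ₃ (min δ₄ 1)), (d₂ 2 - d₁ 2) / 2, 2 * (d₂ 2 - d₁ 2),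
        |d₁ 1| + |d₂ 1| + 1, |d₁ 2| + (d₂ 2 - d₁ 2),
        lt_min (lt_min hδ₁ hδ₂) (lt_min hδ₃ (lt_min hδ₄ one_pos)),
        le_trans (min_le_left _ _) (le_trans (min_le_left _ _) hδ₁ε),
        le_trans (min_le_right _ _) (le_trans (min_le_right _ _) (min_le_right _ _)),
        by linarith, by linarith, by positivity, by positivity, ?_⟩
      intro s hs1 hs2
      have hm1 := min_le_left (min δ₁ δ₂) (min δ₃ (min δ₄ 1))
      have hm2 := min_le_right (min δ₁ δ₂) (min δ₃ (min δ₄ 1))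
      have hm3 := min_le_left δ₁ δ₂
      have hm4 := min_le_right δ₁ δ₂
      have hm5 := min_le_left δ₃ (min δ₄ 1)
      have hm6 := min_le_right δ₃ (min δ₄ 1)
      have hm7 := min_le_left δ₄ 1
      have hsδ₁ : tstar - δ₁ < s := by linarith
      have hsδ₂ : tstar - δ₂ < s := by linarith
      have hsδ₃ : tstar - δ₃ < s := by linarith
      have hsδ₄ : tstar - δ₄ < s := by linarith
      have hsδm : tstar - min δ₁ δ₂ < s := by linarith
      have hsI : s ∈ Set.Ioo (tstar - ε₁) tstar := ⟨by linarith, hs2⟩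
      have hτ0 : 0 ≤ tstar - s := by linarith
      have e3 := abs_le.1 (hb₃ s hsδ₃ hs2)
      have e4 := abs_le.1 (hb₄ s hsδ₄ hs2)
      refine ⟨⟨(hder f₁ hsm₁).1 s hsI, (hder f₂ hsm₂).1 s hsI⟩, ⟨?_, ?_⟩, ?_, ?_, ?_⟩
      · calc |deriv f₁ s| = |d₁ 1 + (deriv f₁ s - d₁ 1)| := by ring_nf
          _ ≤ |d₁ 1| + |deriv f₁ s - d₁ 1| := abs_add_le _ _
          _ ≤ |d₁ 1| + |d₂ 1| + 1 := by
              have := abs_nonneg (d₂ 1); linarith [hb₃ s hsδ₃ hs2]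
      · calc |deriv f₂ s| = |d₂ 1 + (deriv f₂ s - d₂ 1)| := by ring_nf
          _ ≤ |d₂ 1| + |deriv f₂ s - d₂ 1| := abs_add_le _ _
          _ ≤ |d₁ 1| + |d₂ 1| + 1 := by
              have := abs_nonneg (d₁ 1); linarith [hb₄ s hsδ₄ hs2]
      · -- gap upper bound
        have hmv := hMVTend s (-(5 * (d₂ 2 - d₁ 2) / 4 * (tstar - s))) 0
          (by linarith) hs2 ?_
        · have h9 : 0 ≤ 3 * (d₂ 2 - d₁ 2) / 4 * ((tstar - s) * (tstar - s)) :=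
            mul_nonneg (by linarith) (mul_nonneg hτ0 hτ0)
          have h10 := hmv.1
          have hsq : (tstar - s) ^ 2 = (tstar - s) * (tstar - s) := sq (tstar - s) ▸ rfl
          nlinarith [h10, h9]
        · intro x hx1 hx2
          have hDx := hDs x (by linarith) hx2
          have h0x : 0 ≤ tstar - x := by linarith
          constructor
          · have h5 : 5 * (d₂ 2 - d₁ 2) / 4 * (tstar - x)
                ≤ 5 * (d₂ 2 - d₁ 2) / 4 * (tstar - s) :=
              mul_le_mul_of_nonneg_left (by linarith) (by linarith)
            linarith [hDx.2]
          · have h6 : 0 ≤ 3 * (d₂ 2 - d₁ 2) / 4 * (tstar - x) :=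
              mul_nonneg (by linarith) h0x
            linarith [hDx.1]
      · -- first derivative gap lower bound
        have hDs' := hDs s hsδm hs2
        rw [pow_one]
        have h9 : 0 ≤ (d₂ 2 - d₁ 2) / 4 * (tstar - s) := mul_nonneg (by linarith) hτ0
        linarith [hDs'.1]
      · -- oscillation of deriv f₁
        intro u hu1 hu2
        rcases eq_or_lt_of_le hu1 with rfl | hlt'
        · have h9 : 0 ≤ (d₂ 2 - d₁ 2) / 2 / 2 * (tstar - s) := mul_nonneg (by linarith) hτ0
          simp only [sub_self, mul_zero, pow_one]
          linarith
        · have hmemI : ∀ x : ℝ, s ≤ x → x ≤ u → x ∈ Set.Ioo (tstar - ε₁) tstar :=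
            fun x hx1 hx2 => ⟨by linarith, by linarith⟩
          have hbM : ∀ x ∈ Set.Ioo s u,
              -(|d₁ 2| + (d₂ 2 - d₁ 2)) ≤ deriv (deriv f₁) x ∧
              deriv (deriv f₁) x ≤ |d₁ 2| + (d₂ 2 - d₁ 2) := by
            intro x hx
            have g1 := abs_le.1 (hb₁ x (by linarith [hx.1]) (by linarith [hx.2]))
            have g2 := abs_le.1 (abs_le.2 ⟨neg_abs_le (d₁ 2), le_abs_self (d₁ 2)⟩)
            constructor
            · linarith [g1.1, neg_abs_le (d₁ 2)]
            · linarith [g1.2, le_abs_self (d₁ 2)]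
          have hmv2 := FU_mvt (f := deriv f₁) (lo := -(|d₁ 2| + (d₂ 2 - d₁ 2)))
            (hi := |d₁ 2| + (d₂ 2 - d₁ 2)) hlt'
            (fun x hx => (((hder2 f₁ hsm₁).1 x (hmemI x hx.1 hx.2)).continuousAt.continuousWithinAt))
            (fun x hx => ((hder2 f₁ hsm₁).1 x (hmemI x hx.1.le hx.2.le)).differentiableWithinAt)
            (fun x hx => (hbM x hx).1)
            (fun x hx => (hbM x hx).2)
          have h9 : 0 ≤ (d₂ 2 - d₁ 2) / 2 / 2 * (tstar - s) := mul_nonneg (by linarith) hτ0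
          rw [pow_one]
          linarith [hmv2.1]
  obtain ⟨K₀, hK₀def⟩ : ∃ x : ℝ, x = 2 * g + 8 * L + 8 * C + 2 := ⟨_, rfl⟩
  have hK₀pos : 0 < K₀ := by rw [hK₀def]; nlinarith
  obtain ⟨K, hKdef⟩ : ∃ x : ℝ, x = K₀ + 2 * M + g + 1 := ⟨_, rfl⟩
  obtain ⟨ε, hεdef⟩ : ∃ x : ℝ, x = min ε₂ (1 / 2) := ⟨_, rfl⟩
  have hεpos : 0 < ε := by rw [hεdef]; positivity
  have hεε₂ : ε ≤ ε₂ := hεdef ▸ min_le_left _ _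
  have hεhalf : ε ≤ 1 / 2 := hεdef ▸ min_le_right _ _
  have hεε₁ : ε ≤ ε₁ := hεε₂.trans hε₂ε₁
  refine ⟨K, by rw [hKdef]; nlinarith, ε, hεpos, ?_⟩
  intro t v tt vv htraj hv0 ht0
  -- basic facts from the trajectory
  have htmono : StrictMono t :=
    strictMono_nat_of_lt_succ fun n => lt_trans (htraj n).2.2.1 (htraj n).2.2.2.1
  have hJ : ∀ s, tstar - ε < s → s < tstar →
      (DifferentiableAt ℝ f₁ s ∧ DifferentiableAt ℝ f₂ s) ∧
      (|deriv f₁ s| ≤ L ∧ |deriv f₂ s| ≤ L) ∧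
      f₂ s - f₁ s ≤ C * (tstar - s) ^ k ∧
      c * (tstar - s) ^ (k - 1) ≤ deriv f₁ s - deriv f₂ s ∧
      (∀ u, s ≤ u → u < tstar →
        -(c / 2) * (tstar - s) ^ (k - 1) - M * (u - s) ≤ deriv f₁ u - deriv f₁ s) := by
    intro s h1 h2
    exact hprop s (by linarith) h2
  have hgap : ∀ s, tstar - ε < s → s < tstar → 0 < f₂ s - f₁ s := by
    intro s h1 h2
    have := hlt s ⟨by linarith, h2⟩
    linarith
  -- the core one-step estimate
  have hstep : ∀ n, t n < tstar → (∀ j < n, tt j < tstar) →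
      v 0 - (2 * M + g) * (t n - t 0)
        + c * ∑ j ∈ Finset.range n, (tstar - tt j) ^ (k - 1) ≤ v n →
      tt n < tstar ∧ t (n + 1) < tstar ∧
      (v 0 - (2 * M + g) * (t (n + 1) - t 0)
        + c * ∑ j ∈ Finset.range (n + 1), (tstar - tt j) ^ (k - 1) ≤ v (n + 1)) ∧
      (f₂ (t n) - f₁ (t n)) / (v n + L) ≤ t (n + 1) - t n ∧
      t (n + 1) - t n ≤ 6 * C / K₀ * (tstar - t n) ^ k ∧
      v (n + 1) ≤ v n + (g + 4 * L) := by
    intro n htn httprev hvlb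
    obtain ⟨hv_pos, hvv_neg, h34a, h34b, heq5, hmin6, heq7, heq8, hmin9, heq10⟩ := htraj n
    have ht0n : t 0 ≤ t n := htmono.monotone (Nat.zero_le n)
    have htnJ : tstar - ε < t n := lt_of_lt_of_le ht0.1 ht0n
    have hτpos : 0 < tstar - t n := by linarith
    have hτ1 : tstar - t n ≤ 1 := by linarith [hεhalf]
    have hSnn : (0:ℝ) ≤ ∑ j ∈ Finset.range n, (tstar - tt j) ^ (k - 1) :=
      Finset.sum_nonneg fun j hj =>
        pow_nonneg (by linarith [httprev j (Finset.mem_range.1 hj)]) _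
    have hvK : K₀ + 1 ≤ v n := by
      have h2 : t n - t 0 ≤ 1 := by linarith [ht0.1]
      have h3 : (2 * M + g) * (t n - t 0) ≤ (2 * M + g) * 1 :=
        mul_le_mul_of_nonneg_left h2 (by linarith)
      have h4 : 0 ≤ c * ∑ j ∈ Finset.range n, (tstar - tt j) ^ (k - 1) :=
        mul_nonneg hcpos.le hSnn
      linarith [hv0, hKdef, hK₀def]
    have hvpos' : (0:ℝ) < v n := by linarith [hK₀pos]
    -- general Lipschitz estimate on the working interval
    have hlip : ∀ f : ℝ → ℝ, Continuous f →
        (∀ s, tstar - ε < s → s < tstar → DifferentiableAt ℝ f s ∧ |deriv f s| ≤ L) →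
        ∀ x y, tstar - ε < x → x ≤ y → y < tstar → |f y - f x| ≤ L * (y - x) := by
      intro f hcf hpf x y hx hxy hy
      rcases eq_or_lt_of_le hxy with rfl | hxy'
      · simp
      · have hmem : ∀ s ∈ Set.Ioo x y, tstar - ε < s ∧ s < tstar := by
          intro s hs; exact ⟨by linarith [hs.1], by linarith [hs.2]⟩
        have := FU_mvt (lo := -L) (hi := L) hxy' hcf.continuousOn
          (fun s hs => ((hpf s (hmem s hs).1 (hmem s hs).2).1).differentiableWithinAt)
          (fun s hs => (abs_le.1 (hpf s (hmem s hs).1 (hmem s hs).2).2).1)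
          (fun s hs => (abs_le.1 (hpf s (hmem s hs).1 (hmem s hs).2).2).2)
        rw [abs_le]
        constructor <;> linarith [this.1, this.2]
    have hlip₁ := hlip f₁ hc₁ fun s h1 h2 => ⟨(hJ s h1 h2).1.1, (hJ s h1 h2).2.1.1⟩
    have hlip₂ := hlip f₂ hc₂ fun s h1 h2 => ⟨(hJ s h1 h2).1.2, (hJ s h1 h2).2.1.2⟩
    -- gap at `t n`
    have hd_pos : 0 < f₂ (t n) - f₁ (t n) := hgap _ htnJ htn
    obtain ⟨⟨hdf1n, hdf2n⟩, ⟨hL1n, hL2n⟩, hdC, hciv, hcv⟩ := hJ (t n) htnJ htn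
    have hpowτ : (tstar - t n) ^ k ≤ tstar - t n := by
      calc (tstar - t n) ^ k ≤ (tstar - t n) ^ 1 :=
            pow_le_pow_of_le_one hτpos.le hτ1 hk1
        _ = tstar - t n := pow_one _
    have hdCτ : f₂ (t n) - f₁ (t n) ≤ C * (tstar - t n) :=
      le_trans hdC (mul_le_mul_of_nonneg_left hpowτ hCpos.le)
    -- UP FLIGHT
    obtain ⟨hup, hupv, hup_pos⟩ : ∃ x : ℝ, v n * x = 2 * (f₂ (t n) - f₁ (t n)) ∧ 0 < x := by
      refine ⟨2 * (f₂ (t n) - f₁ (t n)) / v n, by field_simp, by positivity⟩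
    have hup_lt : hup < tstar - t n := by
      have t1 : (tstar - t n) * (K₀ + 1) ≤ (tstar - t n) * v n :=
        mul_le_mul_of_nonneg_left hvK hτpos.le
      have t2 : 2 * C + 1 ≤ K₀ + 1 := by linarith [hK₀def]
      have t3 : (tstar - t n) * (2 * C + 1) ≤ (tstar - t n) * (K₀ + 1) :=
        mul_le_mul_of_nonneg_left t2 hτpos.le
      have h14 : v n * hup < v n * (tstar - t n) := by
        linarith [hdCτ, hτpos, t1, t3, hupv]
      exact lt_of_mul_lt_mul_left h14 hvpos'.le
    have hup1 : hup ≤ 1 := by linarith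
    obtain ⟨r, hrt, hrub, heqr⟩ : ∃ r, t n < r ∧ r ≤ t n + hup ∧
        f₂ r - f₁ (t n) = v n * (r - t n) - g / 2 * (r - t n) ^ 2 := by
      set φ : ℝ → ℝ := fun s => v n * (s - t n) - g / 2 * (s - t n) ^ 2 - (f₂ s - f₁ (t n))
        with hφdef
      have hφcont : Continuous φ := by fun_prop
      have hφa : φ (t n) = -(f₂ (t n) - f₁ (t n)) := by simp [hφdef]
      have hs₁lt : t n + hup < tstar := by linarith
      have hflip : |f₂ (t n + hup) - f₂ (t n)| ≤ L * hup := by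
        have := hlip₂ (t n) (t n + hup) htnJ (by linarith) hs₁lt
        simpa using this
      have hφb : 0 ≤ φ (t n + hup) := by
        have e2 : (g / 2 * hup + L) * hup ≤ f₂ (t n) - f₁ (t n) := by
          have e3 : (g / 2 * hup + L) * hup * v n ≤ (f₂ (t n) - f₁ (t n)) * v n := by
            calc (g / 2 * hup + L) * hup * v n = (g / 2 * hup + L) * (v n * hup) := by ring
              _ = (g / 2 * hup + L) * (2 * (f₂ (t n) - f₁ (t n))) := by rw [hupv]
              _ = (g * hup + 2 * L) * (f₂ (t n) - f₁ (t n)) := by ring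
              _ ≤ v n * (f₂ (t n) - f₁ (t n)) := by
                  have u1 : g * hup ≤ g * 1 := mul_le_mul_of_nonneg_left hup1 hg
                  have u2 : g * hup + 2 * L ≤ v n := by linarith [hK₀def]
                  exact mul_le_mul_of_nonneg_right u2 hd_pos.le
              _ = (f₂ (t n) - f₁ (t n)) * v n := by ring
          exact le_of_mul_le_mul_right e3 hvpos'
        have habs := abs_le.1 hflip
        simp only [hφdef]
        have hs : t n + hup - t n = hup := by ring
        rw [hs]
        linarith [habs.2, hupv, e2]
      have h0mem : (0:ℝ) ∈ Set.Icc (φ (t n)) (φ (t n + hup)) := by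
        constructor
        · rw [hφa]; linarith
        · exact hφb
      obtain ⟨r, hrmem, hφr⟩ :=
        intermediate_value_Icc (by linarith : t n ≤ t n + hup) hφcont.continuousOn h0mem
      refine ⟨r, ?_, hrmem.2, ?_⟩
      · rcases eq_or_lt_of_le hrmem.1 with he | hlt'
        · exfalso; rw [← he, hφa] at hφr; linarith
        · exact hlt'
      · simp only [hφdef] at hφr
        linarith
    have httub : tt n ≤ t n + hup := le_trans (hmin6 r hrt heqr) hrub
    have htt_lt : tt n < tstar := by linarith
    have httJ : tstar - ε < tt n := by linarith
    have hsep1 : 0 < tt n - t n := by linarith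
    have hsep2 : tt n - t n ≤ hup := by linarith
    -- DOWN FLIGHT
    obtain ⟨⟨hdf1t, hdf2t⟩, ⟨hL1t, hL2t⟩, hdCt, hcivt, hcvt⟩ := hJ (tt n) httJ htt_lt
    have hdt_pos : 0 < f₂ (tt n) - f₁ (tt n) := hgap _ httJ htt_lt
    have hτtpos : 0 < tstar - tt n := by linarith
    have hpowτt : (tstar - tt n) ^ k ≤ tstar - tt n := by
      calc (tstar - tt n) ^ k ≤ (tstar - tt n) ^ 1 :=
            pow_le_pow_of_le_one hτtpos.le (by linarith) hk1
        _ = tstar - tt n := pow_one _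
    have hdtC : f₂ (tt n) - f₁ (tt n) ≤ C * (tstar - tt n) :=
      le_trans hdCt (mul_le_mul_of_nonneg_left hpowτt hCpos.le)
    obtain ⟨w, hwdef⟩ : ∃ x : ℝ, x = -(vv n) := ⟨_, rfl⟩
    have hw_pos : 0 < w := by rw [hwdef]; linarith
    have habs2 := abs_le.1 hL2t
    have hw_lb : v n / 2 ≤ w := by
      have hweq : w = v n - g * (tt n - t n) - 2 * deriv f₂ (tt n) := by
        rw [hwdef, heq7]; ring
      have hgd : g * (tt n - t n) ≤ g * 1 :=
        mul_le_mul_of_nonneg_left (by linarith) hg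
      rw [hweq]
      linarith [hK₀def, hvK, habs2.2]
    have hw_ub : v n ≤ 2 * w := by linarith
    obtain ⟨hdn, hdnv, hdn_pos⟩ : ∃ x : ℝ, w * x = 2 * (f₂ (tt n) - f₁ (tt n)) ∧ 0 < x := by
      refine ⟨2 * (f₂ (tt n) - f₁ (tt n)) / w, by field_simp, by positivity⟩
    have hdn_lt : hdn < tstar - tt n := by
      have t1 : (tstar - tt n) * (v n / 2) ≤ (tstar - tt n) * w :=
        mul_le_mul_of_nonneg_left hw_lb hτtpos.le
      have t2 : (tstar - tt n) * ((K₀ + 1) / 2) ≤ (tstar - tt n) * (v n / 2) :=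
        mul_le_mul_of_nonneg_left (by linarith) hτtpos.le
      have t3 : 4 * C + 1 ≤ K₀ + 1 := by linarith [hK₀def]
      have t4 : (tstar - tt n) * ((4 * C + 1) / 2) ≤ (tstar - tt n) * ((K₀ + 1) / 2) :=
        mul_le_mul_of_nonneg_left (by linarith) hτtpos.le
      have h14 : w * hdn < w * (tstar - tt n) := by
        linarith [hdtC, hτtpos, t1, t2, t4, hdnv]
      exact lt_of_mul_lt_mul_left h14 hw_pos.le
    obtain ⟨r₂, hrt₂, hrub₂, heqr₂⟩ : ∃ r₂, tt n < r₂ ∧ r₂ ≤ tt n + hdn ∧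
        f₂ (tt n) - f₁ r₂ = -(vv n) * (r₂ - tt n) + g / 2 * (r₂ - tt n) ^ 2 := by
      set ψ : ℝ → ℝ := fun s => w * (s - tt n) + g / 2 * (s - tt n) ^ 2 - (f₂ (tt n) - f₁ s)
        with hψdef
      have hψcont : Continuous ψ := by fun_prop
      have hψa : ψ (tt n) = -(f₂ (tt n) - f₁ (tt n)) := by simp [hψdef]
      have hs₂lt : tt n + hdn < tstar := by linarith
      have hflip : |f₁ (tt n + hdn) - f₁ (tt n)| ≤ L * hdn := by
        have := hlip₁ (tt n) (tt n + hdn) httJ (by linarith) hs₂lt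
        simpa using this
      have hψb : 0 ≤ ψ (tt n + hdn) := by
        have e2 : L * hdn ≤ f₂ (tt n) - f₁ (tt n) := by
          have e3 : L * hdn * w ≤ (f₂ (tt n) - f₁ (tt n)) * w := by
            calc L * hdn * w = L * (w * hdn) := by ring
              _ = L * (2 * (f₂ (tt n) - f₁ (tt n))) := by rw [hdnv]
              _ = 2 * L * (f₂ (tt n) - f₁ (tt n)) := by ring
              _ ≤ w * (f₂ (tt n) - f₁ (tt n)) := by
                  have u2 : 2 * L ≤ w := by linarith [hw_lb, hvK, hK₀def]
                  exact mul_le_mul_of_nonneg_right u2 hdt_pos.le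
              _ = (f₂ (tt n) - f₁ (tt n)) * w := by ring
          exact le_of_mul_le_mul_right e3 hw_pos
        have habs := abs_le.1 hflip
        simp only [hψdef]
        have hs : tt n + hdn - tt n = hdn := by ring
        rw [hs]
        have hgnn : 0 ≤ g / 2 * hdn ^ 2 := by positivity
        linarith [habs.1, hdnv, e2]
      have h0mem : (0:ℝ) ∈ Set.Icc (ψ (tt n)) (ψ (tt n + hdn)) := by
        constructor
        · rw [hψa]; linarith
        · exact hψb
      obtain ⟨r₂, hrmem, hψr⟩ :=
        intermediate_value_Icc (by linarith : tt n ≤ tt n + hdn) hψcont.continuousOn h0mem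
      refine ⟨r₂, ?_, hrmem.2, ?_⟩
      · rcases eq_or_lt_of_le hrmem.1 with he | hlt'
        · exfalso; rw [← he, hψa] at hψr; linarith
        · exact hlt'
      · simp only [hψdef] at hψr
        simp only [hwdef] at hψr ⊢
        linarith
    have ht1ub : t (n + 1) ≤ tt n + hdn := le_trans (hmin9 r₂ hrt₂ heqr₂) hrub₂
    have ht1_lt : t (n + 1) < tstar := by linarith
    -- Δ lower bound
    have hΔlow : (f₂ (t n) - f₁ (t n)) / (v n + L) ≤ t (n + 1) - t n := by
      have hflow := abs_le.1 (hlip₂ (t n) (tt n) htnJ (by linarith) htt_lt)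
      have hq1 : 0 ≤ g / 2 * (tt n - t n) ^ 2 := by positivity
      have h5 : f₂ (t n) - f₁ (t n) ≤ (v n + L) * (tt n - t n) := by
        have := hflow.1
        linarith [heq5, hq1]
      rw [div_le_iff₀ (by linarith : 0 < v n + L)]
      have h6 : (v n + L) * (tt n - t n) ≤ (v n + L) * (t (n + 1) - t n) :=
        mul_le_mul_of_nonneg_left (by linarith) (by linarith)
      linarith
    -- Δ upper bound
    have hΔub : t (n + 1) - t n ≤ 6 * C / K₀ * (tstar - t n) ^ k := by
      have h6 : v n * hdn ≤ 4 * (f₂ (tt n) - f₁ (tt n)) := by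
        have := mul_le_mul_of_nonneg_right hw_ub hdn_pos.le
        linarith [hdnv]
      have hpowmono : (tstar - tt n) ^ k ≤ (tstar - t n) ^ k :=
        pow_le_pow_left₀ hτtpos.le (by linarith) k
      have hdnk : f₂ (t n) - f₁ (t n) ≤ C * (tstar - t n) ^ k := hdC
      have hdtk : f₂ (tt n) - f₁ (tt n) ≤ C * (tstar - tt n) ^ k := hdCt
      have h7 : v n * (t (n + 1) - t n) ≤ 6 * C * (tstar - t n) ^ k := by
        have h8 : t (n + 1) - t n ≤ hup + hdn := by linarith
        have h9 : v n * (t (n + 1) - t n) ≤ v n * (hup + hdn) :=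
          mul_le_mul_of_nonneg_left h8 hvpos'.le
        have h10 : C * (tstar - tt n) ^ k ≤ C * (tstar - t n) ^ k :=
          mul_le_mul_of_nonneg_left hpowmono hCpos.le
        have h11 : v n * hdn ≤ 4 * (C * (tstar - tt n) ^ k) := by linarith [h6, hdtk]
        have h12 : v n * (hup + hdn) = v n * hup + v n * hdn := by ring
        linarith [hupv, hdnk, h10]
      rw [div_mul_eq_mul_div, le_div_iff₀ hK₀pos]
      have hΔnn : 0 ≤ t (n + 1) - t n := by linarith
      have h13 : (t (n + 1) - t n) * K₀ ≤ (t (n + 1) - t n) * v n :=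
        mul_le_mul_of_nonneg_left (by linarith) hΔnn
      linarith [h7, h13]
    -- velocity gain
    have ht1J : tstar - ε < t (n + 1) := by linarith
    obtain ⟨_, ⟨hL1s, _⟩, _, _, _⟩ := hJ (t (n + 1)) ht1J ht1_lt
    have hgain : v n + c * (tstar - tt n) ^ (k - 1) - (2 * M + g) * (t (n + 1) - t n)
        ≤ v (n + 1) := by
      have hcv' := hcvt (t (n + 1)) (by linarith) ht1_lt
      have hMle : M * (t (n + 1) - tt n) ≤ M * (t (n + 1) - t n) :=
        mul_le_mul_of_nonneg_left (by linarith) hMnn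
      have hgle : -(g * (t (n + 1) - t n)) ≤ g * (t (n + 1) - 2 * tt n + t n) := by
        have := mul_le_mul_of_nonneg_left
          (show -(t (n + 1) - t n) ≤ t (n + 1) - 2 * tt n + t n from by linarith) hg
        linarith
      rw [heq10]
      linarith [hcivt]
    have hGoodNext : v 0 - (2 * M + g) * (t (n + 1) - t 0)
        + c * ∑ j ∈ Finset.range (n + 1), (tstar - tt j) ^ (k - 1) ≤ v (n + 1) := by
      rw [Finset.sum_range_succ, mul_add]
      have hMg : (2 * M + g) * (t (n + 1) - t 0)
          = (2 * M + g) * (t n - t 0) + (2 * M + g) * (t (n + 1) - t n) := by ring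
      linarith [hgain, hvlb]
    have hvub' : v (n + 1) ≤ v n + (g + 4 * L) := by
      have habs1 := abs_le.1 hL1s
      have hgle2 : g * (t (n + 1) - 2 * tt n + t n) ≤ g * 1 :=
        mul_le_mul_of_nonneg_left (by linarith) hg
      rw [heq10]
      linarith
    exact ⟨htt_lt, ht1_lt, hGoodNext, hΔlow, hΔub, hvub'⟩
  -- the inductive invariant
  have hGood : ∀ n, t n < tstar ∧ (∀ j < n, tt j < tstar) ∧
      v 0 - (2 * M + g) * (t n - t 0)
        + c * ∑ j ∈ Finset.range n, (tstar - tt j) ^ (k - 1) ≤ v n := by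
    intro n
    induction n with
    | zero => exact ⟨ht0.2, fun j hj => absurd hj (Nat.not_lt_zero j), by simp⟩
    | succ n ih =>
      obtain ⟨h1, h2, h3, _, _, _⟩ := hstep n ih.1 ih.2.1 ih.2.2
      refine ⟨h2, fun j hj => ?_, h3⟩
      rcases Nat.lt_succ_iff_lt_or_eq.1 hj with hj' | hj'
      · exact ih.2.1 j hj'
      · rw [hj']; exact h1
  have htlt : ∀ n, t n < tstar := fun n => (hGood n).1
  have httlt : ∀ n, tt n < tstar := fun n => (hGood (n + 1)).2.1 n (Nat.lt_succ_self n)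
  have hstepall := fun n => hstep n (hGood n).1 (hGood n).2.1 (hGood n).2.2
  -- convergence of the collision times
  have hbdd : BddAbove (Set.range t) := ⟨tstar, by rintro x ⟨n, rfl⟩; exact (htlt n).le⟩
  have htconv : Tendsto t atTop (𝓝 (⨆ n, t n)) := tendsto_atTop_ciSup htmono.monotone hbdd
  set tl : ℝ := ⨆ n, t n with htldef
  have hle_tl : ∀ n, t n ≤ tl := fun n => le_ciSup hbdd n
  have htl_le : tl ≤ tstar := ciSup_le fun n => (htlt n).le
  have ht0tl : t 0 ≤ tl := hle_tl 0
  -- upper bound for velocities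
  have hvub : ∀ n, v n ≤ v 0 + (g + 4 * L) * n := by
    intro n
    induction n with
    | zero => simp
    | succ n ih =>
      have := (hstepall n).2.2.2.2.2
      push_cast
      linarith
  -- the limit is `tstar`
  have htlstar : tl = tstar := by
    by_contra hne'
    have hlt' : tl < tstar := lt_of_le_of_ne htl_le hne'
    have hm : 0 < f₂ tl - f₁ tl := by
      have := hlt tl ⟨by linarith [ht0.1], hlt'⟩
      linarith
    set m : ℝ := f₂ tl - f₁ tl with hmdef
    have hdconv : Tendsto (fun n => f₂ (t n) - f₁ (t n)) atTop (𝓝 m) :=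
      ((hc₂.tendsto tl).comp htconv).sub ((hc₁.tendsto tl).comp htconv)
    obtain ⟨N₀, hN₀⟩ : ∃ N₀, ∀ n ≥ N₀, m / 2 < f₂ (t n) - f₁ (t n) := by
      have := hdconv.eventually (eventually_gt_nhds (by linarith : m / 2 < m))
      exact eventually_atTop.1 this
    have hsumΔ : Summable (fun n => t (n + 1) - t n) := by
      apply summable_of_sum_range_le (c := tstar - t 0)
      · intro n; have := htmono (Nat.lt_succ_self n); linarith
      · intro N
        rw [Finset.sum_range_sub (fun i => t i)]
        linarith [htlt N]
    set A : ℝ := v 0 + L + (g + 4 * L) * N₀ with hAdef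
    have hApos : 0 < A := by
      have h0 : (0:ℝ) ≤ (g + 4 * L) * (N₀ : ℝ) :=
        mul_nonneg (by linarith) (Nat.cast_nonneg _)
      have h1 : 0 < v 0 := (htraj 0).1
      simp only [hAdef]; linarith
    have hBpos : (0:ℝ) < g + 4 * L := by nlinarith
    apply FU_not_summable (by linarith : (0:ℝ) < m / 2) hApos hBpos
    apply Summable.of_nonneg_of_le (g := fun n : ℕ => m / 2 / (A + (g + 4 * L) * n))
      (f := fun n : ℕ => t (n + N₀ + 1) - t (n + N₀))
    · intro n; positivity
    · intro n
      have hstepn := (hstepall (n + N₀)).2.2.2.1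
      have hd2 : m / 2 < f₂ (t (n + N₀)) - f₁ (t (n + N₀)) := hN₀ _ (by omega)
      have hvn : v (n + N₀) ≤ v 0 + (g + 4 * L) * (n + N₀) := by
        have := hvub (n + N₀); push_cast at this ⊢; linarith
      have hden : 0 < v (n + N₀) + L := by
        have := (htraj (n + N₀)).1; linarith
      have hden2 : v (n + N₀) + L ≤ A + (g + 4 * L) * n := by
        have h0 : (0:ℝ) ≤ (n : ℝ) := Nat.cast_nonneg _
        have h1 : (0:ℝ) ≤ (N₀ : ℝ) := Nat.cast_nonneg _
        simp only [hAdef]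
        push_cast at hvn ⊢
        have h2 : 0 ≤ (g + 4 * L) := by linarith
        linarith
      calc m / 2 / (A + (g + 4 * L) * n)
          ≤ (f₂ (t (n + N₀)) - f₁ (t (n + N₀))) / (v (n + N₀) + L) := by
            apply div_le_div₀ (by linarith) (by linarith) hden hden2
        _ ≤ t (n + N₀ + 1) - t (n + N₀) := hstepn
    · exact (summable_nat_add_iff N₀).2 hsumΔ
  -- divergence of velocities
  have hSnonneg : ∀ j : ℕ, 0 ≤ (tstar - tt j) ^ (k - 1) :=
    fun j => pow_nonneg (by linarith [httlt j]) _
  have hSdiv : Tendsto (fun N => ∑ j ∈ Finset.range N, (tstar - tt j) ^ (k - 1))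
      atTop atTop := by
    apply (not_summable_iff_tendsto_nat_atTop_of_nonneg hSnonneg).1
    intro hsumm
    rcases hk with hk' | hk'
    · have h1 : Tendsto (fun _ : ℕ => (1:ℝ)) atTop (𝓝 0) := by
        have := hsumm.tendsto_atTop_zero
        simpa [hk'] using this
      have := tendsto_nhds_unique h1 tendsto_const_nhds
      norm_num at this
    · set q : ℝ := 6 * C / K₀ with hqdef
      have hqpos : 0 < q := by positivity
      have hq1 : q ≤ 1 := by
        rw [hqdef, div_le_one hK₀pos]; linarith [hK₀def]
      have hτpos : ∀ n, 0 < tstar - t n := fun n => sub_pos.2 (htlt n)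
      have hτsmall : ∀ n, tstar - t n ≤ 1 / 2 := by
        intro n
        have h1 := htmono.monotone (Nat.zero_le n)
        have h2 := ht0.1
        have : tstar - ε < t n := by linarith
        linarith [hεhalf]
      have hinvstep : ∀ n, 1 / (tstar - t (n + 1)) ≤ 1 / (tstar - t n) + 2 * q := by
        intro n
        have hΔ : t (n + 1) - t n ≤ q * (tstar - t n) ^ 2 := by
          have h := (hstepall n).2.2.2.2.1
          rw [hk'] at h
          simpa [hqdef] using h
        have h1 := hτpos n
        have h2 := hτpos (n + 1)
        have hqτ : q * (tstar - t n) ≤ 1 / 2 := by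
          have h6 := mul_le_mul_of_nonneg_right hq1 (hτpos n).le
          have := hτsmall n; linarith
        have hΔ2 : t (n + 1) - t n ≤ 1 / 2 * (tstar - t n) := by
          have h7 := mul_le_mul_of_nonneg_right hqτ h1.le
          linarith [hΔ]
        have h5 : tstar - t n ≤ 2 * (tstar - t (n + 1)) := by linarith
        rw [div_add' _ _ _ (ne_of_gt h1), div_le_div_iff₀ h2 h1]
        linarith [mul_le_mul_of_nonneg_left h5 (mul_nonneg hqpos.le h1.le), hΔ]
      have hinv : ∀ n : ℕ, 1 / (tstar - t n) ≤ 1 / (tstar - t 0) + 2 * q * n := by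
        intro n
        induction n with
        | zero => simp
        | succ n ih =>
          have := hinvstep n
          push_cast
          push_cast at ih
          linarith
      set A' : ℝ := 1 / (tstar - t 0) + 2 * q with hA'def
      have hA'pos : 0 < A' := by
        have h8 := hτpos 0
        have h9 : 0 < 1 / (tstar - t 0) := by positivity
        simp only [hA'def]; linarith
      have hterm : ∀ j : ℕ, 1 / (A' + 2 * q * j) ≤ (tstar - tt j) ^ (k - 1) := by
        intro j
        have httj : tstar - t (j + 1) ≤ tstar - tt j := by
          linarith [(htraj j).2.2.2.1]
        have h3 := hτpos (j + 1)
        have h2 : 1 / (tstar - t (j + 1)) ≤ A' + 2 * q * j := by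
          have := hinv (j + 1)
          push_cast at this ⊢
          simp only [hA'def]
          linarith
        have hpos : 0 < A' + 2 * q * j := by
          have h8 : (0:ℝ) ≤ 2 * q * (j:ℝ) :=
            mul_nonneg (by linarith) (Nat.cast_nonneg _)
          linarith
        have h4 : 1 ≤ (tstar - t (j + 1)) * (A' + 2 * q * j) := by
          have := mul_le_mul_of_nonneg_left h2 h3.le
          rw [mul_one_div, div_self (ne_of_gt h3)] at this
          linarith
        rw [hk']
        rw [div_le_iff₀ hpos, pow_one]
        have h9 := mul_le_mul_of_nonneg_right httj hpos.le
        linarith [h4]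
      have hsum2 : Summable (fun j : ℕ => 1 / (A' + 2 * q * j)) := by
        apply hsumm.of_nonneg_of_le (fun j => by positivity) hterm
      have := FU_not_summable (by norm_num : (0:ℝ) < 1) hA'pos (by positivity : 0 < 2 * q)
      exact this hsum2
  refine ⟨htlt, htlstar ▸ htconv, ?_⟩
  have hvlb : ∀ N, v 0 - (2 * M + g) + c * ∑ j ∈ Finset.range N, (tstar - tt j) ^ (k - 1)
      ≤ v N := by
    intro N
    have h1 := (hGood N).2.2
    have h2 : t N - t 0 ≤ 1 := by
      have := htlt N; have := ht0.1; linarith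
    have h3 : (2 * M + g) * (t N - t 0) ≤ (2 * M + g) * 1 :=
      mul_le_mul_of_nonneg_left h2 (by linarith)
    linarith [h1]
  apply tendsto_atTop_mono hvlb
  apply tendsto_atTop_add_const_left
  exact Tendsto.const_mul_atTop hcpos hSdiv
end

section
/- Let g ≥ 0 and let f₁, f₂ : ℝ → ℝ be C¹ and T-periodic (T > 0). Let a, u, b, w, c, z : [0,1] → ℝ be C¹ functions such that for every s ∈ [0,1]: u(s) > 0 > w(s), a(s) < b(s) < c(s), and f₂(b(s)) − f₁(a(s)) = u(s)·(b(s) − a(s)) − (g/2)·(b(s) − a(s))²; w(s) = −u(s) + g·(b(s) − a(s)) + 2f₂'(b(s)); f₂(b(s)) − f₁(c(s)) = −w(s)·(c(s) − b(s)) + (g/2)·(c(s) − b(s))²; z(s) = u(s) + g·(c(s) − 2b(s) + a(s)) + 2f₁'(c(s)) − 2f₂'(b(s)). Assume the closedness conditions a(1) = a(0) + T, c(1) = c(0) + T, u(1) = u(0), z(1) = z(0). Then ∫₀¹ (u(s)²/2 + g·f₁(a(s)) − u(s)·f₁'(a(s)))·a'(s) ds = ∫₀¹ (z(s)²/2 +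 g·f₁(c(s)) − z(s)·f₁'(c(s)))·c'(s) ds. -/
open Filter Topology intervalIntegral

private lemma fu_alg1 (g A B C U W Z fa fb fc pa pb pc A' B' C' U' W' : ℝ)
    (hAB : B - A ≠ 0) (hBC : C - B ≠ 0)
    (h1 : fb - fa = U * (B - A) - g / 2 * (B - A) ^ 2)
    (h2 : W = -U + g * (B - A) + 2 * pb)
    (h3 : fb - fc = -W * (C - B) + g / 2 * (C - B) ^ 2)
    (h4 : Z = U + g * (C - 2 * B + A) + 2 * pc - 2 * pb)
    (h5 : pb * B' - pa * A' = U' * (B - A) + U * (B' - A') - g * (B - A) * (B' - A'))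
    (h6 : pb * B' - pc * C' = -(W' * (C - B)) - W * (C' - B') + g * (C - B) * (C' - B')) :
    U * U' * (B - A) + U ^ 2 * (B' - A') / 2 - g * (pa * A') * (B - A) - g * fa * (B' - A')
      - g * U' * (B - A) ^ 2 - 2 * g * U * (B - A) * (B' - A') + g ^ 2 * (B - A) ^ 2 * (B' - A')
      + W * W' * (C - B) + W ^ 2 * (C' - B') / 2 - g * (pb * B') * (C - B) - g * fb * (C' - B')
      - g * W' * (C - B) ^ 2 - 2 * g * W * (C - B) * (C' - B') + g ^ 2 * (C - B) ^ 2 * (C' - B')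
    = (U ^ 2 / 2 + g * fa - U * pa) * A' - (Z ^ 2 / 2 + g * fc - Z * pc) * C' := by
  have hU' : U' = (pb * B' - pa * A' - U * (B' - A') + g * (B - A) * (B' - A')) / (B - A) := by
    field_simp
    first
    | linear_combination h5
    | linear_combination -h5
    | linear_combination 2 * h5
    | linear_combination (-2 : ℝ) * h5
  have hW' : W' = (-(pb * B' - pc * C') - W * (C' - B') + g * (C - B) * (C' - B')) / (C - B) := by
    field_simp
    first
    | linear_combination h6
    | linear_combination -h6
    | linear_combination 2 * h6
    | linear_combination (-2 : ℝ) * h6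
  have hfc : fc = fb + W * (C - B) - g / 2 * (C - B) ^ 2 := by linear_combination -h3
  have hfb : fb = fa + U * (B - A) - g / 2 * (B - A) ^ 2 := by linear_combination h1
  subst hU' hW' hfc hfb h2 h4
  field_simp
  ring

private lemma fu_alg2 (g A B0 B1 C U Z pc fa fb0 fb1 W0 W1 : ℝ)
    (hW0 : W0 = 2 * pc - Z + g * (C - B0))
    (hW1 : W1 = 2 * pc - Z + g * (C - B1))
    (hfb0 : fb0 = fa + U * (B0 - A) - g / 2 * (B0 - A) ^ 2)
    (hfb1 : fb1 = fa + U * (B1 - A) - g / 2 * (B1 - A) ^ 2)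
    (hq : U - (2 * pc - Z) - g * (C - A) = 0) :
    U ^ 2 * (B1 - A) / 2 - g * fa * (B1 - A) - g * U * (B1 - A) ^ 2 + g ^ 2 * (B1 - A) ^ 3 / 3
      + (W1 ^ 2 * (C - B1) / 2 - g * fb1 * (C - B1) - g * W1 * (C - B1) ^ 2
        + g ^ 2 * (C - B1) ^ 3 / 3)
    = U ^ 2 * (B0 - A) / 2 - g * fa * (B0 - A) - g * U * (B0 - A) ^ 2 + g ^ 2 * (B0 - A) ^ 3 / 3
      + (W0 ^ 2 * (C - B0) / 2 - g * fb0 * (C - B0) - g * W0 * (C - B0) ^ 2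
        + g ^ 2 * (C - B0) ^ 3 / 3) := by
  have hV : 2 * pc - Z = U - g * (C - A) := by linarith
  rw [hV] at hW0 hW1
  subst hW0 hW1 hfb0 hfb1
  ring

/-- The "free-flight action" primitive of the loop-integral form along the curve. -/
private noncomputable def fuF (g : ℝ) (f₁ f₂ a b c u w : ℝ → ℝ) (t : ℝ) : ℝ :=
  u t ^ 2 * (b t - a t) / 2 - g * f₁ (a t) * (b t - a t) - g * u t * (b t - a t) ^ 2
      + g ^ 2 * (b t - a t) ^ 3 / 3
    + (w t ^ 2 * (c t - b t) / 2 - g * f₂ (b t) * (c t - b t) - g * w t * (c t - b t) ^ 2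
      + g ^ 2 * (c t - b t) ^ 3 / 3)

/-- Lemma 4,1: invariance of the loop integral
`∮ (v²/2 + g·f₁(t) − v·f₁'(t)) dt` under one return of the Fermi–Ulam map in an
external field.  The closed curve `s ↦ (a s, u s)` of lower-plate collision
data is mapped to `s ↦ (c s, z s)`, with `(b s, w s)` the intermediate
upper-plate collision data. -/
theorem fermi_ulam_loop_integral_invariant
    (g T : ℝ) (hg : 0 ≤ g) (hT : 0 < T) (f₁ f₂ : ℝ → ℝ)
    (hf₁ : ContDiff ℝ 1 f₁) (hf₂ : ContDiff ℝ 1 f₂)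
    (hper₁ : Function.Periodic f₁ T) (hper₂ : Function.Periodic f₂ T)
    (a u b w c z : ℝ → ℝ)
    (ha : ContDiffOn ℝ 1 a (Set.Icc 0 1)) (hu : ContDiffOn ℝ 1 u (Set.Icc 0 1))
    (hb : ContDiffOn ℝ 1 b (Set.Icc 0 1)) (hw : ContDiffOn ℝ 1 w (Set.Icc 0 1))
    (hc : ContDiffOn ℝ 1 c (Set.Icc 0 1)) (hz : ContDiffOn ℝ 1 z (Set.Icc 0 1))
    (hstep : ∀ s ∈ Set.Icc (0 : ℝ) 1,
      0 < u s ∧ w s < 0 ∧ a s < b s ∧ b s < c s ∧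
      f₂ (b s) - f₁ (a s) = u s * (b s - a s) - g / 2 * (b s - a s) ^ 2 ∧
      w s = -(u s) + g * (b s - a s) + 2 * deriv f₂ (b s) ∧
      f₂ (b s) - f₁ (c s) = -(w s) * (c s - b s) + g / 2 * (c s - b s) ^ 2 ∧
      z s = u s + g * (c s - 2 * b s + a s)
        + 2 * deriv f₁ (c s) - 2 * deriv f₂ (b s))
    (hclose_a : a 1 = a 0 + T) (hclose_c : c 1 = c 0 + T)
    (hclose_u : u 1 = u 0) (hclose_z : z 1 = z 0) :
    ∫ s in (0 : ℝ)..1,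
        ((u s) ^ 2 / 2 + g * f₁ (a s) - u s * deriv f₁ (a s))
          * derivWithin a (Set.Icc 0 1) s
      = ∫ s in (0 : ℝ)..1,
        ((z s) ^ 2 / 2 + g * f₁ (c s) - z s * deriv f₁ (c s))
          * derivWithin c (Set.Icc 0 1) s := by
  -- continuity facts
  have hca := ha.continuousOn
  have hcb := hb.continuousOn
  have hcc := hc.continuousOn
  have hcu := hu.continuousOn
  have hcw := hw.continuousOn
  have hcz := hz.continuousOn
  have hcfa : ContinuousOn (fun t => f₁ (a t)) (Set.Icc (0:ℝ) 1) :=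
    hf₁.continuous.comp_continuousOn hca
  have hcfb : ContinuousOn (fun t => f₂ (b t)) (Set.Icc (0:ℝ) 1) :=
    hf₂.continuous.comp_continuousOn hcb
  have hcfc : ContinuousOn (fun t => f₁ (c t)) (Set.Icc (0:ℝ) 1) :=
    hf₁.continuous.comp_continuousOn hcc
  have hcd1 : Continuous (deriv f₁) := hf₁.continuous_deriv le_rfl
  have hcda : ContinuousOn (derivWithin a (Set.Icc 0 1)) (Set.Icc (0:ℝ) 1) :=
    ha.continuousOn_derivWithin (uniqueDiffOn_Icc one_pos) le_rfl
  have hcdc : ContinuousOn (derivWithin c (Set.Icc 0 1)) (Set.Icc (0:ℝ) 1) :=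
    hc.continuousOn_derivWithin (uniqueDiffOn_Icc one_pos) le_rfl
  have hc1 : ContinuousOn (fun s => (u s ^ 2 / 2 + g * f₁ (a s) - u s * deriv f₁ (a s))
      * derivWithin a (Set.Icc 0 1) s) (Set.Icc (0:ℝ) 1) :=
    ((((hcu.pow 2).div_const 2).add (continuousOn_const.mul hcfa)).sub
      (hcu.mul (hcd1.comp_continuousOn hca))).mul hcda
  have hc2 : ContinuousOn (fun s => (z s ^ 2 / 2 + g * f₁ (c s) - z s * deriv f₁ (c s))
      * derivWithin c (Set.Icc 0 1) s) (Set.Icc (0:ℝ) 1) :=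
    ((((hcz.pow 2).div_const 2).add (continuousOn_const.mul hcfc)).sub
      (hcz.mul (hcd1.comp_continuousOn hcc))).mul hcdc
  have hint1 : IntervalIntegrable (fun s => (u s ^ 2 / 2 + g * f₁ (a s)
      - u s * deriv f₁ (a s)) * derivWithin a (Set.Icc 0 1) s) MeasureTheory.volume 0 1 :=
    hc1.intervalIntegrable_of_Icc zero_le_one
  have hint2 : IntervalIntegrable (fun s => (z s ^ 2 / 2 + g * f₁ (c s)
      - z s * deriv f₁ (c s)) * derivWithin c (Set.Icc 0 1) s) MeasureTheory.volume 0 1 :=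
    hc2.intervalIntegrable_of_Icc zero_le_one
  have hcF : ContinuousOn (fuF g f₁ f₂ a b c u w) (Set.Icc (0:ℝ) 1) := by
    unfold fuF
    exact (((((hcu.pow 2).mul (hcb.sub hca)).div_const 2).sub
        ((continuousOn_const.mul hcfa).mul (hcb.sub hca))).sub
        ((continuousOn_const.mul hcu).mul ((hcb.sub hca).pow 2))).add
        ((continuousOn_const.mul ((hcb.sub hca).pow 3)).div_const 3) |>.add <|
      (((((hcw.pow 2).mul (hcc.sub hcb)).div_const 2).sub
        ((continuousOn_const.mul hcfb).mul (hcc.sub hcb))).sub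
        ((continuousOn_const.mul hcw).mul ((hcc.sub hcb).pow 2))).add
        ((continuousOn_const.mul ((hcc.sub hcb).pow 3)).div_const 3)
  -- the derivative of the primitive equals the difference of the integrands
  have hderiv : ∀ s ∈ Set.Ioo (0:ℝ) 1, HasDerivAt (fuF g f₁ f₂ a b c u w)
      ((u s ^ 2 / 2 + g * f₁ (a s) - u s * deriv f₁ (a s)) * derivWithin a (Set.Icc 0 1) s
        - (z s ^ 2 / 2 + g * f₁ (c s) - z s * deriv f₁ (c s))
          * derivWithin c (Set.Icc 0 1) s) s := by
    intro s hs
    have hsI : s ∈ Set.Icc (0:ℝ) 1 := Set.mem_Icc_of_Ioo hs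
    have hmem : Set.Icc (0:ℝ) 1 ∈ 𝓝 s := Icc_mem_nhds hs.1 hs.2
    obtain ⟨hu0, hw0, habs, hbcs, h1s, h2s, h3s, h4s⟩ := hstep s hsI
    have hAB : b s - a s ≠ 0 := sub_ne_zero.mpr habs.ne'
    have hBC : c s - b s ≠ 0 := sub_ne_zero.mpr hbcs.ne'
    have ha' : HasDerivAt a (derivWithin a (Set.Icc 0 1) s) s :=
      ((ha.differentiableOn one_ne_zero s hsI).hasDerivWithinAt).hasDerivAt hmem
    have hb' : HasDerivAt b (derivWithin b (Set.Icc 0 1) s) s :=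
      ((hb.differentiableOn one_ne_zero s hsI).hasDerivWithinAt).hasDerivAt hmem
    have hc' : HasDerivAt c (derivWithin c (Set.Icc 0 1) s) s :=
      ((hc.differentiableOn one_ne_zero s hsI).hasDerivWithinAt).hasDerivAt hmem
    have hu' : HasDerivAt u (derivWithin u (Set.Icc 0 1) s) s :=
      ((hu.differentiableOn one_ne_zero s hsI).hasDerivWithinAt).hasDerivAt hmem
    have hw' : HasDerivAt w (derivWithin w (Set.Icc 0 1) s) s :=
      ((hw.differentiableOn one_ne_zero s hsI).hasDerivWithinAt).hasDerivAt hmem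
    set A' := derivWithin a (Set.Icc 0 1) s with hA'
    set B' := derivWithin b (Set.Icc 0 1) s with hB'
    set C' := derivWithin c (Set.Icc 0 1) s with hC'
    set U' := derivWithin u (Set.Icc 0 1) s with hU'
    set W' := derivWithin w (Set.Icc 0 1) s with hW'
    have hf1a : HasDerivAt (fun t => f₁ (a t)) (deriv f₁ (a s) * A') s :=
      HasDerivAt.comp s ((hf₁.differentiable one_ne_zero (a s)).hasDerivAt) ha'
    have hf2b : HasDerivAt (fun t => f₂ (b t)) (deriv f₂ (b s) * B') s :=
      HasDerivAt.comp s ((hf₂.differentiable one_ne_zero (b s)).hasDerivAt) hb'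
    have hf1c : HasDerivAt (fun t => f₁ (c t)) (deriv f₁ (c s) * C') s :=
      HasDerivAt.comp s ((hf₁.differentiable one_ne_zero (c s)).hasDerivAt) hc'
    -- differentiate the first flight equation
    have hid1 : (fun t => f₂ (b t) - f₁ (a t)
        - (u t * (b t - a t) - g / 2 * (b t - a t) ^ 2)) =ᶠ[𝓝 s] fun _ => (0:ℝ) := by
      filter_upwards [hmem] with t ht
      linear_combination (hstep t ht).2.2.2.2.1
    have hzero1 : HasDerivAt (fun t => f₂ (b t) - f₁ (a t)
        - (u t * (b t - a t) - g / 2 * (b t - a t) ^ 2)) 0 s :=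
      (hasDerivAt_const s (0:ℝ)).congr_of_eventuallyEq hid1
    have hD1 := (hf2b.sub hf1a).sub ((hu'.mul (hb'.sub ha')).sub
      (((hb'.sub ha').pow 2).const_mul (g/2)))
    have h5eq := hD1.unique hzero1
    have h5 : deriv f₂ (b s) * B' - deriv f₁ (a s) * A'
        = U' * (b s - a s) + u s * (B' - A') - g * (b s - a s) * (B' - A') := by
      linear_combination (norm := (push_cast [Pi.sub_apply, Pi.neg_apply]; ring_nf)) h5eq
    -- differentiate the second flight equation
    have hid2 : (fun t => f₂ (b t) - f₁ (c t)
        - (-(w t) * (c t - b t) + g / 2 * (c t - b t) ^ 2)) =ᶠ[𝓝 s] fun _ => (0:ℝ) := by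
      filter_upwards [hmem] with t ht
      linear_combination (hstep t ht).2.2.2.2.2.2.1
    have hzero2 : HasDerivAt (fun t => f₂ (b t) - f₁ (c t)
        - (-(w t) * (c t - b t) + g / 2 * (c t - b t) ^ 2)) 0 s :=
      (hasDerivAt_const s (0:ℝ)).congr_of_eventuallyEq hid2
    have hD2 := (hf2b.sub hf1c).sub ((hw'.neg.mul (hc'.sub hb')).add
      (((hc'.sub hb').pow 2).const_mul (g/2)))
    have h6eq := hD2.unique hzero2
    have h6 : deriv f₂ (b s) * B' - deriv f₁ (c s) * C'
        = -(W' * (c s - b s)) - w s * (C' - B') + g * (c s - b s) * (C' - B') := by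
      linear_combination (norm := (push_cast [Pi.sub_apply, Pi.neg_apply]; ring_nf)) h6eq
    -- derivative of the primitive
    have hFd : HasDerivAt (fuF g f₁ f₂ a b c u w)
        (u s * U' * (b s - a s) + u s ^ 2 * (B' - A') / 2
          - g * (deriv f₁ (a s) * A') * (b s - a s) - g * f₁ (a s) * (B' - A')
          - g * U' * (b s - a s) ^ 2 - 2 * g * u s * (b s - a s) * (B' - A')
          + g ^ 2 * (b s - a s) ^ 2 * (B' - A')
          + w s * W' * (c s - b s) + w s ^ 2 * (C' - B') / 2
          - g * (deriv f₂ (b s) * B') * (c s - b s) - g * f₂ (b s) * (C' - B')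
          - g * W' * (c s - b s) ^ 2 - 2 * g * w s * (c s - b s) * (C' - B')
          + g ^ 2 * (c s - b s) ^ 2 * (C' - B')) s := by
      unfold fuF
      have H := (((((hu'.pow 2).mul (hb'.sub ha')).div_const 2).sub
          ((hf1a.const_mul g).mul (hb'.sub ha'))).sub
          ((hu'.const_mul g).mul ((hb'.sub ha').pow 2))).add
          ((((hb'.sub ha').pow 3).const_mul (g^2)).div_const 3) |>.add <|
        (((((hw'.pow 2).mul (hc'.sub hb')).div_const 2).sub
          ((hf2b.const_mul g).mul (hc'.sub hb'))).sub
          ((hw'.const_mul g).mul ((hc'.sub hb').pow 2))).add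
          ((((hc'.sub hb').pow 3).const_mul (g^2)).div_const 3)
      refine H.congr_deriv ?_
      push_cast [Pi.sub_apply, Pi.pow_apply]
      ring
    have hkey := fu_alg1 g (a s) (b s) (c s) (u s) (w s) (z s)
      (f₁ (a s)) (f₂ (b s)) (f₁ (c s))
      (deriv f₁ (a s)) (deriv f₂ (b s)) (deriv f₁ (c s)) A' B' C' U' W'
      hAB hBC h1s h2s h3s h4s h5 h6
    exact hFd.congr_deriv hkey
  -- boundary: the primitive takes the same value at the endpoints
  have hpd₁ : ∀ x, deriv f₁ (x + T) = deriv f₁ x := by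
    intro x
    rw [← deriv_comp_add_const]
    congr 1
    ext y
    exact hper₁ y
  have hpd₂ : ∀ x, deriv f₂ (x + T) = deriv f₂ x := by
    intro x
    rw [← deriv_comp_add_const]
    congr 1
    ext y
    exact hper₂ y
  obtain ⟨-, -, hab0, hbc0, hC10, hC20, hC30, hC40⟩ :=
    hstep 0 (Set.left_mem_Icc.mpr zero_le_one)
  obtain ⟨-, -, hab1, hbc1, hC11, hC21, hC31, hC41⟩ :=
    hstep 1 (Set.right_mem_Icc.mpr zero_le_one)
  have hfa1 : f₁ (a 1) = f₁ (a 0) := by rw [hclose_a]; exact hper₁ (a 0)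
  have hfc1 : f₁ (c 1) = f₁ (c 0) := by rw [hclose_c]; exact hper₁ (c 0)
  have hpc1 : deriv f₁ (c 1) = deriv f₁ (c 0) := by rw [hclose_c]; exact hpd₁ (c 0)
  have hfb1 : f₂ (b 1) = f₂ (b 1 - T) := by
    have h := hper₂ (b 1 - T)
    rw [sub_add_cancel] at h
    exact h
  have hpb1 : deriv f₂ (b 1) = deriv f₂ (b 1 - T) := by
    have h := hpd₂ (b 1 - T)
    rw [sub_add_cancel] at h
    exact h
  rw [hpb1, hclose_u, hclose_a] at hC21
  rw [hclose_z, hclose_u, hpc1, hpb1, hclose_a, hclose_c] at hC41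
  rw [hfb1, hfa1, hclose_u, hclose_a] at hC11
  rw [hfb1, hfc1, hclose_c] at hC31
  have hW0 : w 0 = 2 * deriv f₁ (c 0) - z 0 + g * (c 0 - b 0) := by
    linear_combination hC20 + hC40
  have hW1 : w 1 = 2 * deriv f₁ (c 0) - z 0 + g * (c 0 - (b 1 - T)) := by
    linear_combination hC21 + hC41
  have hfb0 : f₂ (b 0) = f₁ (a 0) + u 0 * (b 0 - a 0) - g / 2 * (b 0 - a 0) ^ 2 := by
    linear_combination hC10
  have hfbβ : f₂ (b 1 - T) = f₁ (a 0) + u 0 * ((b 1 - T) - a 0)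
      - g / 2 * ((b 1 - T) - a 0) ^ 2 := by
    linear_combination hC11
  have hE0 : f₁ (a 0) + u 0 * (b 0 - a 0) - g / 2 * (b 0 - a 0) ^ 2 - f₁ (c 0)
      + (2 * deriv f₁ (c 0) - z 0) * (c 0 - b 0) + g / 2 * (c 0 - b 0) ^ 2 = 0 := by
    linear_combination (-1 : ℝ) * hC10 + hC30 - (c 0 - b 0) * hW0
  have hE1 : f₁ (a 0) + u 0 * ((b 1 - T) - a 0) - g / 2 * ((b 1 - T) - a 0) ^ 2 - f₁ (c 0)
      + (2 * deriv f₁ (c 0) - z 0) * (c 0 - (b 1 - T))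
      + g / 2 * (c 0 - (b 1 - T)) ^ 2 = 0 := by
    linear_combination (-1 : ℝ) * hC11 + hC31 - (c 0 - (b 1 - T)) * hW1
  have hq' : (b 0 - (b 1 - T)) * (u 0 - (2 * deriv f₁ (c 0) - z 0) - g * (c 0 - a 0)) = 0 := by
    linear_combination hE0 - hE1
  have hFbd : fuF g f₁ f₂ a b c u w 1 = fuF g f₁ f₂ a b c u w 0 := by
    unfold fuF
    rw [hfa1, hfb1, hclose_a, hclose_c, hclose_u]
    rcases mul_eq_zero.mp hq' with h | h
    · have hb1' : b 1 = b 0 + T := by linarith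
      have hww : w 1 = w 0 := by
        rw [hW1, hW0, hb1']
        ring
      rw [hww, hb1']
      have hbb : b 0 + T - T = b 0 := by ring
      rw [hbb]
      ring
    · have H := fu_alg2 g (a 0) (b 0) (b 1 - T) (c 0) (u 0) (z 0) (deriv f₁ (c 0))
        (f₁ (a 0)) (f₂ (b 0)) (f₂ (b 1 - T)) (w 0) (w 1) hW0 hW1 hfb0 hfbβ h
      linear_combination H
  -- fundamental theorem of calculus
  have hFTC : (∫ y in (0:ℝ)..1,
        ((u y ^ 2 / 2 + g * f₁ (a y) - u y * deriv f₁ (a y)) * derivWithin a (Set.Icc 0 1) y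
          - (z y ^ 2 / 2 + g * f₁ (c y) - z y * deriv f₁ (c y))
            * derivWithin c (Set.Icc 0 1) y))
      = fuF g f₁ f₂ a b c u w 1 - fuF g f₁ f₂ a b c u w 0 :=
    integral_eq_sub_of_hasDeriv_right_of_le zero_le_one hcF
      (fun x hx => (hderiv x hx).hasDerivWithinAt) (hint1.sub hint2)
  have hsplit : (∫ y in (0:ℝ)..1,
        ((u y ^ 2 / 2 + g * f₁ (a y) - u y * deriv f₁ (a y)) * derivWithin a (Set.Icc 0 1) y
          - (z y ^ 2 / 2 + g * f₁ (c y) - z y * deriv f₁ (c y))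
            * derivWithin c (Set.Icc 0 1) y))
      = (∫ y in (0:ℝ)..1, (u y ^ 2 / 2 + g * f₁ (a y) - u y * deriv f₁ (a y))
            * derivWithin a (Set.Icc 0 1) y)
        - ∫ y in (0:ℝ)..1, (z y ^ 2 / 2 + g * f₁ (c y) - z y * deriv f₁ (c y))
            * derivWithin c (Set.Icc 0 1) y :=
    integral_sub hint1 hint2
  rw [hFbd, sub_self] at hFTC
  rw [hFTC] at hsplit
  linarith [hsplit]
end

section
/- Let δ > 0 and let τ : (−δ, 0] → ℝ be a C³ function with τ(s) > 0 for all s ∈ (−δ, 0) and τ(0) = τ'(0) = 0. Then there exists ε₀ ∈ (0, δ) such that for every s₀ ∈ (−ε₀, 0), the sequence defined recursively by sₙ₊₁ = sₙ + τ(sₙ) satisfies sₙ ∈ (−δ, 0) for all n ≥ 0 and ∑_{n=0}^{∞} (−sₙ) = ∞. -/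
open Filter Topology

/-- Lemma 4,3: if `τ` is a positive `C³` function on `(−δ, 0]` with
`τ(0) = τ'(0) = 0`, then for every starting point `s₀ < 0` close enough to `0`,
the orbit of `s ↦ s + τ(s)` stays in `(−δ, 0)` and `∑ (−sₙ) = ∞`. -/
theorem sum_of_iterates_diverges
    (δ : ℝ) (hδ : 0 < δ) (τ : ℝ → ℝ)
    (hsm : ContDiffOn ℝ 3 τ (Set.Ioc (-δ) 0))
    (hpos : ∀ s ∈ Set.Ioo (-δ) (0 : ℝ), 0 < τ s)
    (h0 : τ 0 = 0)
    (h0' : derivWithin τ (Set.Ioc (-δ) 0) 0 = 0) :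
    ∃ ε₀ ∈ Set.Ioo (0 : ℝ) δ, ∀ s₀ ∈ Set.Ioo (-ε₀) (0 : ℝ), ∀ s : ℕ → ℝ,
      s 0 = s₀ → (∀ n : ℕ, s (n + 1) = s n + τ (s n)) →
      (∀ n : ℕ, s n ∈ Set.Ioo (-δ) (0 : ℝ)) ∧
      Tendsto (fun N : ℕ => ∑ n ∈ Finset.range N, -(s n)) atTop atTop := by
  set S := Set.Ioc (-δ) (0:ℝ) with hS
  set g := derivWithin τ S with hg
  have h0S : (0:ℝ) ∈ S := by constructor <;> simp [neg_neg, hδ]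
  have hud : UniqueDiffOn ℝ S := uniqueDiffOn_Ioc _ _
  have hgC : ContDiffOn ℝ 1 g S := hsm.derivWithin hud (by norm_num)
  have hgdiff : DifferentiableOn ℝ g S := hgC.differentiableOn (by norm_num)
  have hτdiff : DifferentiableOn ℝ τ S := hsm.differentiableOn (by norm_num)
  -- the set where we get quadratic bounds
  set T := Set.Icc (-(δ/2)) (0:ℝ) with hT
  have hTS : T ⊆ S := fun y hy => ⟨by have := hy.1; linarith, hy.2⟩
  have hgcont : ContinuousOn (derivWithin g S) T :=
    (hgC.continuousOn_derivWithin hud le_rfl).mono hTS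
  obtain ⟨M, hM⟩ := isCompact_Icc.exists_bound_of_continuousOn hgcont
  have hM0 : 0 ≤ M := le_trans (norm_nonneg _) (hM 0 ⟨by linarith, le_rfl⟩)
  -- linear bound on g on T
  have hglin : ∀ x ∈ T, |g x| ≤ M * |x| := by
    intro x hx
    have hsub : Set.Icc x (0:ℝ) ⊆ T := fun y hy => ⟨le_trans hx.1 hy.1, hy.2⟩
    have := Convex.norm_image_sub_le_of_norm_hasDerivWithin_le
      (f := g) (f' := derivWithin g S) (s := Set.Icc x 0) (C := M)
      (fun y hy => ((hgdiff y (hTS (hsub hy))).hasDerivWithinAt).mono (fun z hz => hTS (hsub hz)))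
      (fun y hy => hM y (hsub hy)) (convex_Icc _ _)
      ⟨le_rfl, hx.2⟩ ⟨hx.2, le_rfl⟩
    have hg0 : g 0 = 0 := h0'
    rw [hg0] at this
    simpa [Real.norm_eq_abs, abs_sub_comm, abs_of_nonpos hx.2] using this
  -- quadratic bound on τ on T
  have hquad : ∀ x ∈ T, τ x ≤ M * x ^ 2 := by
    intro x hx
    have hsub : Set.Icc x (0:ℝ) ⊆ T := fun y hy => ⟨le_trans hx.1 hy.1, hy.2⟩
    have hbound : ∀ y ∈ Set.Icc x (0:ℝ), ‖g y‖ ≤ M * |x| := by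
      intro y hy
      have h1 : |g y| ≤ M * |y| := hglin y (hsub hy)
      have h2 : |y| ≤ |x| := by
        rw [abs_of_nonpos hy.2, abs_of_nonpos hx.2]; linarith [hy.1]
      calc ‖g y‖ = |g y| := rfl
        _ ≤ M * |y| := h1
        _ ≤ M * |x| := by nlinarith
    have := Convex.norm_image_sub_le_of_norm_hasDerivWithin_le
      (f := τ) (f' := g) (s := Set.Icc x 0) (C := M * |x|)
      (fun y hy => ((hτdiff y (hTS (hsub hy))).hasDerivWithinAt).mono (fun z hz => hTS (hsub hz)))
      hbound (convex_Icc _ _) ⟨le_rfl, hx.2⟩ ⟨hx.2, le_rfl⟩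
    rw [h0] at this
    have habs : |τ x| ≤ M * |x| * |x| := by
      simpa [Real.norm_eq_abs, abs_sub_comm, abs_of_nonpos hx.2] using this
    calc τ x ≤ |τ x| := le_abs_self _
      _ ≤ M * |x| * |x| := habs
      _ = M * x ^ 2 := by rw [mul_assoc, abs_mul_abs_self, sq]
  set C := M + 1 with hC
  have hCpos : (0:ℝ) < C := by linarith
  set ε₀ := min (δ/2) (1/(2*C)) with hε
  have hε₀pos : 0 < ε₀ := lt_min (by linarith) (by positivity)
  have hε₀δ2 : ε₀ ≤ δ/2 := min_le_left _ _
  have hε₀C : C * ε₀ ≤ 1/2 := by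
    have : ε₀ ≤ 1/(2*C) := min_le_right _ _
    calc C * ε₀ ≤ C * (1/(2*C)) := by nlinarith
      _ = 1/2 := by field_simp
  refine ⟨ε₀, ⟨hε₀pos, by linarith⟩, ?_⟩
  intro s₀ hs₀ s hs0 hrec
  -- key pointwise facts
  have key : ∀ x : ℝ, x ∈ Set.Ioo (-ε₀) (0:ℝ) →
      0 < τ x ∧ τ x ≤ C * x ^ 2 ∧ x + τ x ≤ x / 2 := by
    intro x hx
    have hxT : x ∈ T := ⟨by linarith [hx.1], le_of_lt hx.2⟩
    have hxδ : x ∈ Set.Ioo (-δ) (0:ℝ) := ⟨by linarith [hx.1], hx.2⟩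
    have hτpos := hpos x hxδ
    have hq : τ x ≤ C * x ^ 2 := by
      have := hquad x hxT; nlinarith [sq_nonneg x]
    refine ⟨hτpos, hq, ?_⟩
    have hxabs : -x < ε₀ := by linarith [hx.1]
    have : C * x ^ 2 ≤ (1/2) * (-x) := by nlinarith [hx.2, hε₀C, hCpos]
    nlinarith [hq, this]
  -- the orbit stays in (-ε₀, 0)
  have hmem : ∀ n, s n ∈ Set.Ioo (-ε₀) (0:ℝ) := by
    intro n
    induction n with
    | zero => rw [hs0]; exact hs₀
    | succ n ih =>
      obtain ⟨hτp, _, hhalf⟩ := key (s n) ih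
      rw [hrec n]
      exact ⟨by linarith [ih.1], by linarith [ih.2]⟩
  have hmemδ : ∀ n, s n ∈ Set.Ioo (-δ) (0:ℝ) := fun n =>
    ⟨by linarith [(hmem n).1, hε₀δ2], (hmem n).2⟩
  refine ⟨hmemδ, ?_⟩
  -- divergence of ∑ -(s n)
  set x : ℕ → ℝ := fun n => -(s n) with hx
  have hxpos : ∀ n, 0 < x n := fun n => by simp [hx]; exact (hmem n).2
  have hxlt : ∀ n, x n < ε₀ := fun n => by
    have := (hmem n).1; simp [hx]; linarith
  have hstep : ∀ n, x n - C * (x n) ^ 2 ≤ x (n+1) := by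
    intro n
    obtain ⟨_, hq, _⟩ := key (s n) (hmem n)
    simp only [hx, hrec n]
    nlinarith [sq_nonneg (s n)]
  clear_value x C
  have hrecip : ∀ n, 1 / x (n+1) ≤ 1 / x n + 2 * C := by
    intro n
    have h1 := hxpos n
    have h2 := hxpos (n+1)
    have h3 := hstep n
    have h4 : C * x n ≤ 1/2 :=
      le_trans (le_trans (mul_le_mul_of_nonneg_left (hxlt n).le hCpos.le) le_rfl) hε₀C
    have hpos1 : (0:ℝ) ≤ 1 + 2 * C * x n := by nlinarith [mul_pos hCpos h1]
    have h6 : (0:ℝ) ≤ 1 - 2 * C * x n := by nlinarith [h4]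
    have hmul : x n ≤ x (n+1) * (1 + 2 * C * x n) := by
      nlinarith [mul_le_mul_of_nonneg_right h3 hpos1,
        mul_nonneg (mul_nonneg hCpos.le (sq_nonneg (x n))) h6]
    have h5 : (1:ℝ) / x (n+1) ≤ (1 + 2 * C * x n) / x n := by
      rw [div_le_div_iff₀ h2 h1]; linarith
    calc (1:ℝ) / x (n+1) ≤ (1 + 2 * C * x n) / x n := h5
      _ = 1 / x n + 2 * C := by field_simp
  have hinv : ∀ n : ℕ, 1 / x n ≤ 1 / x 0 + 2 * C * n := by
    intro n
    induction n with
    | zero => simp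
    | succ n ih =>
      have := hrecip n
      push_cast
      push_cast at ih
      linarith
  set A := 1 / x 0 with hA
  have hApos : 0 < A := one_div_pos.mpr (hxpos 0)
  have hlb : ∀ n : ℕ, 1 / (A + 2 * C * n) ≤ x n := by
    intro n
    have hn : (0:ℝ) ≤ (n:ℝ) := Nat.cast_nonneg n
    have hd : 0 < A + 2 * C * n := by nlinarith [mul_nonneg hCpos.le hn]
    exact (one_div_le (hxpos n) hd).mp (hinv n)
  set c := 1 / (A + 2 * C) with hc
  have hcpos : 0 < c := one_div_pos.mpr (by linarith)
  have hlb2 : ∀ n : ℕ, c * (1 / (n + 1 : ℝ)) ≤ x n := by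
    intro n
    refine le_trans ?_ (hlb n)
    rw [hc, div_mul_div_comm, one_mul]
    apply one_div_le_one_div_of_le (by positivity)
    have hn : (0:ℝ) ≤ (n:ℝ) := Nat.cast_nonneg n
    nlinarith [mul_nonneg hApos.le hn, mul_nonneg hCpos.le hn]
  have hharm : Tendsto (fun N : ℕ => c * ∑ n ∈ Finset.range N, (1 / (n + 1 : ℝ))) atTop atTop :=
    Tendsto.const_mul_atTop hcpos Real.tendsto_sum_range_one_div_nat_succ_atTop
  apply tendsto_atTop_mono _ hharm
  intro N
  rw [Finset.mul_sum]
  exact Finset.sum_le_sum fun n _ => hlb2 n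
end

section
/- Suppose the two balls of the bouncing-ball system have equal positive masses (so that at a ball–ball collision they exchange velocities) and that f belongs to the class 𝒞. Then there exists a motion of the system such that lim_{i→∞} |v⁽¹⁾ᵢ| = lim_{i→∞} |v⁽²⁾ᵢ| = ∞, where v⁽²⁾ᵢ denotes the velocity of the lower ball P₂ just after its i-th collision with the plate and v⁽¹⁾ᵢ denotes the velocity of the upper ball P₁ just after its i-th collision with P₂. -/
open Filter Topology

/-- A motion of the one-dimensional system of two bouncing balls `P₁` (upper,
mass `m₁`) and `P₂` (lower, mass `m₂`) above a plate oscillating with height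
`f(t)`, in constant gravity `g`.  `x₁, x₂` are the positions, `v₁, v₂` the
velocities, and `coll` the (discrete) set of collision times.  Between
collisions the balls are in free fall; at a plate collision `P₂` reflects by
`v₂⁺ = −v₂⁻ + 2 f'(t)`; at a ball–ball collision the elastic collision law
with `α = (m₁−m₂)/(m₁+m₂)` holds; triple collisions are excluded. -/
structure BouncingBallMotion (g : ℝ) (f : ℝ → ℝ) (m₁ m₂ : ℝ) where
  x₁ : ℝ → ℝ
  x₂ : ℝ → ℝ
  v₁ : ℝ → ℝ
  v₂ : ℝ → ℝ
  coll : Set ℝ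
  cont₁ : ContinuousOn x₁ (Set.Ici 0)
  cont₂ : ContinuousOn x₂ (Set.Ici 0)
  order : ∀ t ∈ Set.Ici (0 : ℝ), f t ≤ x₂ t ∧ x₂ t ≤ x₁ t
  coll_sub : coll ⊆ Set.Ici 0
  coll_discrete : ∀ t : ℝ, ∃ ε > (0 : ℝ), ∀ s ∈ coll, |s - t| < ε → s = t
  freefall₁ : ∀ t ∈ Set.Ici (0 : ℝ) \ coll,
    HasDerivAt x₁ (v₁ t) t ∧ HasDerivAt v₁ (-g) t
  freefall₂ : ∀ t ∈ Set.Ici (0 : ℝ) \ coll,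
    HasDerivAt x₂ (v₂ t) t ∧ HasDerivAt v₂ (-g) t
  contact_mem_coll : ∀ t ∈ Set.Ici (0 : ℝ), x₂ t = f t ∨ x₁ t = x₂ t → t ∈ coll
  coll_is_contact : ∀ t ∈ coll, x₂ t = f t ∨ x₁ t = x₂ t
  no_triple : ∀ t ∈ coll, ¬(x₂ t = f t ∧ x₁ t = x₂ t)
  plate_law : ∀ t ∈ coll, 0 < t → x₂ t = f t →
    (∃ a b : ℝ, Tendsto v₂ (𝓝[<] t) (𝓝 a) ∧ Tendsto v₂ (𝓝[>] t) (𝓝 b) ∧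
      b = -a + 2 * deriv f t) ∧
    (∃ a : ℝ, Tendsto v₁ (𝓝[<] t) (𝓝 a) ∧ Tendsto v₁ (𝓝[>] t) (𝓝 a))
  ball_law : ∀ t ∈ coll, 0 < t → x₁ t = x₂ t →
    ∃ a₁ a₂ b₁ b₂ : ℝ,
      Tendsto v₁ (𝓝[<] t) (𝓝 a₁) ∧ Tendsto v₂ (𝓝[<] t) (𝓝 a₂) ∧
      Tendsto v₁ (𝓝[>] t) (𝓝 b₁) ∧ Tendsto v₂ (𝓝[>] t) (𝓝 b₂) ∧
      b₁ = (m₁ - m₂) / (m₁ + m₂) * a₁ + (1 - (m₁ - m₂) / (m₁ + m₂)) * a₂ ∧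
      b₂ = (1 + (m₁ - m₂) / (m₁ + m₂)) * a₁ - (m₁ - m₂) / (m₁ + m₂) * a₂

open Set

namespace BBConstr

noncomputable def idx (e : ℕ → ℝ) (t : ℝ) : ℕ := sInf {j | t < e (j+1)}

noncomputable def traj (g H0 : ℝ) (e : ℕ → ℝ) (t : ℝ) : ℝ :=
  H0 + g/2*((t - e (idx e t))*(e (idx e t + 1) - t))

noncomputable def vel (g : ℝ) (e : ℕ → ℝ) (t : ℝ) : ℝ :=
  g/2*(e (idx e t) + e (idx e t + 1) - 2*t)

section generic
variable {g H0 : ℝ} {e : ℕ → ℝ} {t : ℝ} {j : ℕ}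

lemma idx_eq (hm : StrictMono e) (h1 : e j ≤ t) (h2 : t < e (j+1)) : idx e t = j := by
  have hne : j ∈ {i | t < e (i+1)} := h2
  rw [idx]
  refine le_antisymm (Nat.sInf_le hne) ?_
  by_contra h
  push_neg at h
  have hmem : t < e (sInf {i | t < e (i+1)} + 1) := Nat.sInf_mem ⟨j, hne⟩
  have hle : e (sInf {i | t < e (i+1)} + 1) ≤ e j := hm.monotone (by omega)
  exact absurd (lt_of_lt_of_le hmem hle) (not_lt.2 h1)

lemma idx_spec (hm : StrictMono e) (h0 : e 0 ≤ t) (htop : ∃ i, t < e (i+1)) :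
    e (idx e t) ≤ t ∧ t < e (idx e t + 1) := by
  rw [idx]
  have hmem : t < e (sInf {i | t < e (i+1)} + 1) := Nat.sInf_mem htop
  refine ⟨?_, hmem⟩
  rcases Nat.eq_zero_or_pos (sInf {i | t < e (i+1)}) with h | h
  · rw [h]; exact h0
  · obtain ⟨k, hk⟩ := Nat.exists_eq_succ_of_ne_zero h.ne'
    have hnot : k ∉ {i | t < e (i+1)} := Nat.notMem_of_lt_sInf (by omega)
    rw [hk]
    exact not_lt.mp hnot

lemma traj_eq (hm : StrictMono e) (h1 : e j ≤ t) (h2 : t ≤ e (j+1)) :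
    traj g H0 e t = H0 + g/2*((t - e j)*(e (j+1) - t)) := by
  rcases lt_or_eq_of_le h2 with h2 | h2
  · rw [traj, idx_eq hm h1 h2]
  · rw [traj, idx_eq hm h2.ge (h2 ▸ hm (Nat.lt_succ_self (j+1))), h2]
    ring

lemma traj_event (hm : StrictMono e) : traj g H0 e (e j) = H0 := by
  rw [traj_eq hm le_rfl (hm (Nat.lt_succ_self j)).le]
  ring

lemma vel_eq (hm : StrictMono e) (h1 : e j ≤ t) (h2 : t < e (j+1)) :
    vel g e t = g/2*(e j + e (j+1) - 2*t) := by
  rw [vel, idx_eq hm h1 h2]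

lemma poly_hasDerivAt (l r c t : ℝ) :
    HasDerivAt (fun s => c + g/2*((s-l)*(r-s))) (g/2*(l+r-2*t)) t := by
  have h : HasDerivAt (fun s : ℝ => (s-l)*(r-s)) ((1:ℝ)*(r-t) + (t-l)*(0-1)) t :=
    ((hasDerivAt_id t).sub_const l).mul ((hasDerivAt_const t r).sub (hasDerivAt_id t))
  have h2 := (h.const_mul (g/2)).const_add c
  exact h2.congr_deriv (by ring)

lemma affine_hasDerivAt (l r t : ℝ) :
    HasDerivAt (fun s => g/2*(l+r-2*s)) (-g) t := by
  have h : HasDerivAt (fun s : ℝ => l+r-2*s) ((0:ℝ) - 2*1) t :=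
    (hasDerivAt_const t (l+r)).sub ((hasDerivAt_id t).const_mul 2)
  have h2 := h.const_mul (g/2)
  exact h2.congr_deriv (by ring)

lemma traj_eventually (hm : StrictMono e) (h : t ∈ Ioo (e j) (e (j+1))) :
    traj g H0 e =ᶠ[𝓝 t] fun s => H0 + g/2*((s - e j)*(e (j+1) - s)) := by
  filter_upwards [Ioo_mem_nhds h.1 h.2] with s hs
  exact traj_eq hm hs.1.le hs.2.le

lemma vel_eventually (hm : StrictMono e) (h : t ∈ Ioo (e j) (e (j+1))) :
    vel g e =ᶠ[𝓝 t] fun s => g/2*(e j + e (j+1) - 2*s) := by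
  filter_upwards [Ioo_mem_nhds h.1 h.2] with s hs
  exact vel_eq hm hs.1.le hs.2

lemma hasDerivAt_traj (hm : StrictMono e) (h : t ∈ Ioo (e j) (e (j+1))) :
    HasDerivAt (traj g H0 e) (vel g e t) t := by
  rw [EventuallyEq.hasDerivAt_iff (traj_eventually hm h), vel_eq hm h.1.le h.2]
  exact poly_hasDerivAt _ _ _ _

lemma hasDerivAt_vel (hm : StrictMono e) (h : t ∈ Ioo (e j) (e (j+1))) :
    HasDerivAt (vel g e) (-g) t := by
  rw [EventuallyEq.hasDerivAt_iff (vel_eventually hm h)]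
  exact affine_hasDerivAt _ _ _

lemma vel_continuousAt (hm : StrictMono e) (h : t ∈ Ioo (e j) (e (j+1))) :
    ContinuousAt (vel g e) t := by
  have hc : ContinuousAt (fun s => g/2*(e j + e (j+1) - 2*s)) t := by fun_prop
  exact hc.congr (vel_eventually hm h).symm

lemma traj_continuousAt_of_interior (hm : StrictMono e) (h : t ∈ Ioo (e j) (e (j+1))) :
    ContinuousAt (traj g H0 e) t := by
  have hc : ContinuousAt (fun s => H0 + g/2*((s - e j)*(e (j+1) - s))) t := by fun_prop
  exact hc.congr (traj_eventually hm h).symm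

lemma vel_tendsto_right (hm : StrictMono e) :
    Tendsto (vel g e) (𝓝[>] (e j)) (𝓝 (g/2*(e (j+1) - e j))) := by
  have hmem : Ioo (e j) (e (j+1)) ∈ 𝓝[>] (e j) :=
    Ioo_mem_nhdsGT_of_mem ⟨le_rfl, hm (Nat.lt_succ_self j)⟩
  have hev : vel g e =ᶠ[𝓝[>] (e j)] fun s => g/2*(e j + e (j+1) - 2*s) := by
    filter_upwards [hmem] with s hs
    exact vel_eq hm hs.1.le hs.2
  have hc : Tendsto (fun s => g/2*(e j + e (j+1) - 2*s)) (𝓝[>] (e j))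
      (𝓝 (g/2*(e j + e (j+1) - 2*(e j)))) := by
    have hc0 : Continuous (fun s : ℝ => g/2*(e j + e (j+1) - 2*s)) := by fun_prop
    exact (hc0.tendsto _).mono_left nhdsWithin_le_nhds
  have : g/2*(e j + e (j+1) - 2*(e j)) = g/2*(e (j+1) - e j) := by ring
  rw [this] at hc
  exact hc.congr' hev.symm

lemma vel_tendsto_left (hm : StrictMono e) :
    Tendsto (vel g e) (𝓝[<] (e (j+1))) (𝓝 (-(g/2*(e (j+1) - e j)))) := by
  have hmem : Ioo (e j) (e (j+1)) ∈ 𝓝[<] (e (j+1)) :=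
    Ioo_mem_nhdsLT_of_mem ⟨hm (Nat.lt_succ_self j), le_rfl⟩
  have hev : vel g e =ᶠ[𝓝[<] (e (j+1))] fun s => g/2*(e j + e (j+1) - 2*s) := by
    filter_upwards [hmem] with s hs
    exact vel_eq hm hs.1.le hs.2
  have hc : Tendsto (fun s => g/2*(e j + e (j+1) - 2*s)) (𝓝[<] (e (j+1)))
      (𝓝 (g/2*(e j + e (j+1) - 2*(e (j+1))))) := by
    have hc0 : Continuous (fun s : ℝ => g/2*(e j + e (j+1) - 2*s)) := by fun_prop
    exact (hc0.tendsto _).mono_left nhdsWithin_le_nhds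
  have : g/2*(e j + e (j+1) - 2*(e (j+1))) = -(g/2*(e (j+1) - e j)) := by ring
  rw [this] at hc
  exact hc.congr' hev.symm

lemma traj_continuousAt (hm : StrictMono e) (htop : ∀ s : ℝ, ∃ i, s < e (i+1))
    (h0 : e 0 < t) : ContinuousAt (traj g H0 e) t := by
  obtain ⟨h1, h2⟩ := idx_spec hm h0.le (htop t)
  rcases lt_or_eq_of_le h1 with h1 | h1
  · exact traj_continuousAt_of_interior hm ⟨h1, h2⟩
  · -- t = e (idx e t), and idx e t ≥ 1
    have hjpos : 1 ≤ idx e t := by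
      by_contra h
      push_neg at h
      have hz : idx e t = 0 := by omega
      rw [hz] at h1
      exact absurd (h1 ▸ h0) (lt_irrefl _)
    obtain ⟨k, hk⟩ : ∃ k, idx e t = k + 1 := ⟨idx e t - 1, by omega⟩
    rw [hk] at h1 h2
    rw [continuousAt_iff_continuous_left'_right']
    constructor
    · -- left, via flight k
      have hmem : Ioo (e k) (e (k+1)) ∈ 𝓝[<] t :=
        Ioo_mem_nhdsLT_of_mem ⟨h1 ▸ hm (Nat.lt_succ_self k), h1.ge⟩
      have hev : traj g H0 e =ᶠ[𝓝[<] t] fun s => H0 + g/2*((s - e k)*(e (k+1) - s)) := by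
        filter_upwards [hmem] with s hs
        exact traj_eq hm hs.1.le hs.2.le
      have hc : Tendsto (fun s => H0 + g/2*((s - e k)*(e (k+1) - s))) (𝓝[<] t)
          (𝓝 (H0 + g/2*((t - e k)*(e (k+1) - t)))) := by
        have hc0 : Continuous (fun s : ℝ => H0 + g/2*((s - e k)*(e (k+1) - s))) := by fun_prop
        exact (hc0.tendsto _).mono_left nhdsWithin_le_nhds
      have hval : H0 + g/2*((t - e k)*(e (k+1) - t)) = traj g H0 e t := by
        rw [← h1, traj_event hm]; ring
      rw [ContinuousWithinAt]
      rw [← hval]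
      exact hc.congr' hev.symm
    · -- right, via flight k+1
      have hmem : Ioo (e (k+1)) (e (k+2)) ∈ 𝓝[>] t :=
        Ioo_mem_nhdsGT_of_mem ⟨h1.le, h1 ▸ hm (Nat.lt_succ_self (k+1))⟩
      have hev : traj g H0 e =ᶠ[𝓝[>] t] fun s => H0 + g/2*((s - e (k+1))*(e (k+2) - s)) := by
        filter_upwards [hmem] with s hs
        exact traj_eq hm hs.1.le hs.2.le
      have hc : Tendsto (fun s => H0 + g/2*((s - e (k+1))*(e (k+2) - s))) (𝓝[>] t)
          (𝓝 (H0 + g/2*((t - e (k+1))*(e (k+2) - t)))) := by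
        have hc0 : Continuous (fun s : ℝ => H0 + g/2*((s - e (k+1))*(e (k+2) - s))) := by fun_prop
        exact (hc0.tendsto _).mono_left nhdsWithin_le_nhds
      have hval : H0 + g/2*((t - e (k+1))*(e (k+2) - t)) = traj g H0 e t := by
        rw [← h1, traj_event hm]; ring
      rw [ContinuousWithinAt, ← hval]
      exact hc.congr' hev.symm

section generic2
variable {g H0 : ℝ} {e : ℕ → ℝ} {t : ℝ} {j : ℕ} {f : ℝ → ℝ} {L : ℝ}

lemma parabola_above (hg : 0 < g) {l r : ℝ}
    (hLip : ∀ x y : ℝ, |f x - f y| ≤ L*|x - y|)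
    (hfl : f l = H0) (hfr : f r = H0) (hlen : 4*L < g*(r - l))
    (ht : t ∈ Ioo l r) : f t < H0 + g/2*((t - l)*(r - t)) := by
  obtain ⟨htl, htr⟩ := ht
  rcases le_or_gt t ((l+r)/2) with hmid | hmid
  · have h1 : f t - f l ≤ L*(t - l) := by
      have h := hLip t l
      rw [abs_of_pos (by linarith : (0:ℝ) < t - l)] at h
      exact (le_abs_self _).trans h
    rw [hfl] at h1
    have h2 : 2*L < g*(r-t) := by
      nlinarith [mul_nonneg hg.le (show (0:ℝ) ≤ (r-t)-(r-l)/2 by linarith)]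
    have h3 : L*(t-l) < g/2*((t-l)*(r-t)) := by
      nlinarith [mul_pos (show (0:ℝ) < t - l by linarith)
        (show (0:ℝ) < g*(r-t) - 2*L by linarith)]
    linarith
  · have h1 : f t - f r ≤ L*(r - t) := by
      have h := hLip t r
      rw [show |t - r| = r - t from by
        rw [abs_sub_comm]; exact abs_of_pos (by linarith)] at h
      exact (le_abs_self _).trans h
    rw [hfr] at h1
    have h2 : 2*L < g*(t-l) := by
      nlinarith [mul_nonneg hg.le (show (0:ℝ) ≤ (t-l)-(r-l)/2 by linarith)]
    have h3 : L*(r-t) < g/2*((t-l)*(r-t)) := by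
      nlinarith [mul_pos (show (0:ℝ) < r - t by linarith)
        (show (0:ℝ) < g*(t-l) - 2*L by linarith)]
    linarith

lemma traj_above_interior (hg : 0 < g) (hm : StrictMono e)
    (hLip : ∀ x y : ℝ, |f x - f y| ≤ L*|x - y|)
    (hfl : f (e j) = H0) (hfr : f (e (j+1)) = H0) (hlen : 4*L < g*(e (j+1) - e j))
    (h : t ∈ Ioo (e j) (e (j+1))) : f t < traj g H0 e t := by
  rw [traj_eq hm h.1.le h.2.le]
  exact parabola_above hg hLip hfl hfr hlen h

lemma traj_ge (hg : 0 < g) (hm : StrictMono e) (htop : ∀ s : ℝ, ∃ i, s < e (i+1))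
    (hLip : ∀ x y : ℝ, |f x - f y| ≤ L*|x - y|)
    (hfe : ∀ j, f (e j) = H0) (hlen : ∀ j, 4*L < g*(e (j+1) - e j))
    (h0 : e 0 ≤ t) : f t ≤ traj g H0 e t := by
  obtain ⟨h1, h2⟩ := idx_spec hm h0 (htop t)
  rcases lt_or_eq_of_le h1 with h1 | h1
  · exact (traj_above_interior hg hm hLip (hfe _) (hfe _) (hlen _) ⟨h1, h2⟩).le
  · rw [← h1, traj_event hm, hfe]

lemma traj_above_of_ne (hg : 0 < g) (hm : StrictMono e) (htop : ∀ s : ℝ, ∃ i, s < e (i+1))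
    (hLip : ∀ x y : ℝ, |f x - f y| ≤ L*|x - y|)
    (hfe : ∀ j, f (e j) = H0) (hlen : ∀ j, 4*L < g*(e (j+1) - e j))
    (h0 : e 0 ≤ t) (hne : ∀ j, t ≠ e j) : f t < traj g H0 e t := by
  obtain ⟨h1, h2⟩ := idx_spec hm h0 (htop t)
  rcases lt_or_eq_of_le h1 with h1 | h1
  · exact traj_above_interior hg hm hLip (hfe _) (hfe _) (hlen _) ⟨h1, h2⟩
  · exact absurd h1.symm (hne _)

lemma traj_interior_of_ne (hm : StrictMono e) (htop : ∀ s : ℝ, ∃ i, s < e (i+1))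
    (h0 : e 0 ≤ t) (hne : ∀ j, t ≠ e j) :
    t ∈ Ioo (e (idx e t)) (e (idx e t + 1)) := by
  obtain ⟨h1, h2⟩ := idx_spec hm h0 (htop t)
  exact ⟨lt_of_le_of_ne h1 (fun h => hne _ h.symm), h2⟩

end generic2

end generic


noncomputable def aS (a1 T : ℝ) (N K : ℕ) (j : ℕ) : ℝ :=
  a1 + T*(((j:ℝ)-1)*((N:ℝ)-2*(K:ℝ)+(K:ℝ)*(j:ℝ)))
noncomputable def bS (a1 T : ℝ) (N K : ℕ) (j : ℕ) : ℝ :=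
  a1 + T*(((j:ℝ)-1)*((N:ℝ)-(K:ℝ)+(K:ℝ)*(j:ℝ))+1)

noncomputable def dd1 (a1 T : ℝ) (N K : ℕ) (i : ℕ) : ℝ :=
  aS a1 T N K (i+1) + aS a1 T N K (i+2) - bS a1 T N K i - bS a1 T N K (i+1)
noncomputable def nn1 (a1 T : ℝ) (N K : ℕ) (i : ℕ) : ℝ :=
  aS a1 T N K (i+1) * aS a1 T N K (i+2) - bS a1 T N K i * bS a1 T N K (i+1)
noncomputable def cc1 (a1 T : ℝ) (N K : ℕ) (i : ℕ) : ℝ := nn1 a1 T N K i / dd1 a1 T N K i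

noncomputable def dd2 (a1 T : ℝ) (N K : ℕ) (i : ℕ) : ℝ :=
  aS a1 T N K (i+1) + aS a1 T N K (i+2) - bS a1 T N K (i+1) - bS a1 T N K (i+2)
noncomputable def nn2 (a1 T : ℝ) (N K : ℕ) (i : ℕ) : ℝ :=
  aS a1 T N K (i+1) * aS a1 T N K (i+2) - bS a1 T N K (i+1) * bS a1 T N K (i+2)
noncomputable def cc2 (a1 T : ℝ) (N K : ℕ) (i : ℕ) : ℝ := nn2 a1 T N K i / dd2 a1 T N K i

section seqs
variable {g T a1 L : ℝ} {N K : ℕ}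
variable (hg : 0 < g) (hT : 0 < T) (ha1 : 0 < a1) (ha2 : a1 < 2*T)
variable (hK : 1 ≤ (K:ℝ)) (hN : 2*(K:ℝ)+8 ≤ (N:ℝ))

lemma aS_succ_sub (j : ℕ) :
    aS a1 T N K (j+1) - aS a1 T N K j = T*((N:ℝ)-2*K+2*K*j) := by
  simp only [aS]; push_cast; ring

lemma bS_succ_sub (j : ℕ) :
    bS a1 T N K (j+1) - bS a1 T N K j = T*((N:ℝ)-K+2*K*j) := by
  simp only [bS]; push_cast; ring

include hT hK hN in
lemma aS_mono : StrictMono (aS a1 T N K) := by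
  apply strictMono_nat_of_lt_succ
  intro j
  have h := aS_succ_sub (a1 := a1) (T := T) (N := N) (K := K) j
  have hj : (0:ℝ) ≤ (j:ℝ) := Nat.cast_nonneg j
  have hK0 : (0:ℝ) ≤ (K:ℝ) := le_trans zero_le_one hK
  nlinarith [mul_nonneg (mul_nonneg hK0 hj) hT.le, mul_nonneg hK0 hj]

include hT hK hN in
lemma bS_mono : StrictMono (bS a1 T N K) := by
  apply strictMono_nat_of_lt_succ
  intro j
  have h := bS_succ_sub (a1 := a1) (T := T) (N := N) (K := K) j
  have hj : (0:ℝ) ≤ (j:ℝ) := Nat.cast_nonneg j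
  have hK0 : (0:ℝ) ≤ (K:ℝ) := le_trans zero_le_one hK
  nlinarith [mul_nonneg hK0 hj, mul_nonneg (mul_nonneg hT.le hK0) hj]

include hT hK hN in
lemma aS_ge_lin (i : ℕ) : a1 + T*(i:ℝ) ≤ aS a1 T N K (i+1) := by
  have : aS a1 T N K (i+1) - (a1 + T*(i:ℝ)) = T*((i:ℝ)*((N:ℝ)-2*K+K*(i:ℝ)+K-1)) := by
    simp only [aS]; push_cast; ring
  have hi : (0:ℝ) ≤ (i:ℝ) := Nat.cast_nonneg i
  have hK0 : (0:ℝ) ≤ (K:ℝ) := le_trans zero_le_one hK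
  nlinarith [mul_nonneg hK0 hi, mul_nonneg (mul_nonneg hT.le hi) (by nlinarith [mul_nonneg hK0 hi] : (0:ℝ) ≤ (N:ℝ)-2*K+K*(i:ℝ)+K-1)]

include hT hK hN in
lemma bS_ge_lin (i : ℕ) : a1 + T*(i:ℝ) ≤ bS a1 T N K (i+1) := by
  have : bS a1 T N K (i+1) - (a1 + T*(i:ℝ)) = T*((i:ℝ)*((N:ℝ)-K+K*(i:ℝ)+K-1)+1) := by
    simp only [bS]; push_cast; ring
  have hi : (0:ℝ) ≤ (i:ℝ) := Nat.cast_nonneg i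
  have hK0 : (0:ℝ) ≤ (K:ℝ) := le_trans zero_le_one hK
  nlinarith [mul_nonneg hK0 hi, mul_nonneg (mul_nonneg hT.le hi) (by nlinarith [mul_nonneg hK0 hi] : (0:ℝ) ≤ (N:ℝ)-K+K*(i:ℝ)+K-1)]

include hT hK hN in
lemma aS_top : ∀ t : ℝ, ∃ i, t < aS a1 T N K (i+1) := by
  intro t
  obtain ⟨i, hi⟩ := exists_nat_gt ((t - a1)/T)
  refine ⟨i, lt_of_lt_of_le ?_ (aS_ge_lin hT hK hN i)⟩
  rw [div_lt_iff₀ hT] at hi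
  linarith

include hT hK hN in
lemma bS_top : ∀ t : ℝ, ∃ i, t < bS a1 T N K (i+1) := by
  intro t
  obtain ⟨i, hi⟩ := exists_nat_gt ((t - a1)/T)
  refine ⟨i, lt_of_lt_of_le ?_ (bS_ge_lin hT hK hN i)⟩
  rw [div_lt_iff₀ hT] at hi
  linarith

include hT ha2 hK hN in
lemma aS0_neg : aS a1 T N K 0 < 0 := by
  have : aS a1 T N K 0 = a1 - T*((N:ℝ)-2*K) := by simp only [aS]; push_cast; ring
  nlinarith

include hT ha2 hK hN in
lemma bS0_neg : bS a1 T N K 0 < 0 := by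
  have : bS a1 T N K 0 = a1 - T*((N:ℝ)-K-1) := by simp only [bS]; push_cast; ring
  nlinarith

lemma aS1_eq : aS a1 T N K 1 = a1 := by simp [aS]
lemma bS1_eq : bS a1 T N K 1 = a1 + T := by simp [bS]

include hT hK hN in
lemma bS_lt_aS_succ (i : ℕ) : bS a1 T N K i < aS a1 T N K (i+1) := by
  have h : aS a1 T N K (i+1) - bS a1 T N K i = T*((i:ℝ)*K + (N:ℝ) - K - 1) := by
    simp only [aS, bS]; push_cast; ring
  have hi : (0:ℝ) ≤ (i:ℝ) := Nat.cast_nonneg i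
  have hK0 : (0:ℝ) ≤ (K:ℝ) := le_trans zero_le_one hK
  nlinarith [mul_nonneg hi hK0, mul_nonneg hT.le (mul_nonneg hi hK0)]

include hT hK in
lemma aS_lt_bS (i : ℕ) : aS a1 T N K (i+1) < bS a1 T N K (i+1) := by
  have h : bS a1 T N K (i+1) - aS a1 T N K (i+1) = T*((i:ℝ)*K + 1) := by
    simp only [aS, bS]; push_cast; ring
  have hi : (0:ℝ) ≤ (i:ℝ) := Nat.cast_nonneg i
  have hK0 : (0:ℝ) ≤ (K:ℝ) := le_trans zero_le_one hK
  nlinarith [mul_nonneg hi hK0, mul_nonneg hT.le (mul_nonneg hi hK0)]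

lemma dd1_eq (i : ℕ) : dd1 a1 T N K i = T*(2*K*(i:ℝ) + 2*(N:ℝ) - K - 2) := by
  simp only [dd1, aS, bS]; push_cast; ring

lemma dd2_eq (i : ℕ) : dd2 a1 T N K i = -(T*(2*K*(i:ℝ) + K + 2)) := by
  simp only [dd2, aS, bS]; push_cast; ring

include hT hK hN in
lemma dd1_pos (i : ℕ) : 0 < dd1 a1 T N K i := by
  rw [dd1_eq]
  have hi : (0:ℝ) ≤ (i:ℝ) := Nat.cast_nonneg i
  have hK0 : (0:ℝ) ≤ (K:ℝ) := le_trans zero_le_one hK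
  nlinarith [mul_nonneg (mul_nonneg hK0 hi) hT.le]

include hT hK in
lemma dd2_neg (i : ℕ) : dd2 a1 T N K i < 0 := by
  rw [dd2_eq]
  have hi : (0:ℝ) ≤ (i:ℝ) := Nat.cast_nonneg i
  have hK0 : (0:ℝ) ≤ (K:ℝ) := le_trans zero_le_one hK
  nlinarith [mul_nonneg (mul_nonneg hK0 hi) hT.le]

lemma cross1_identity (hden : dd1 a1 T N K i ≠ 0) (t : ℝ) :
    (t - aS a1 T N K (i+1))*(aS a1 T N K (i+2) - t)
      - (t - bS a1 T N K i)*(bS a1 T N K (i+1) - t)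
    = dd1 a1 T N K i * (t - cc1 a1 T N K i) := by
  have h := hden
  rw [dd1] at h
  rw [cc1, nn1, dd1]
  field_simp
  ring

lemma cross2_identity (hden : dd2 a1 T N K i ≠ 0) (t : ℝ) :
    (t - aS a1 T N K (i+1))*(aS a1 T N K (i+2) - t)
      - (t - bS a1 T N K (i+1))*(bS a1 T N K (i+2) - t)
    = dd2 a1 T N K i * (t - cc2 a1 T N K i) := by
  have h := hden
  rw [dd2] at h
  rw [cc2, nn2, dd2]
  field_simp
  ring


include hT hK hN in
lemma cc1_mem (i : ℕ) :
    aS a1 T N K (i+1) < cc1 a1 T N K i ∧ cc1 a1 T N K i < bS a1 T N K (i+1) := by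
  have hd := dd1_pos (a1 := a1) hT hK hN i
  have hi : (0:ℝ) ≤ (i:ℝ) := Nat.cast_nonneg i
  have hK0 : (0:ℝ) ≤ (K:ℝ) := le_trans zero_le_one hK
  have hT2 : (0:ℝ) < T^2 := by positivity
  constructor
  · rw [cc1, lt_div_iff₀ hd]
    have hident : nn1 a1 T N K i - aS a1 T N K (i+1) * dd1 a1 T N K i
        = T^2*((K:ℝ)^2*(i:ℝ)^2 + (K:ℝ)*(N:ℝ)*(i:ℝ) - (K:ℝ)^2*(i:ℝ) + (N:ℝ) - K - 1) := by
      simp only [nn1, dd1, aS, bS]; push_cast; ring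
    have hP : (0:ℝ) < (K:ℝ)^2*(i:ℝ)^2 + (K:ℝ)*(N:ℝ)*(i:ℝ) - (K:ℝ)^2*(i:ℝ) + (N:ℝ) - K - 1 := by
      nlinarith [mul_nonneg (mul_nonneg hK0 hi)
        (show (0:ℝ) ≤ (K:ℝ)*(i:ℝ) + (N:ℝ) - K by nlinarith [mul_nonneg hK0 hi])]
    nlinarith [mul_pos hT2 hP]
  · rw [cc1, div_lt_iff₀ hd]
    have hident : bS a1 T N K (i+1) * dd1 a1 T N K i - nn1 a1 T N K i
        = T^2*((K:ℝ)^2*(i:ℝ)^2 + (K:ℝ)*(N:ℝ)*(i:ℝ) + (N:ℝ) - 1) := by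
      simp only [nn1, dd1, aS, bS]; push_cast; ring
    have hP : (0:ℝ) < (K:ℝ)^2*(i:ℝ)^2 + (K:ℝ)*(N:ℝ)*(i:ℝ) + (N:ℝ) - 1 := by
      nlinarith [mul_nonneg (mul_nonneg (mul_nonneg hK0 hK0) hi) hi,
        mul_nonneg (mul_nonneg hK0 (show (0:ℝ) ≤ (N:ℝ) by linarith)) hi]
    nlinarith [mul_pos hT2 hP]

include hT hK hN in
lemma cc2_mem (i : ℕ) :
    bS a1 T N K (i+1) < cc2 a1 T N K i ∧ cc2 a1 T N K i < aS a1 T N K (i+2) := by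
  have hd := dd2_neg (a1 := a1) (N := N) hT hK i
  have hi : (0:ℝ) ≤ (i:ℝ) := Nat.cast_nonneg i
  have hK0 : (0:ℝ) ≤ (K:ℝ) := le_trans zero_le_one hK
  have hT2 : (0:ℝ) < T^2 := by positivity
  constructor
  · rw [cc2, lt_div_iff_of_neg hd]
    have hident : bS a1 T N K (i+1) * dd2 a1 T N K i - nn2 a1 T N K i
        = T^2*((K:ℝ)^2*(i:ℝ)^2 + (K:ℝ)*(N:ℝ)*(i:ℝ) + (N:ℝ) - 1) := by
      simp only [nn2, dd2, aS, bS]; push_cast; ring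
    have hP : (0:ℝ) < (K:ℝ)^2*(i:ℝ)^2 + (K:ℝ)*(N:ℝ)*(i:ℝ) + (N:ℝ) - 1 := by
      nlinarith [mul_nonneg (mul_nonneg (mul_nonneg hK0 hK0) hi) hi,
        mul_nonneg (mul_nonneg hK0 (show (0:ℝ) ≤ (N:ℝ) by linarith)) hi]
    nlinarith [mul_pos hT2 hP]
  · rw [cc2, div_lt_iff_of_neg hd]
    have hident : nn2 a1 T N K i - aS a1 T N K (i+2) * dd2 a1 T N K i
        = T^2*((K:ℝ)^2*(i:ℝ)^2 + (K:ℝ)*(N:ℝ)*(i:ℝ) + (K:ℝ)^2*(i:ℝ) + (N:ℝ)*(K:ℝ) + (N:ℝ) - K - 1) := by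
      simp only [nn2, dd2, aS, bS]; push_cast; ring
    have hP : (0:ℝ) < (K:ℝ)^2*(i:ℝ)^2 + (K:ℝ)*(N:ℝ)*(i:ℝ) + (K:ℝ)^2*(i:ℝ) + (N:ℝ)*(K:ℝ) + (N:ℝ) - K - 1 := by
      nlinarith [mul_nonneg (mul_nonneg (mul_nonneg hK0 hK0) hi) hi,
        mul_nonneg (mul_nonneg hK0 (show (0:ℝ) ≤ (N:ℝ) by linarith)) hi,
        mul_nonneg (mul_nonneg hK0 hK0) hi,
        mul_nonneg hK0 (show (0:ℝ) ≤ (N:ℝ)-2*K-8 by linarith)]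
    nlinarith [mul_pos hT2 hP]

include hg hT hK hN in
lemma vel_cc1_ge (i : ℕ) :
    g*T/2*((i:ℝ)+1) ≤ g/2*(aS a1 T N K (i+1) + aS a1 T N K (i+2) - 2*cc1 a1 T N K i) := by
  have hd := dd1_pos (a1 := a1) hT hK hN i
  have hi : (0:ℝ) ≤ (i:ℝ) := Nat.cast_nonneg i
  have hK0 : (0:ℝ) ≤ (K:ℝ) := le_trans zero_le_one hK
  have hT2 : (0:ℝ) < T^2 := by positivity
  have key : T*((i:ℝ)+1) ≤ aS a1 T N K (i+1) + aS a1 T N K (i+2) - 2*cc1 a1 T N K i := by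
    have hcc : cc1 a1 T N K i * dd1 a1 T N K i = nn1 a1 T N K i := by
      rw [cc1]; exact div_mul_cancel₀ _ hd.ne'
    have hident : (aS a1 T N K (i+1) + aS a1 T N K (i+2) - 2*cc1 a1 T N K i - T*((i:ℝ)+1))
          * dd1 a1 T N K i
        = T^2*(2*(K:ℝ)^2*(i:ℝ)^2 - 2*(K:ℝ)*(i:ℝ)^2 + 4*(K:ℝ)*(N:ℝ)*(i:ℝ) - 2*(N:ℝ)*(i:ℝ)
          - 5*(K:ℝ)*(i:ℝ) + 2*(i:ℝ) + 2*(N:ℝ)^2 - (N:ℝ)*(K:ℝ) - 6*(N:ℝ) + 3*(K:ℝ) + 4) := by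
      have hexp : (aS a1 T N K (i+1) + aS a1 T N K (i+2) - 2*cc1 a1 T N K i - T*((i:ℝ)+1))
            * dd1 a1 T N K i
          = (aS a1 T N K (i+1) + aS a1 T N K (i+2) - T*((i:ℝ)+1))*dd1 a1 T N K i
            - 2*(cc1 a1 T N K i * dd1 a1 T N K i) := by ring
      rw [hexp, hcc]
      simp only [nn1, dd1, aS, bS]; push_cast; ring
    have hin1 : (0:ℝ) ≤ 4*(K:ℝ)*(N:ℝ) - 2*(N:ℝ) - 5*(K:ℝ) + 2 := by
      nlinarith [mul_nonneg (show (0:ℝ) ≤ (K:ℝ)-1 by linarith) (show (0:ℝ) ≤ (N:ℝ) by linarith),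
        mul_nonneg hK0 (show (0:ℝ) ≤ (N:ℝ)-2*K-8 by linarith), mul_nonneg hK0 hK0]
    have hin2 : (0:ℝ) ≤ 2*(N:ℝ)^2 - (N:ℝ)*(K:ℝ) - 6*(N:ℝ) + 3*(K:ℝ) + 4 := by
      nlinarith [mul_nonneg (show (0:ℝ) ≤ (N:ℝ) by linarith)
        (show (0:ℝ) ≤ 2*(N:ℝ)-(K:ℝ)-6 by linarith)]
    have hP : (0:ℝ) ≤ 2*(K:ℝ)^2*(i:ℝ)^2 - 2*(K:ℝ)*(i:ℝ)^2 + 4*(K:ℝ)*(N:ℝ)*(i:ℝ) - 2*(N:ℝ)*(i:ℝ)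
          - 5*(K:ℝ)*(i:ℝ) + 2*(i:ℝ) + 2*(N:ℝ)^2 - (N:ℝ)*(K:ℝ) - 6*(N:ℝ) + 3*(K:ℝ) + 4 := by
      nlinarith [mul_nonneg (mul_nonneg (mul_nonneg hK0 hi) hi) (show (0:ℝ) ≤ (K:ℝ)-1 by linarith),
        mul_nonneg hi hin1, hin2]
    have h0 : 0 ≤ (aS a1 T N K (i+1) + aS a1 T N K (i+2) - 2*cc1 a1 T N K i - T*((i:ℝ)+1))
        * dd1 a1 T N K i := by
      rw [hident]; exact mul_nonneg hT2.le hP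
    nlinarith [(mul_nonneg_iff_of_pos_right hd).mp h0]
  have hg2 : (0:ℝ) ≤ g/2 := by positivity
  have := mul_le_mul_of_nonneg_left key hg2
  nlinarith [this]

include hg hT hK hN in
lemma vel_cc2_ge (i : ℕ) :
    g*T/2*((i:ℝ)+1) ≤ g/2*(bS a1 T N K (i+1) + bS a1 T N K (i+2) - 2*cc2 a1 T N K i) := by
  have hd := dd2_neg (a1 := a1) (N := N) hT hK i
  have hi : (0:ℝ) ≤ (i:ℝ) := Nat.cast_nonneg i
  have hK0 : (0:ℝ) ≤ (K:ℝ) := le_trans zero_le_one hK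
  have hT2 : (0:ℝ) < T^2 := by positivity
  have key : T*((i:ℝ)+1) ≤ bS a1 T N K (i+1) + bS a1 T N K (i+2) - 2*cc2 a1 T N K i := by
    have hcc : cc2 a1 T N K i * dd2 a1 T N K i = nn2 a1 T N K i := by
      rw [cc2]; exact div_mul_cancel₀ _ hd.ne
    have hident : -((bS a1 T N K (i+1) + bS a1 T N K (i+2) - 2*cc2 a1 T N K i - T*((i:ℝ)+1))
          * dd2 a1 T N K i)
        = T^2*(2*(K:ℝ)^2*(i:ℝ)^2 - 2*(K:ℝ)*(i:ℝ)^2 + 4*(K:ℝ)^2*(i:ℝ) + (K:ℝ)*(i:ℝ) - 2*(i:ℝ)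
          + (N:ℝ)*(K:ℝ) + (K:ℝ)^2 + (K:ℝ)) := by
      have hexp : -((bS a1 T N K (i+1) + bS a1 T N K (i+2) - 2*cc2 a1 T N K i - T*((i:ℝ)+1))
            * dd2 a1 T N K i)
          = -((bS a1 T N K (i+1) + bS a1 T N K (i+2) - T*((i:ℝ)+1))*dd2 a1 T N K i)
            + 2*(cc2 a1 T N K i * dd2 a1 T N K i) := by ring
      rw [hexp, hcc]
      simp only [nn2, dd2, bS, aS]; push_cast; ring
    have hin1 : (0:ℝ) ≤ 4*(K:ℝ)^2 + (K:ℝ) - 2 := by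
      nlinarith [mul_nonneg (show (0:ℝ) ≤ (K:ℝ)-1 by linarith) hK0]
    have hP : (0:ℝ) ≤ 2*(K:ℝ)^2*(i:ℝ)^2 - 2*(K:ℝ)*(i:ℝ)^2 + 4*(K:ℝ)^2*(i:ℝ) + (K:ℝ)*(i:ℝ) - 2*(i:ℝ)
          + (N:ℝ)*(K:ℝ) + (K:ℝ)^2 + (K:ℝ) := by
      nlinarith [mul_nonneg (mul_nonneg (mul_nonneg hK0 hi) hi) (show (0:ℝ) ≤ (K:ℝ)-1 by linarith),
        mul_nonneg hi hin1,
        mul_nonneg (show (0:ℝ) ≤ (N:ℝ) by linarith) hK0, mul_nonneg hK0 hK0]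
    have h0 : (bS a1 T N K (i+1) + bS a1 T N K (i+2) - 2*cc2 a1 T N K i - T*((i:ℝ)+1))
        * dd2 a1 T N K i ≤ 0 := by
      nlinarith [mul_nonneg hT2.le hP]
    by_contra hcon
    push_neg at hcon
    nlinarith [mul_pos_of_neg_of_neg (show bS a1 T N K (i+1) + bS a1 T N K (i+2)
      - 2*cc2 a1 T N K i - T*((i:ℝ)+1) < 0 by linarith) hd]
  have hg2 : (0:ℝ) ≤ g/2 := by positivity
  have := mul_le_mul_of_nonneg_left key hg2
  nlinarith [this]

include hT ha1 ha2 hK hN in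
lemma seg0_neg {t : ℝ} (h0 : 0 ≤ t) (h1 : t ≤ aS a1 T N K 1) :
    (t - aS a1 T N K 0)*(aS a1 T N K 1 - t) < (t - bS a1 T N K 0)*(bS a1 T N K 1 - t) := by
  have hK0 : (0:ℝ) ≤ (K:ℝ) := le_trans zero_le_one hK
  have e0 : aS a1 T N K 0 = a1 - T*((N:ℝ)-2*K) := by simp only [aS]; push_cast; ring
  have e1 : aS a1 T N K 1 = a1 := aS1_eq
  have e2 : bS a1 T N K 0 = a1 - T*((N:ℝ)-K-1) := by simp only [bS]; push_cast; ring
  have e3 : bS a1 T N K 1 = a1 + T := bS1_eq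
  rw [e1] at h1
  rw [e0, e1, e2, e3]
  have hident : (t - (a1 - T*((N:ℝ)-2*K)))*(a1 - t) - (t - (a1 - T*((N:ℝ)-K-1)))*(a1 + T - t)
      = T*(((K:ℝ)-2)*t + a1*(2-(K:ℝ)) - T*((N:ℝ)-(K:ℝ)-1)) := by ring
  have hinner : ((K:ℝ)-2)*t + a1*(2-(K:ℝ)) - T*((N:ℝ)-(K:ℝ)-1) < 0 := by
    rcases le_or_gt (K:ℝ) 2 with h | h
    · nlinarith [mul_nonpos_of_nonpos_of_nonneg (show (K:ℝ)-2 ≤ 0 by linarith) h0,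
        mul_nonneg ha1.le (show (0:ℝ) ≤ (K:ℝ)-1 by linarith),
        mul_nonneg hT.le (show (0:ℝ) ≤ (N:ℝ)-2*K-8 by linarith),
        mul_nonneg hT.le (show (0:ℝ) ≤ (K:ℝ)-1 by linarith)]
    · nlinarith [mul_le_mul_of_nonneg_left h1 (show (0:ℝ) ≤ (K:ℝ)-2 by linarith),
        mul_nonneg hT.le (show (0:ℝ) ≤ (N:ℝ)-2*K-8 by linarith),
        mul_nonneg hT.le (show (0:ℝ) ≤ (K:ℝ)-1 by linarith)]
  nlinarith [mul_pos hT (show (0:ℝ) < -(((K:ℝ)-2)*t + a1*(2-(K:ℝ)) - T*((N:ℝ)-(K:ℝ)-1)) by linarith)]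

end seqs


noncomputable def X1 (g T a1 H0 : ℝ) (N K : ℕ) (t : ℝ) : ℝ :=
  max (traj g H0 (aS a1 T N K) t) (traj g H0 (bS a1 T N K) t)
noncomputable def X2 (g T a1 H0 : ℝ) (N K : ℕ) (t : ℝ) : ℝ :=
  min (traj g H0 (aS a1 T N K) t) (traj g H0 (bS a1 T N K) t)
noncomputable def V1 (g T a1 H0 : ℝ) (N K : ℕ) (t : ℝ) : ℝ :=
  if traj g H0 (aS a1 T N K) t < traj g H0 (bS a1 T N K) t
  then vel g (bS a1 T N K) t else vel g (aS a1 T N K) t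
noncomputable def V2 (g T a1 H0 : ℝ) (N K : ℕ) (t : ℝ) : ℝ :=
  if traj g H0 (aS a1 T N K) t < traj g H0 (bS a1 T N K) t
  then vel g (aS a1 T N K) t else vel g (bS a1 T N K) t
def Coll (g T a1 H0 : ℝ) (N K : ℕ) (f : ℝ → ℝ) : Set ℝ :=
  {t | 0 ≤ t ∧ (X2 g T a1 H0 N K t = f t ∨ X1 g T a1 H0 N K t = X2 g T a1 H0 N K t)}

section main
variable {g T a1 L : ℝ} {N K : ℕ} {f : ℝ → ℝ}
variable (hg : 0 < g) (hT : 0 < T) (ha1 : 0 < a1) (ha2 : a1 < 2*T)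
variable (hK : 1 ≤ (K:ℝ)) (hN : 2*(K:ℝ)+8 ≤ (N:ℝ))
variable (hLip : ∀ x y : ℝ, |f x - f y| ≤ L*|x - y|)
variable (hlen : 4*L < g*(T*((N:ℝ)-2*K)))
variable (hfa : ∀ z : ℤ, f (a1 + z*T) = f a1)
variable (hda : ∀ z : ℤ, deriv f (a1 + z*T) = (K:ℝ)*T*g/2)

lemma aS_shift (j : ℕ) :
    aS a1 T N K j = a1 + ((((j:ℤ)-1)*((N:ℤ)-2*K+K*j) : ℤ) : ℝ)*T := by
  simp only [aS]; push_cast; ring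

lemma bS_shift (j : ℕ) :
    bS a1 T N K j = a1 + ((((j:ℤ)-1)*((N:ℤ)-K+K*j)+1 : ℤ) : ℝ)*T := by
  simp only [bS]; push_cast; ring

include hfa in
lemma hfaS (j : ℕ) : f (aS a1 T N K j) = f a1 := by rw [aS_shift]; exact hfa _

include hfa in
lemma hfbS (j : ℕ) : f (bS a1 T N K j) = f a1 := by rw [bS_shift]; exact hfa _

include hda in
lemma hdaS (j : ℕ) : deriv f (aS a1 T N K j) = (K:ℝ)*T*g/2 := by rw [aS_shift]; exact hda _

include hda in
lemma hdbS (j : ℕ) : deriv f (bS a1 T N K j) = (K:ℝ)*T*g/2 := by rw [bS_shift]; exact hda _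

include hg hT hK hN hlen in
lemma hlenA (j : ℕ) : 4*L < g*(aS a1 T N K (j+1) - aS a1 T N K j) := by
  rw [aS_succ_sub]
  have hj : (0:ℝ) ≤ (j:ℝ) := Nat.cast_nonneg j
  have hK0 : (0:ℝ) ≤ (K:ℝ) := le_trans zero_le_one hK
  nlinarith [mul_nonneg (mul_nonneg (mul_nonneg hg.le hT.le) hK0) hj]

include hg hT hK hN hlen in
lemma hlenB (j : ℕ) : 4*L < g*(bS a1 T N K (j+1) - bS a1 T N K j) := by
  rw [bS_succ_sub]
  have hj : (0:ℝ) ≤ (j:ℝ) := Nat.cast_nonneg j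
  have hK0 : (0:ℝ) ≤ (K:ℝ) := le_trans zero_le_one hK
  nlinarith [mul_nonneg (mul_nonneg (mul_nonneg hg.le hT.le) hK0) hj,
    mul_nonneg (mul_nonneg hg.le hT.le) hK0]

include hT ha1 hK hN in
lemma aS_succ_pos (i : ℕ) : 0 < aS a1 T N K (i+1) := by
  have h := (aS_mono (a1 := a1) hT hK hN).monotone (show 1 ≤ i+1 by omega)
  rw [aS1_eq] at h
  linarith

include hg hT hK hN hLip hlen hfa in
lemma yB_above_at_aS (i : ℕ) :
    f (aS a1 T N K (i+1)) < traj g (f a1) (bS a1 T N K) (aS a1 T N K (i+1)) :=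
  traj_above_interior hg (bS_mono hT hK hN) hLip (hfbS hfa i) (hfbS hfa (i+1))
    (hlenB hg hT hK hN hlen i) ⟨bS_lt_aS_succ hT hK hN i, aS_lt_bS hT hK i⟩

include hg hT hK hN hLip hlen hfa in
lemma yA_above_at_bS (i : ℕ) :
    f (bS a1 T N K (i+1)) < traj g (f a1) (aS a1 T N K) (bS a1 T N K (i+1)) :=
  traj_above_interior hg (aS_mono hT hK hN) hLip (hfaS hfa (i+1)) (hfaS hfa (i+2))
    (hlenA hg hT hK hN hlen (i+1)) ⟨aS_lt_bS hT hK i, bS_lt_aS_succ hT hK hN (i+1)⟩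

include hT hK hN in
lemma D_seg1 (i : ℕ) {t : ℝ} (h1 : aS a1 T N K (i+1) ≤ t) (h2 : t ≤ bS a1 T N K (i+1)) :
    traj g (f a1) (aS a1 T N K) t - traj g (f a1) (bS a1 T N K) t
      = g/2 * (dd1 a1 T N K i * (t - cc1 a1 T N K i)) := by
  rw [traj_eq (aS_mono hT hK hN) h1 (h2.trans (bS_lt_aS_succ hT hK hN (i+1)).le),
    traj_eq (bS_mono hT hK hN) ((bS_lt_aS_succ hT hK hN i).le.trans h1) h2,
    ← cross1_identity (dd1_pos hT hK hN i).ne']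
  ring

include hT hK hN in
lemma D_seg2 (i : ℕ) {t : ℝ} (h1 : bS a1 T N K (i+1) ≤ t) (h2 : t ≤ aS a1 T N K (i+2)) :
    traj g (f a1) (aS a1 T N K) t - traj g (f a1) (bS a1 T N K) t
      = g/2 * (dd2 a1 T N K i * (t - cc2 a1 T N K i)) := by
  rw [traj_eq (aS_mono hT hK hN) ((aS_lt_bS hT hK i).le.trans h1) h2,
    traj_eq (bS_mono hT hK hN) h1 (h2.trans (aS_lt_bS hT hK (i+1)).le),
    ← cross2_identity (dd2_neg hT hK i).ne]
  ring

include hg hT ha1 ha2 hK hN in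
lemma D_seg0 {t : ℝ} (h0 : 0 ≤ t) (h1 : t ≤ aS a1 T N K 1) :
    traj g (f a1) (aS a1 T N K) t < traj g (f a1) (bS a1 T N K) t := by
  have e1 : traj g (f a1) (aS a1 T N K) t
      = f a1 + g/2*((t - aS a1 T N K 0)*(aS a1 T N K 1 - t)) :=
    traj_eq (aS_mono hT hK hN) ((aS0_neg hT ha2 hK hN).le.trans h0) h1
  have e2 : traj g (f a1) (bS a1 T N K) t
      = f a1 + g/2*((t - bS a1 T N K 0)*(bS a1 T N K 1 - t)) :=
    traj_eq (bS_mono hT hK hN) ((bS0_neg hT ha2 hK hN).le.trans h0)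
      (h1.trans (by rw [aS1_eq, bS1_eq]; linarith))
  rw [e1, e2]
  have h := seg0_neg hT ha1 ha2 hK hN h0 h1
  nlinarith [h]

include hT hK hN in
lemma cc1_eqpt (i : ℕ) :
    traj g (f a1) (aS a1 T N K) (cc1 a1 T N K i) = traj g (f a1) (bS a1 T N K) (cc1 a1 T N K i) := by
  have hD := D_seg1 (g := g) (f := f) (a1 := a1) hT hK hN i (cc1_mem (a1 := a1) hT hK hN i).1.le (cc1_mem (a1 := a1) hT hK hN i).2.le
  have : cc1 a1 T N K i - cc1 a1 T N K i = 0 := sub_self _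
  rw [this, mul_zero, mul_zero] at hD
  linarith [hD]

include hT hK hN in
lemma cc2_eqpt (i : ℕ) :
    traj g (f a1) (aS a1 T N K) (cc2 a1 T N K i) = traj g (f a1) (bS a1 T N K) (cc2 a1 T N K i) := by
  have hD := D_seg2 (g := g) (f := f) (a1 := a1) hT hK hN i (cc2_mem (a1 := a1) hT hK hN i).1.le (cc2_mem (a1 := a1) hT hK hN i).2.le
  have : cc2 a1 T N K i - cc2 a1 T N K i = 0 := sub_self _
  rw [this, mul_zero, mul_zero] at hD
  linarith [hD]

include hg hT hK hN hLip hlen hfa in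
lemma cc1_above (i : ℕ) :
    f (cc1 a1 T N K i) < traj g (f a1) (aS a1 T N K) (cc1 a1 T N K i) :=
  traj_above_interior hg (aS_mono hT hK hN) hLip (hfaS hfa (i+1)) (hfaS hfa (i+2))
    (hlenA hg hT hK hN hlen (i+1))
    ⟨(cc1_mem hT hK hN i).1, (cc1_mem hT hK hN i).2.trans (bS_lt_aS_succ hT hK hN (i+1))⟩

include hg hT hK hN hLip hlen hfa in
lemma cc2_above (i : ℕ) :
    f (cc2 a1 T N K i) < traj g (f a1) (aS a1 T N K) (cc2 a1 T N K i) :=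
  traj_above_interior hg (aS_mono hT hK hN) hLip (hfaS hfa (i+1)) (hfaS hfa (i+2))
    (hlenA hg hT hK hN hlen (i+1))
    ⟨(aS_lt_bS hT hK i).trans (cc2_mem hT hK hN i).1, (cc2_mem hT hK hN i).2⟩

include hg hT hK hN hLip hlen hfa in
lemma cross1_spec (i : ℕ) :
    X1 g T a1 (f a1) N K (cc1 a1 T N K i) = X2 g T a1 (f a1) N K (cc1 a1 T N K i)
    ∧ f (cc1 a1 T N K i) < X2 g T a1 (f a1) N K (cc1 a1 T N K i) := by
  have heq := cc1_eqpt (g := g) (f := f) hT hK hN (a1 := a1) i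
  constructor
  · rw [X1, X2, heq]; simp
  · rw [X2, min_eq_left heq.le]
    exact cc1_above hg hT hK hN hLip hlen hfa i

include hg hT hK hN hLip hlen hfa in
lemma cross2_spec (i : ℕ) :
    X1 g T a1 (f a1) N K (cc2 a1 T N K i) = X2 g T a1 (f a1) N K (cc2 a1 T N K i)
    ∧ f (cc2 a1 T N K i) < X2 g T a1 (f a1) N K (cc2 a1 T N K i) := by
  have heq := cc2_eqpt (g := g) (f := f) hT hK hN (a1 := a1) i
  constructor
  · rw [X1, X2, heq]; simp
  · rw [X2, min_eq_left heq.le]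
    exact cc2_above hg hT hK hN hLip hlen hfa i

include hT hK hN hfa in
lemma yA_at_aS (i : ℕ) :
    traj g (f a1) (aS a1 T N K) (aS a1 T N K (i+1)) = f (aS a1 T N K (i+1)) := by
  rw [traj_event (aS_mono hT hK hN)]
  exact (hfaS hfa (i+1)).symm

include hT hK hN hfa in
lemma yB_at_bS (i : ℕ) :
    traj g (f a1) (bS a1 T N K) (bS a1 T N K (i+1)) = f (bS a1 T N K (i+1)) := by
  rw [traj_event (bS_mono hT hK hN)]
  exact (hfbS hfa (i+1)).symm

include hg hT hK hN hLip hlen hfa in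
lemma plateA_spec (i : ℕ) :
    X2 g T a1 (f a1) N K (aS a1 T N K (i+1)) = f (aS a1 T N K (i+1))
    ∧ X2 g T a1 (f a1) N K (aS a1 T N K (i+1)) < X1 g T a1 (f a1) N K (aS a1 T N K (i+1)) := by
  have hA := yA_at_aS (g := g) hT hK hN hfa (a1 := a1) i
  have hB := yB_above_at_aS hg hT hK hN hLip hlen hfa (a1 := a1) i
  have hlt : traj g (f a1) (aS a1 T N K) (aS a1 T N K (i+1))
      < traj g (f a1) (bS a1 T N K) (aS a1 T N K (i+1)) := by rw [hA]; exact hB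
  constructor
  · rw [X2, min_eq_left hlt.le]; exact hA
  · rw [X2, X1, min_eq_left hlt.le, max_eq_right hlt.le]; exact hlt

include hg hT hK hN hLip hlen hfa in
lemma plateB_spec (i : ℕ) :
    X2 g T a1 (f a1) N K (bS a1 T N K (i+1)) = f (bS a1 T N K (i+1))
    ∧ X2 g T a1 (f a1) N K (bS a1 T N K (i+1)) < X1 g T a1 (f a1) N K (bS a1 T N K (i+1)) := by
  have hA := yB_at_bS (g := g) hT hK hN hfa (a1 := a1) i
  have hB := yA_above_at_bS hg hT hK hN hLip hlen hfa (a1 := a1) i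
  have hlt : traj g (f a1) (bS a1 T N K) (bS a1 T N K (i+1))
      < traj g (f a1) (aS a1 T N K) (bS a1 T N K (i+1)) := by rw [hA]; exact hB
  constructor
  · rw [X2, min_eq_right hlt.le]; exact hA
  · rw [X2, X1, min_eq_right hlt.le, max_eq_left hlt.le]; exact hlt

include hg hT ha2 hK hN hLip hlen hfa in
lemma plate_char {t : ℝ} (h0 : 0 ≤ t) (h : X2 g T a1 (f a1) N K t = f t) :
    (∃ i, t = aS a1 T N K (i+1)) ∨ (∃ i, t = bS a1 T N K (i+1)) := by
  rw [X2] at h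
  rcases min_cases (traj g (f a1) (aS a1 T N K) t) (traj g (f a1) (bS a1 T N K) t) with
    ⟨hmin, _⟩ | ⟨hmin, _⟩
  · left
    rw [hmin] at h
    by_contra hc
    push_neg at hc
    have hne : ∀ j, t ≠ aS a1 T N K j := by
      intro j
      match j with
      | 0 => exact fun hh => absurd (hh ▸ h0) (not_le.2 (aS0_neg hT ha2 hK hN))
      | (i+1) => exact hc i
    exact absurd h (ne_of_gt (traj_above_of_ne hg (aS_mono hT hK hN) (aS_top hT hK hN) hLip
      (hfaS hfa) (hlenA hg hT hK hN hlen) ((aS0_neg hT ha2 hK hN).le.trans h0) hne))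
  · right
    rw [hmin] at h
    by_contra hc
    push_neg at hc
    have hne : ∀ j, t ≠ bS a1 T N K j := by
      intro j
      match j with
      | 0 => exact fun hh => absurd (hh ▸ h0) (not_le.2 (bS0_neg hT ha2 hK hN))
      | (i+1) => exact hc i
    exact absurd h (ne_of_gt (traj_above_of_ne hg (bS_mono hT hK hN) (bS_top hT hK hN) hLip
      (hfbS hfa) (hlenB hg hT hK hN hlen) ((bS0_neg hT ha2 hK hN).le.trans h0) hne))

include hg hT ha1 ha2 hK hN in
lemma cross_char {t : ℝ} (h0 : 0 ≤ t) (h : X1 g T a1 (f a1) N K t = X2 g T a1 (f a1) N K t) :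
    ∃ i, t = cc1 a1 T N K i ∨ t = cc2 a1 T N K i := by
  have hEq : traj g (f a1) (aS a1 T N K) t = traj g (f a1) (bS a1 T N K) t := by
    rw [X1, X2] at h
    rcases le_total (traj g (f a1) (aS a1 T N K) t) (traj g (f a1) (bS a1 T N K) t) with hle | hle
    · rw [max_eq_right hle, min_eq_left hle] at h; exact h.symm
    · rw [max_eq_left hle, min_eq_right hle] at h; exact h
  rcases le_or_gt t (aS a1 T N K 1) with hs | hs
  · exact absurd hEq (ne_of_lt (D_seg0 hg hT ha1 ha2 hK hN h0 hs))
  · have h0' : aS a1 T N K 0 ≤ t := ((aS0_neg hT ha2 hK hN).le.trans h0)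
    obtain ⟨hle, hlt⟩ := idx_spec (aS_mono (a1 := a1) hT hK hN) h0' (aS_top hT hK hN t)
    have hj1 : 1 ≤ idx (aS a1 T N K) t := by
      by_contra hcon
      push_neg at hcon
      have hz : idx (aS a1 T N K) t = 0 := by omega
      rw [hz] at hlt
      exact absurd hs (not_lt.2 hlt.le)
    obtain ⟨i, hi⟩ : ∃ i, idx (aS a1 T N K) t = i+1 := ⟨idx (aS a1 T N K) t - 1, by omega⟩
    rw [hi] at hle hlt
    have hDz : traj g (f a1) (aS a1 T N K) t - traj g (f a1) (bS a1 T N K) t = 0 :=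
      sub_eq_zero_of_eq hEq
    rcases le_or_gt t (bS a1 T N K (i+1)) with hsb | hsb
    · refine ⟨i, Or.inl ?_⟩
      have hD := D_seg1 (g := g) (f := f) hT hK hN i hle hsb
      rw [hDz] at hD
      have h2 : dd1 a1 T N K i * (t - cc1 a1 T N K i) = 0 := by
        rcases mul_eq_zero.mp hD.symm with hh | hh
        · exact absurd hh (by positivity)
        · exact hh
      rcases mul_eq_zero.mp h2 with hh | hh
      · exact absurd hh (dd1_pos hT hK hN i).ne'
      · exact sub_eq_zero.mp hh
    · refine ⟨i, Or.inr ?_⟩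
      have hD := D_seg2 (g := g) (f := f) hT hK hN i hsb.le hlt.le
      rw [hDz] at hD
      have h2 : dd2 a1 T N K i * (t - cc2 a1 T N K i) = 0 := by
        rcases mul_eq_zero.mp hD.symm with hh | hh
        · exact absurd hh (by positivity)
        · exact hh
      rcases mul_eq_zero.mp h2 with hh | hh
      · exact absurd hh (dd2_neg hT hK i).ne
      · exact sub_eq_zero.mp hh

noncomputable def pFun (a1 T : ℝ) (N K : ℕ) (i : ℕ) : ℝ :=
  if i % 2 = 0 then aS a1 T N K (i/2+1) else bS a1 T N K (i/2+1)
noncomputable def qFun (a1 T : ℝ) (N K : ℕ) (i : ℕ) : ℝ :=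
  if i % 2 = 0 then cc1 a1 T N K (i/2) else cc2 a1 T N K (i/2)
noncomputable def EvF (a1 T : ℝ) (N K : ℕ) (i : ℕ) : ℝ :=
  if i % 4 = 0 then aS a1 T N K (i/4+1) else if i % 4 = 1 then cc1 a1 T N K (i/4)
  else if i % 4 = 2 then bS a1 T N K (i/4+1) else cc2 a1 T N K (i/4)

include hT hK hN in
lemma chain1 (i : ℕ) : aS a1 T N K (i+1) < cc1 a1 T N K i := (cc1_mem hT hK hN i).1
include hT hK hN in
lemma chain2 (i : ℕ) : cc1 a1 T N K i < bS a1 T N K (i+1) := (cc1_mem hT hK hN i).2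
include hT hK hN in
lemma chain3 (i : ℕ) : bS a1 T N K (i+1) < cc2 a1 T N K i := (cc2_mem hT hK hN i).1
include hT hK hN in
lemma chain4 (i : ℕ) : cc2 a1 T N K i < aS a1 T N K (i+2) := (cc2_mem hT hK hN i).2

include hT hK hN in
lemma pFun_mono : StrictMono (pFun a1 T N K) := by
  apply strictMono_nat_of_lt_succ
  intro i
  rcases Nat.mod_two_eq_zero_or_one i with h | h
  · have h1 : (i+1) % 2 = 1 := by omega
    have h2 : (i+1)/2 = i/2 := by omega
    simp only [pFun, h, h1, h2]
    norm_num
    exact aS_lt_bS hT hK _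
  · have h1 : (i+1) % 2 = 0 := by omega
    have h2 : (i+1)/2 = i/2+1 := by omega
    simp only [pFun, h, h1, h2]
    norm_num
    exact bS_lt_aS_succ hT hK hN _

include hT hK hN in
lemma qFun_mono : StrictMono (qFun a1 T N K) := by
  apply strictMono_nat_of_lt_succ
  intro i
  rcases Nat.mod_two_eq_zero_or_one i with h | h
  · have h1 : (i+1) % 2 = 1 := by omega
    have h2 : (i+1)/2 = i/2 := by omega
    simp only [qFun, h, h1, h2]
    norm_num
    exact ((chain2 hT hK hN _).trans (chain3 hT hK hN _))
  · have h1 : (i+1) % 2 = 0 := by omega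
    have h2 : (i+1)/2 = i/2+1 := by omega
    simp only [qFun, h, h1, h2]
    norm_num
    exact ((chain4 hT hK hN _).trans (chain1 hT hK hN _))

include hT hK hN in
lemma EvF_mono : StrictMono (EvF a1 T N K) := by
  apply strictMono_nat_of_lt_succ
  intro i
  have h4 : i % 4 = 0 ∨ i % 4 = 1 ∨ i % 4 = 2 ∨ i % 4 = 3 := by omega
  rcases h4 with h | h | h | h
  · have h1 : (i+1) % 4 = 1 := by omega
    have h2 : (i+1)/4 = i/4 := by omega
    simp only [EvF, h, h1, h2]
    norm_num
    exact chain1 hT hK hN _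
  · have h1 : (i+1) % 4 = 2 := by omega
    have h2 : (i+1)/4 = i/4 := by omega
    simp only [EvF, h, h1, h2]
    norm_num
    exact chain2 hT hK hN _
  · have h1 : (i+1) % 4 = 3 := by omega
    have h2 : (i+1)/4 = i/4 := by omega
    simp only [EvF, h, h1, h2]
    norm_num
    exact chain3 hT hK hN _
  · have h1 : (i+1) % 4 = 0 := by omega
    have h2 : (i+1)/4 = i/4+1 := by omega
    simp only [EvF, h, h1, h2]
    norm_num
    exact chain4 hT hK hN _

include hT hK hN in
lemma EvF_ge (i : ℕ) : aS a1 T N K (i/4+1) ≤ EvF a1 T N K i := by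
  have h4 : i % 4 = 0 ∨ i % 4 = 1 ∨ i % 4 = 2 ∨ i % 4 = 3 := by omega
  rcases h4 with h | h | h | h <;> simp only [EvF, h] <;> norm_num
  · exact (chain1 hT hK hN _).le
  · exact (aS_lt_bS hT hK _).le
  · exact ((aS_lt_bS hT hK _).trans (chain3 hT hK hN _)).le

include hT hK hN in
lemma EvF_tendsto : Tendsto (EvF a1 T N K) atTop atTop := by
  have hlow : ∀ i : ℕ, a1 + T*(((i:ℝ)-3)/4) ≤ EvF a1 T N K i := by
    intro i
    have h1 : ((i:ℝ)-3)/4 ≤ ((i/4 : ℕ):ℝ) := by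
      have : i ≤ 4*(i/4) + 3 := by omega
      have hc : (i:ℝ) ≤ 4*((i/4 : ℕ):ℝ) + 3 := by exact_mod_cast this
      linarith
    have h2 : a1 + T*(((i:ℝ)-3)/4) ≤ a1 + T*((i/4 : ℕ):ℝ) := by
      have := mul_le_mul_of_nonneg_left h1 hT.le
      linarith
    exact h2.trans ((aS_ge_lin hT hK hN (i/4)).trans (EvF_ge hT hK hN i))
  apply tendsto_atTop_mono hlow
  apply tendsto_atTop_add_const_left
  have h3 : Tendsto (fun i : ℕ => ((i:ℝ)-3)/4) atTop atTop := by
    apply Tendsto.atTop_div_const (by norm_num : (0:ℝ) < 4)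
    have := tendsto_natCast_atTop_atTop (R := ℝ)
    exact tendsto_atTop_add_const_right atTop (-3 : ℝ) this |>.congr (fun x => by ring)
  exact h3.const_mul_atTop hT

lemma discrete_aux {E : ℕ → ℝ} (htop : Tendsto E atTop atTop) {S : Set ℝ}
    (hS : ∀ s ∈ S, ∃ i, E i = s) : ∀ t : ℝ, ∃ ε > (0:ℝ), ∀ s ∈ S, |s - t| < ε → s = t := by
  intro t
  obtain ⟨n, hn⟩ := Filter.eventually_atTop.mp (htop.eventually_ge_atTop (t+1))
  set Fs := ((Finset.range n).image E).filter (· ≠ t) with hFsdef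
  rcases Fs.eq_empty_or_nonempty with hemp | hne
  · refine ⟨1, one_pos, ?_⟩
    intro s hs hdist
    obtain ⟨i, rfl⟩ := hS s hs
    rcases lt_or_ge i n with hi | hi
    · by_contra hne2
      have hmem : E i ∈ Fs := Finset.mem_filter.2
        ⟨Finset.mem_image.2 ⟨i, Finset.mem_range.2 hi, rfl⟩, hne2⟩
      rw [hemp] at hmem
      exact absurd hmem (Finset.notMem_empty _)
    · have h1 := hn i hi
      have h2 : (1:ℝ) ≤ |E i - t| := by rw [abs_of_nonneg (by linarith)]; linarith
      linarith
  · refine ⟨min 1 (Fs.inf' hne fun s => |s - t|), ?_, ?_⟩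
    · apply lt_min one_pos
      rw [Finset.lt_inf'_iff]
      intro s hsF
      exact abs_pos.2 (sub_ne_zero.2 (Finset.mem_filter.mp hsF).2)
    · intro s hs hdist
      obtain ⟨i, rfl⟩ := hS s hs
      rcases lt_or_ge i n with hi | hi
      · by_contra hne2
        have hmem : E i ∈ Fs := Finset.mem_filter.2
          ⟨Finset.mem_image.2 ⟨i, Finset.mem_range.2 hi, rfl⟩, hne2⟩
        have h1 := Finset.inf'_le (fun s => |s - t|) hmem
        have h2 := lt_of_lt_of_le hdist (min_le_right _ _)
        linarith
      · have h1 := hn i hi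
        have h2 : (1:ℝ) ≤ |E i - t| := by rw [abs_of_nonneg (by linarith)]; linarith
        have h3 := lt_of_lt_of_le hdist (min_le_left _ _)
        linarith

include hg hT ha1 ha2 hK hN hLip hlen hfa in
lemma coll_sub_EvF {t : ℝ} (ht : t ∈ Coll g T a1 (f a1) N K f) :
    ∃ i, EvF a1 T N K i = t := by
  obtain ⟨h0, hcase⟩ := ht
  rcases hcase with h | h
  · rcases plate_char hg hT ha2 hK hN hLip hlen hfa h0 h with ⟨i, rfl⟩ | ⟨i, rfl⟩
    · refine ⟨4*i, ?_⟩
      have h1 : (4*i) % 4 = 0 := by omega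
      have h2 : (4*i)/4 = i := by omega
      simp [EvF, h1, h2]
    · refine ⟨4*i+2, ?_⟩
      have h1 : (4*i+2) % 4 = 2 := by omega
      have h2 : (4*i+2)/4 = i := by omega
      simp [EvF, h1, h2]
  · rcases cross_char hg hT ha1 ha2 hK hN h0 h with ⟨i, hc | hc⟩
    · refine ⟨4*i+1, ?_⟩
      have h1 : (4*i+1) % 4 = 1 := by omega
      have h2 : (4*i+1)/4 = i := by omega
      simp [EvF, h1, h2, hc]
    · refine ⟨4*i+3, ?_⟩
      have h1 : (4*i+3) % 4 = 3 := by omega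
      have h2 : (4*i+3)/4 = i := by omega
      simp [EvF, h1, h2, hc]

include hT ha2 hK hN in
lemma yA_contAt {t : ℝ} (h : 0 ≤ t) : ContinuousAt (traj g (f a1) (aS a1 T N K)) t :=
  traj_continuousAt (aS_mono hT hK hN) (aS_top hT hK hN)
    (lt_of_lt_of_le (aS0_neg hT ha2 hK hN) h)

include hT ha2 hK hN in
lemma yB_contAt {t : ℝ} (h : 0 ≤ t) : ContinuousAt (traj g (f a1) (bS a1 T N K)) t :=
  traj_continuousAt (bS_mono hT hK hN) (bS_top hT hK hN)
    (lt_of_lt_of_le (bS0_neg hT ha2 hK hN) h)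

include hg hT ha1 ha2 hK hN hLip hlen hfa in
lemma ev_lt_at_aS (i : ℕ) : ∀ᶠ s in 𝓝 (aS a1 T N K (i+1)),
    traj g (f a1) (aS a1 T N K) s < traj g (f a1) (bS a1 T N K) s := by
  have h0 : (0:ℝ) ≤ aS a1 T N K (i+1) := (aS_succ_pos hT ha1 hK hN i).le
  have hcont : ContinuousAt (fun s => traj g (f a1) (bS a1 T N K) s
      - traj g (f a1) (aS a1 T N K) s) (aS a1 T N K (i+1)) :=
    (yB_contAt hT ha2 hK hN h0).sub (yA_contAt hT ha2 hK hN h0)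
  have hpos : (0:ℝ) < traj g (f a1) (bS a1 T N K) (aS a1 T N K (i+1))
      - traj g (f a1) (aS a1 T N K) (aS a1 T N K (i+1)) := by
    rw [yA_at_aS hT hK hN hfa i]
    linarith [yB_above_at_aS hg hT hK hN hLip hlen hfa (a1 := a1) i]
  filter_upwards [hcont (Ioi_mem_nhds hpos)] with s hs
  simp only [mem_preimage, mem_Ioi] at hs
  linarith

include hg hT ha1 ha2 hK hN hLip hlen hfa in
lemma ev_gt_at_bS (i : ℕ) : ∀ᶠ s in 𝓝 (bS a1 T N K (i+1)),
    traj g (f a1) (bS a1 T N K) s < traj g (f a1) (aS a1 T N K) s := by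
  have h0 : (0:ℝ) ≤ bS a1 T N K (i+1) :=
    ((aS_succ_pos hT ha1 hK hN i).trans (aS_lt_bS hT hK i)).le
  have hcont : ContinuousAt (fun s => traj g (f a1) (aS a1 T N K) s
      - traj g (f a1) (bS a1 T N K) s) (bS a1 T N K (i+1)) :=
    (yA_contAt hT ha2 hK hN h0).sub (yB_contAt hT ha2 hK hN h0)
  have hpos : (0:ℝ) < traj g (f a1) (aS a1 T N K) (bS a1 T N K (i+1))
      - traj g (f a1) (bS a1 T N K) (bS a1 T N K (i+1)) := by
    rw [yB_at_bS hT hK hN hfa i]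
    linarith [yA_above_at_bS hg hT hK hN hLip hlen hfa (a1 := a1) i]
  filter_upwards [hcont (Ioi_mem_nhds hpos)] with s hs
  simp only [mem_preimage, mem_Ioi] at hs
  linarith

include hg hT hK hN in
lemma ev_sign_left_cc1 (i : ℕ) : ∀ᶠ s in 𝓝[<] (cc1 a1 T N K i),
    traj g (f a1) (aS a1 T N K) s < traj g (f a1) (bS a1 T N K) s := by
  filter_upwards [Ioo_mem_nhdsLT_of_mem ⟨chain1 hT hK hN i, le_rfl⟩] with s hs
  have hD := D_seg1 (g := g) (f := f) (a1 := a1) hT hK hN i hs.1.le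
    (hs.2.le.trans (chain2 hT hK hN i).le)
  nlinarith [mul_pos (mul_pos (half_pos hg) (dd1_pos (a1 := a1) hT hK hN i)) (sub_pos.2 hs.2)]

include hg hT hK hN in
lemma ev_sign_right_cc1 (i : ℕ) : ∀ᶠ s in 𝓝[>] (cc1 a1 T N K i),
    traj g (f a1) (bS a1 T N K) s < traj g (f a1) (aS a1 T N K) s := by
  filter_upwards [Ioo_mem_nhdsGT_of_mem ⟨le_rfl, chain2 hT hK hN i⟩] with s hs
  have hD := D_seg1 (g := g) (f := f) (a1 := a1) hT hK hN i
    ((chain1 hT hK hN i).le.trans hs.1.le) hs.2.le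
  nlinarith [mul_pos (mul_pos (half_pos hg) (dd1_pos (a1 := a1) hT hK hN i)) (sub_pos.2 hs.1)]

include hg hT hK hN in
lemma ev_sign_left_cc2 (i : ℕ) : ∀ᶠ s in 𝓝[<] (cc2 a1 T N K i),
    traj g (f a1) (bS a1 T N K) s < traj g (f a1) (aS a1 T N K) s := by
  filter_upwards [Ioo_mem_nhdsLT_of_mem ⟨chain3 hT hK hN i, le_rfl⟩] with s hs
  have hD := D_seg2 (g := g) (f := f) (a1 := a1) hT hK hN i hs.1.le
    (hs.2.le.trans (chain4 hT hK hN i).le)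
  nlinarith [mul_pos (mul_pos (half_pos hg) (neg_pos.2 (dd2_neg (a1 := a1) (N := N) hT hK i)))
    (sub_pos.2 hs.2)]

include hg hT hK hN in
lemma ev_sign_right_cc2 (i : ℕ) : ∀ᶠ s in 𝓝[>] (cc2 a1 T N K i),
    traj g (f a1) (aS a1 T N K) s < traj g (f a1) (bS a1 T N K) s := by
  filter_upwards [Ioo_mem_nhdsGT_of_mem ⟨le_rfl, chain4 hT hK hN i⟩] with s hs
  have hD := D_seg2 (g := g) (f := f) (a1 := a1) hT hK hN i
    ((chain3 hT hK hN i).le.trans hs.1.le) hs.2.le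
  nlinarith [mul_pos (mul_pos (half_pos hg) (neg_pos.2 (dd2_neg (a1 := a1) (N := N) hT hK i)))
    (sub_pos.2 hs.1)]

include hg hT ha1 ha2 hK hN hLip hlen hfa in
lemma tendsto_V2_right_aS (i : ℕ) :
    Tendsto (V2 g T a1 (f a1) N K) (𝓝[>] (aS a1 T N K (i+1)))
      (𝓝 (g/2*(aS a1 T N K (i+2) - aS a1 T N K (i+1)))) := by
  have hev : V2 g T a1 (f a1) N K =ᶠ[𝓝[>] (aS a1 T N K (i+1))] vel g (aS a1 T N K) := by
    filter_upwards [(ev_lt_at_aS hg hT ha1 ha2 hK hN hLip hlen hfa i).filter_mono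
      nhdsWithin_le_nhds] with s hs
    rw [V2, if_pos hs]
  exact (vel_tendsto_right (aS_mono hT hK hN) (j := i+1)).congr' hev.symm

include hg hT ha1 ha2 hK hN hLip hlen hfa in
lemma tendsto_V2_left_aS (i : ℕ) :
    Tendsto (V2 g T a1 (f a1) N K) (𝓝[<] (aS a1 T N K (i+1)))
      (𝓝 (-(g/2*(aS a1 T N K (i+1) - aS a1 T N K i)))) := by
  have hev : V2 g T a1 (f a1) N K =ᶠ[𝓝[<] (aS a1 T N K (i+1))] vel g (aS a1 T N K) := by
    filter_upwards [(ev_lt_at_aS hg hT ha1 ha2 hK hN hLip hlen hfa i).filter_mono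
      nhdsWithin_le_nhds] with s hs
    rw [V2, if_pos hs]
  exact (vel_tendsto_left (aS_mono hT hK hN) (j := i)).congr' hev.symm

include hg hT ha1 ha2 hK hN hLip hlen hfa in
lemma tendsto_V1_at_aS (i : ℕ) :
    Tendsto (V1 g T a1 (f a1) N K) (𝓝[<] (aS a1 T N K (i+1)))
      (𝓝 (vel g (bS a1 T N K) (aS a1 T N K (i+1))))
    ∧ Tendsto (V1 g T a1 (f a1) N K) (𝓝[>] (aS a1 T N K (i+1)))
      (𝓝 (vel g (bS a1 T N K) (aS a1 T N K (i+1)))) := by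
  have hev : V1 g T a1 (f a1) N K =ᶠ[𝓝 (aS a1 T N K (i+1))] vel g (bS a1 T N K) := by
    filter_upwards [ev_lt_at_aS hg hT ha1 ha2 hK hN hLip hlen hfa i] with s hs
    rw [V1, if_pos hs]
  have hcont : ContinuousAt (vel g (bS a1 T N K)) (aS a1 T N K (i+1)) :=
    vel_continuousAt (bS_mono hT hK hN)
      ⟨bS_lt_aS_succ hT hK hN i, aS_lt_bS hT hK i⟩
  constructor
  · exact (hcont.tendsto.mono_left nhdsWithin_le_nhds).congr'
      (hev.filter_mono nhdsWithin_le_nhds).symm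
  · exact (hcont.tendsto.mono_left nhdsWithin_le_nhds).congr'
      (hev.filter_mono nhdsWithin_le_nhds).symm

include hg hT ha1 ha2 hK hN hLip hlen hfa in
lemma tendsto_V2_right_bS (i : ℕ) :
    Tendsto (V2 g T a1 (f a1) N K) (𝓝[>] (bS a1 T N K (i+1)))
      (𝓝 (g/2*(bS a1 T N K (i+2) - bS a1 T N K (i+1)))) := by
  have hev : V2 g T a1 (f a1) N K =ᶠ[𝓝[>] (bS a1 T N K (i+1))] vel g (bS a1 T N K) := by
    filter_upwards [(ev_gt_at_bS hg hT ha1 ha2 hK hN hLip hlen hfa i).filter_mono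
      nhdsWithin_le_nhds] with s hs
    rw [V2, if_neg (not_lt.2 hs.le)]
  exact (vel_tendsto_right (bS_mono hT hK hN) (j := i+1)).congr' hev.symm

include hg hT ha1 ha2 hK hN hLip hlen hfa in
lemma tendsto_V2_left_bS (i : ℕ) :
    Tendsto (V2 g T a1 (f a1) N K) (𝓝[<] (bS a1 T N K (i+1)))
      (𝓝 (-(g/2*(bS a1 T N K (i+1) - bS a1 T N K i)))) := by
  have hev : V2 g T a1 (f a1) N K =ᶠ[𝓝[<] (bS a1 T N K (i+1))] vel g (bS a1 T N K) := by
    filter_upwards [(ev_gt_at_bS hg hT ha1 ha2 hK hN hLip hlen hfa i).filter_mono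
      nhdsWithin_le_nhds] with s hs
    rw [V2, if_neg (not_lt.2 hs.le)]
  exact (vel_tendsto_left (bS_mono hT hK hN) (j := i)).congr' hev.symm

include hg hT ha1 ha2 hK hN hLip hlen hfa in
lemma tendsto_V1_at_bS (i : ℕ) :
    Tendsto (V1 g T a1 (f a1) N K) (𝓝[<] (bS a1 T N K (i+1)))
      (𝓝 (vel g (aS a1 T N K) (bS a1 T N K (i+1))))
    ∧ Tendsto (V1 g T a1 (f a1) N K) (𝓝[>] (bS a1 T N K (i+1)))
      (𝓝 (vel g (aS a1 T N K) (bS a1 T N K (i+1)))) := by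
  have hev : V1 g T a1 (f a1) N K =ᶠ[𝓝 (bS a1 T N K (i+1))] vel g (aS a1 T N K) := by
    filter_upwards [ev_gt_at_bS hg hT ha1 ha2 hK hN hLip hlen hfa i] with s hs
    rw [V1, if_neg (not_lt.2 hs.le)]
  have hcont : ContinuousAt (vel g (aS a1 T N K)) (bS a1 T N K (i+1)) :=
    vel_continuousAt (aS_mono hT hK hN)
      ⟨aS_lt_bS hT hK i, bS_lt_aS_succ hT hK hN (i+1)⟩
  constructor
  · exact (hcont.tendsto.mono_left nhdsWithin_le_nhds).congr'
      (hev.filter_mono nhdsWithin_le_nhds).symm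
  · exact (hcont.tendsto.mono_left nhdsWithin_le_nhds).congr'
      (hev.filter_mono nhdsWithin_le_nhds).symm

include hT hK hN in
lemma velA_contAt_cc1 (i : ℕ) : ContinuousAt (vel g (aS a1 T N K)) (cc1 a1 T N K i) :=
  vel_continuousAt (aS_mono hT hK hN)
    ⟨chain1 hT hK hN i, (chain2 hT hK hN i).trans (bS_lt_aS_succ hT hK hN (i+1))⟩

include hT hK hN in
lemma velB_contAt_cc1 (i : ℕ) : ContinuousAt (vel g (bS a1 T N K)) (cc1 a1 T N K i) :=
  vel_continuousAt (bS_mono hT hK hN)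
    ⟨(bS_lt_aS_succ hT hK hN i).trans (chain1 hT hK hN i), chain2 hT hK hN i⟩

include hT hK hN in
lemma velA_contAt_cc2 (i : ℕ) : ContinuousAt (vel g (aS a1 T N K)) (cc2 a1 T N K i) :=
  vel_continuousAt (aS_mono hT hK hN)
    ⟨(aS_lt_bS hT hK i).trans (chain3 hT hK hN i), chain4 hT hK hN i⟩

include hT hK hN in
lemma velB_contAt_cc2 (i : ℕ) : ContinuousAt (vel g (bS a1 T N K)) (cc2 a1 T N K i) :=
  vel_continuousAt (bS_mono hT hK hN)
    ⟨chain3 hT hK hN i, (chain4 hT hK hN i).trans (aS_lt_bS hT hK (i+1))⟩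

include hg hT hK hN in
lemma tendsto_cc1 (i : ℕ) :
    Tendsto (V1 g T a1 (f a1) N K) (𝓝[<] (cc1 a1 T N K i))
      (𝓝 (vel g (bS a1 T N K) (cc1 a1 T N K i)))
    ∧ Tendsto (V2 g T a1 (f a1) N K) (𝓝[<] (cc1 a1 T N K i))
      (𝓝 (vel g (aS a1 T N K) (cc1 a1 T N K i)))
    ∧ Tendsto (V1 g T a1 (f a1) N K) (𝓝[>] (cc1 a1 T N K i))
      (𝓝 (vel g (aS a1 T N K) (cc1 a1 T N K i)))
    ∧ Tendsto (V2 g T a1 (f a1) N K) (𝓝[>] (cc1 a1 T N K i))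
      (𝓝 (vel g (bS a1 T N K) (cc1 a1 T N K i))) := by
  have hA := velA_contAt_cc1 (g := g) (a1 := a1) hT hK hN i
  have hB := velB_contAt_cc1 (g := g) (a1 := a1) hT hK hN i
  have hevl := ev_sign_left_cc1 (f := f) (a1 := a1) hg hT hK hN i
  have hevr := ev_sign_right_cc1 (f := f) (a1 := a1) hg hT hK hN i
  refine ⟨?_, ?_, ?_, ?_⟩
  · refine (hB.tendsto.mono_left nhdsWithin_le_nhds).congr' ?_
    filter_upwards [hevl] with s hs
    rw [V1, if_pos hs]
  · refine (hA.tendsto.mono_left nhdsWithin_le_nhds).congr' ?_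
    filter_upwards [hevl] with s hs
    rw [V2, if_pos hs]
  · refine (hA.tendsto.mono_left nhdsWithin_le_nhds).congr' ?_
    filter_upwards [hevr] with s hs
    rw [V1, if_neg (not_lt.2 hs.le)]
  · refine (hB.tendsto.mono_left nhdsWithin_le_nhds).congr' ?_
    filter_upwards [hevr] with s hs
    rw [V2, if_neg (not_lt.2 hs.le)]

include hg hT hK hN in
lemma tendsto_cc2 (i : ℕ) :
    Tendsto (V1 g T a1 (f a1) N K) (𝓝[<] (cc2 a1 T N K i))
      (𝓝 (vel g (aS a1 T N K) (cc2 a1 T N K i)))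
    ∧ Tendsto (V2 g T a1 (f a1) N K) (𝓝[<] (cc2 a1 T N K i))
      (𝓝 (vel g (bS a1 T N K) (cc2 a1 T N K i)))
    ∧ Tendsto (V1 g T a1 (f a1) N K) (𝓝[>] (cc2 a1 T N K i))
      (𝓝 (vel g (bS a1 T N K) (cc2 a1 T N K i)))
    ∧ Tendsto (V2 g T a1 (f a1) N K) (𝓝[>] (cc2 a1 T N K i))
      (𝓝 (vel g (aS a1 T N K) (cc2 a1 T N K i))) := by
  have hA := velA_contAt_cc2 (g := g) (a1 := a1) hT hK hN i
  have hB := velB_contAt_cc2 (g := g) (a1 := a1) hT hK hN i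
  have hevl := ev_sign_left_cc2 (f := f) (a1 := a1) hg hT hK hN i
  have hevr := ev_sign_right_cc2 (f := f) (a1 := a1) hg hT hK hN i
  refine ⟨?_, ?_, ?_, ?_⟩
  · refine (hA.tendsto.mono_left nhdsWithin_le_nhds).congr' ?_
    filter_upwards [hevl] with s hs
    rw [V1, if_neg (not_lt.2 hs.le)]
  · refine (hB.tendsto.mono_left nhdsWithin_le_nhds).congr' ?_
    filter_upwards [hevl] with s hs
    rw [V2, if_neg (not_lt.2 hs.le)]
  · refine (hB.tendsto.mono_left nhdsWithin_le_nhds).congr' ?_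
    filter_upwards [hevr] with s hs
    rw [V1, if_pos hs]
  · refine (hA.tendsto.mono_left nhdsWithin_le_nhds).congr' ?_
    filter_upwards [hevr] with s hs
    rw [V2, if_pos hs]

include hT hK hN in
lemma velA_at_cc1 (i : ℕ) : vel g (aS a1 T N K) (cc1 a1 T N K i)
    = g/2*(aS a1 T N K (i+1) + aS a1 T N K (i+2) - 2*cc1 a1 T N K i) :=
  vel_eq (aS_mono hT hK hN) (chain1 hT hK hN i).le
    ((chain2 hT hK hN i).trans (bS_lt_aS_succ hT hK hN (i+1)))

include hT hK hN in
lemma velB_at_cc2 (i : ℕ) : vel g (bS a1 T N K) (cc2 a1 T N K i)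
    = g/2*(bS a1 T N K (i+1) + bS a1 T N K (i+2) - 2*cc2 a1 T N K i) :=
  vel_eq (bS_mono hT hK hN) (chain3 hT hK hN i).le
    ((chain4 hT hK hN i).trans (aS_lt_bS hT hK (i+1)))

include hg hT ha1 ha2 hK hN hLip hlen hfa in
lemma freefall_all {t : ℝ} (h0 : 0 ≤ t) (hnc : t ∉ Coll g T a1 (f a1) N K f) :
    (HasDerivAt (X1 g T a1 (f a1) N K) (V1 g T a1 (f a1) N K t) t
      ∧ HasDerivAt (V1 g T a1 (f a1) N K) (-g) t)
    ∧ (HasDerivAt (X2 g T a1 (f a1) N K) (V2 g T a1 (f a1) N K t) t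
      ∧ HasDerivAt (V2 g T a1 (f a1) N K) (-g) t) := by
  have hnc' : ¬(X2 g T a1 (f a1) N K t = f t
      ∨ X1 g T a1 (f a1) N K t = X2 g T a1 (f a1) N K t) := fun hh => hnc ⟨h0, hh⟩
  push_neg at hnc'
  obtain ⟨hne1, hne2⟩ := hnc'
  have hneA : ∀ j, t ≠ aS a1 T N K j := by
    intro j hh
    rcases j with _ | i
    · exact absurd (hh ▸ h0) (not_le.2 (aS0_neg hT ha2 hK hN))
    · apply hne1
      rw [hh]
      exact (plateA_spec hg hT hK hN hLip hlen hfa i).1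
  have hneB : ∀ j, t ≠ bS a1 T N K j := by
    intro j hh
    rcases j with _ | i
    · exact absurd (hh ▸ h0) (not_le.2 (bS0_neg hT ha2 hK hN))
    · apply hne1
      rw [hh]
      exact (plateB_spec hg hT hK hN hLip hlen hfa i).1
  have hIA := traj_interior_of_ne (aS_mono (a1 := a1) hT hK hN) (aS_top hT hK hN)
    ((aS0_neg hT ha2 hK hN).le.trans h0) hneA
  have hIB := traj_interior_of_ne (bS_mono (a1 := a1) hT hK hN) (bS_top hT hK hN)
    ((bS0_neg hT ha2 hK hN).le.trans h0) hneB
  have hyane : traj g (f a1) (aS a1 T N K) t ≠ traj g (f a1) (bS a1 T N K) t := by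
    intro hh
    apply hne2
    rw [X1, X2, hh]
    simp
  rcases lt_or_gt_of_ne hyane with hlt | hlt
  · have hev : ∀ᶠ s in 𝓝 t, traj g (f a1) (aS a1 T N K) s < traj g (f a1) (bS a1 T N K) s := by
      have hcont : ContinuousAt (fun s => traj g (f a1) (bS a1 T N K) s
          - traj g (f a1) (aS a1 T N K) s) t :=
        (yB_contAt hT ha2 hK hN h0).sub (yA_contAt hT ha2 hK hN h0)
      filter_upwards [hcont (Ioi_mem_nhds (sub_pos.2 hlt))] with s hs
      simp only [mem_preimage, mem_Ioi] at hs
      linarith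
    have hevX1 : X1 g T a1 (f a1) N K =ᶠ[𝓝 t] traj g (f a1) (bS a1 T N K) := by
      filter_upwards [hev] with s hs
      rw [X1, max_eq_right hs.le]
    have hevV1 : V1 g T a1 (f a1) N K =ᶠ[𝓝 t] vel g (bS a1 T N K) := by
      filter_upwards [hev] with s hs
      rw [V1, if_pos hs]
    have hevX2 : X2 g T a1 (f a1) N K =ᶠ[𝓝 t] traj g (f a1) (aS a1 T N K) := by
      filter_upwards [hev] with s hs
      rw [X2, min_eq_left hs.le]
    have hevV2 : V2 g T a1 (f a1) N K =ᶠ[𝓝 t] vel g (aS a1 T N K) := by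
      filter_upwards [hev] with s hs
      rw [V2, if_pos hs]
    refine ⟨⟨?_, ?_⟩, ?_, ?_⟩
    · have hv : V1 g T a1 (f a1) N K t = vel g (bS a1 T N K) t := by rw [V1, if_pos hlt]
      rw [hv]
      exact (hasDerivAt_traj (bS_mono hT hK hN) hIB).congr_of_eventuallyEq hevX1
    · exact (hasDerivAt_vel (bS_mono hT hK hN) hIB).congr_of_eventuallyEq hevV1
    · have hv : V2 g T a1 (f a1) N K t = vel g (aS a1 T N K) t := by rw [V2, if_pos hlt]
      rw [hv]
      exact (hasDerivAt_traj (aS_mono hT hK hN) hIA).congr_of_eventuallyEq hevX2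
    · exact (hasDerivAt_vel (aS_mono hT hK hN) hIA).congr_of_eventuallyEq hevV2
  · have hev : ∀ᶠ s in 𝓝 t, traj g (f a1) (bS a1 T N K) s < traj g (f a1) (aS a1 T N K) s := by
      have hcont : ContinuousAt (fun s => traj g (f a1) (aS a1 T N K) s
          - traj g (f a1) (bS a1 T N K) s) t :=
        (yA_contAt hT ha2 hK hN h0).sub (yB_contAt hT ha2 hK hN h0)
      filter_upwards [hcont (Ioi_mem_nhds (sub_pos.2 hlt))] with s hs
      simp only [mem_preimage, mem_Ioi] at hs
      linarith
    have hevX1 : X1 g T a1 (f a1) N K =ᶠ[𝓝 t] traj g (f a1) (aS a1 T N K) := by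
      filter_upwards [hev] with s hs
      rw [X1, max_eq_left hs.le]
    have hevV1 : V1 g T a1 (f a1) N K =ᶠ[𝓝 t] vel g (aS a1 T N K) := by
      filter_upwards [hev] with s hs
      rw [V1, if_neg (not_lt.2 hs.le)]
    have hevX2 : X2 g T a1 (f a1) N K =ᶠ[𝓝 t] traj g (f a1) (bS a1 T N K) := by
      filter_upwards [hev] with s hs
      rw [X2, min_eq_right hs.le]
    have hevV2 : V2 g T a1 (f a1) N K =ᶠ[𝓝 t] vel g (bS a1 T N K) := by
      filter_upwards [hev] with s hs
      rw [V2, if_neg (not_lt.2 hs.le)]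
    refine ⟨⟨?_, ?_⟩, ?_, ?_⟩
    · have hv : V1 g T a1 (f a1) N K t = vel g (aS a1 T N K) t := by
        rw [V1, if_neg (not_lt.2 hlt.le)]
      rw [hv]
      exact (hasDerivAt_traj (aS_mono hT hK hN) hIA).congr_of_eventuallyEq hevX1
    · exact (hasDerivAt_vel (aS_mono hT hK hN) hIA).congr_of_eventuallyEq hevV1
    · have hv : V2 g T a1 (f a1) N K t = vel g (bS a1 T N K) t := by
        rw [V2, if_neg (not_lt.2 hlt.le)]
      rw [hv]
      exact (hasDerivAt_traj (bS_mono hT hK hN) hIB).congr_of_eventuallyEq hevX2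
    · exact (hasDerivAt_vel (bS_mono hT hK hN) hIB).congr_of_eventuallyEq hevV2

include hg hT ha2 hK hN hLip hlen hfa in
lemma order_all {t : ℝ} (h0 : 0 ≤ t) :
    f t ≤ X2 g T a1 (f a1) N K t ∧ X2 g T a1 (f a1) N K t ≤ X1 g T a1 (f a1) N K t := by
  constructor
  · exact le_min
      (traj_ge hg (aS_mono hT hK hN) (aS_top hT hK hN) hLip (hfaS hfa)
        (hlenA hg hT hK hN hlen) ((aS0_neg hT ha2 hK hN).le.trans h0))
      (traj_ge hg (bS_mono hT hK hN) (bS_top hT hK hN) hLip (hfbS hfa)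
        (hlenB hg hT hK hN hlen) ((bS0_neg hT ha2 hK hN).le.trans h0))
  · exact min_le_max

include hT ha2 hK hN in
lemma contX1 : ContinuousOn (X1 g T a1 (f a1) N K) (Ici (0:ℝ)) := by
  intro t ht
  have h : ContinuousAt (X1 g T a1 (f a1) N K) t :=
    Tendsto.max (yA_contAt hT ha2 hK hN ht) (yB_contAt hT ha2 hK hN ht)
  exact h.continuousWithinAt

include hT ha2 hK hN in
lemma contX2 : ContinuousOn (X2 g T a1 (f a1) N K) (Ici (0:ℝ)) := by
  intro t ht
  have h : ContinuousAt (X2 g T a1 (f a1) N K) t :=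
    Tendsto.min (yA_contAt hT ha2 hK hN ht) (yB_contAt hT ha2 hK hN ht)
  exact h.continuousWithinAt

include hg hT ha1 ha2 hK hN hLip hlen hfa hda in
set_option maxHeartbeats 2000000 in
theorem construction (m : ℝ) (hm : 0 < m) :
    ∃ M : BouncingBallMotion g f m m, ∃ p q V₁ V₂ : ℕ → ℝ,
      StrictMono p ∧ StrictMono q ∧
      (∀ i : ℕ, p i ∈ M.coll ∧ M.x₂ (p i) = f (p i)) ∧
      (∀ i : ℕ, q i ∈ M.coll ∧ M.x₁ (q i) = M.x₂ (q i)) ∧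
      (∀ t ∈ M.coll, M.x₂ t = f t → ∃ i : ℕ, p i = t) ∧
      (∀ t ∈ M.coll, M.x₁ t = M.x₂ t → ∃ i : ℕ, q i = t) ∧
      (∀ i : ℕ, Tendsto M.v₂ (𝓝[>] (p i)) (𝓝 (V₂ i))) ∧
      (∀ i : ℕ, Tendsto M.v₁ (𝓝[>] (q i)) (𝓝 (V₁ i))) ∧
      Tendsto (fun i : ℕ => |V₁ i|) atTop atTop ∧
      Tendsto (fun i : ℕ => |V₂ i|) atTop atTop := by
  refine ⟨{
    x₁ := X1 g T a1 (f a1) N K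
    x₂ := X2 g T a1 (f a1) N K
    v₁ := V1 g T a1 (f a1) N K
    v₂ := V2 g T a1 (f a1) N K
    coll := Coll g T a1 (f a1) N K f
    cont₁ := contX1 hT ha2 hK hN
    cont₂ := contX2 hT ha2 hK hN
    order := fun t ht => order_all hg hT ha2 hK hN hLip hlen hfa ht
    coll_sub := fun t ht => ht.1
    coll_discrete := discrete_aux (EvF_tendsto (a1 := a1) hT hK hN)
      (fun s hs => coll_sub_EvF hg hT ha1 ha2 hK hN hLip hlen hfa hs)
    freefall₁ := fun t ht => (freefall_all hg hT ha1 ha2 hK hN hLip hlen hfa ht.1 ht.2).1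
    freefall₂ := fun t ht => (freefall_all hg hT ha1 ha2 hK hN hLip hlen hfa ht.1 ht.2).2
    contact_mem_coll := fun t ht h => ⟨ht, h⟩
    coll_is_contact := fun t ht => ht.2
    no_triple := ?_
    plate_law := ?_
    ball_law := ?_ },
    pFun a1 T N K, qFun a1 T N K,
    (fun i => if i % 2 = 0
      then g/2*(aS a1 T N K (i/2+1) + aS a1 T N K (i/2+2) - 2*cc1 a1 T N K (i/2))
      else g/2*(bS a1 T N K (i/2+1) + bS a1 T N K (i/2+2) - 2*cc2 a1 T N K (i/2))),
    (fun i => if i % 2 = 0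
      then g/2*(aS a1 T N K (i/2+2) - aS a1 T N K (i/2+1))
      else g/2*(bS a1 T N K (i/2+2) - bS a1 T N K (i/2+1))),
    pFun_mono hT hK hN, qFun_mono hT hK hN, ?_, ?_, ?_, ?_, ?_, ?_, ?_, ?_⟩
  · -- no_triple
    intro t ht hcon
    obtain ⟨h1, h2⟩ := hcon
    rcases plate_char hg hT ha2 hK hN hLip hlen hfa ht.1 h1 with ⟨i, rfl⟩ | ⟨i, rfl⟩
    · exact absurd h2.symm (ne_of_lt (plateA_spec hg hT hK hN hLip hlen hfa i).2)
    · exact absurd h2.symm (ne_of_lt (plateB_spec hg hT hK hN hLip hlen hfa i).2)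
  · -- plate_law
    intro t ht htpos hX2
    rcases plate_char hg hT ha2 hK hN hLip hlen hfa ht.1 hX2 with ⟨i, rfl⟩ | ⟨i, rfl⟩
    · refine ⟨⟨-(g/2*(aS a1 T N K (i+1) - aS a1 T N K i)),
        g/2*(aS a1 T N K (i+2) - aS a1 T N K (i+1)),
        tendsto_V2_left_aS hg hT ha1 ha2 hK hN hLip hlen hfa i,
        tendsto_V2_right_aS hg hT ha1 ha2 hK hN hLip hlen hfa i, ?_⟩,
        vel g (bS a1 T N K) (aS a1 T N K (i+1)),
        (tendsto_V1_at_aS hg hT ha1 ha2 hK hN hLip hlen hfa i).1,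
        (tendsto_V1_at_aS hg hT ha1 ha2 hK hN hLip hlen hfa i).2⟩
      rw [hdaS (g := g) hda (i+1)]
      have e1 := aS_succ_sub (a1 := a1) (T := T) (N := N) (K := K) (i+1)
      have e2 := aS_succ_sub (a1 := a1) (T := T) (N := N) (K := K) i
      push_cast at e1 e2 ⊢
      nlinarith [e1, e2]
    · refine ⟨⟨-(g/2*(bS a1 T N K (i+1) - bS a1 T N K i)),
        g/2*(bS a1 T N K (i+2) - bS a1 T N K (i+1)),
        tendsto_V2_left_bS hg hT ha1 ha2 hK hN hLip hlen hfa i,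
        tendsto_V2_right_bS hg hT ha1 ha2 hK hN hLip hlen hfa i, ?_⟩,
        vel g (aS a1 T N K) (bS a1 T N K (i+1)),
        (tendsto_V1_at_bS hg hT ha1 ha2 hK hN hLip hlen hfa i).1,
        (tendsto_V1_at_bS hg hT ha1 ha2 hK hN hLip hlen hfa i).2⟩
      rw [hdbS (g := g) hda (i+1)]
      have e1 := bS_succ_sub (a1 := a1) (T := T) (N := N) (K := K) (i+1)
      have e2 := bS_succ_sub (a1 := a1) (T := T) (N := N) (K := K) i
      push_cast at e1 e2 ⊢
      nlinarith [e1, e2]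
  · -- ball_law
    intro t ht htpos hX1
    have hm0 : (m - m)/(m + m) = 0 := by simp
    rcases cross_char hg hT ha1 ha2 hK hN ht.1 hX1 with ⟨i, rfl | rfl⟩
    · obtain ⟨h1, h2, h3, h4⟩ := tendsto_cc1 (f := f) (a1 := a1) hg hT hK hN i
      exact ⟨vel g (bS a1 T N K) (cc1 a1 T N K i), vel g (aS a1 T N K) (cc1 a1 T N K i),
        vel g (aS a1 T N K) (cc1 a1 T N K i), vel g (bS a1 T N K) (cc1 a1 T N K i),
        h1, h2, h3, h4, by rw [hm0]; ring, by rw [hm0]; ring⟩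
    · obtain ⟨h1, h2, h3, h4⟩ := tendsto_cc2 (f := f) (a1 := a1) hg hT hK hN i
      exact ⟨vel g (aS a1 T N K) (cc2 a1 T N K i), vel g (bS a1 T N K) (cc2 a1 T N K i),
        vel g (bS a1 T N K) (cc2 a1 T N K i), vel g (aS a1 T N K) (cc2 a1 T N K i),
        h1, h2, h3, h4, by rw [hm0]; ring, by rw [hm0]; ring⟩
  · -- p i ∈ coll ∧ x₂ = f
    intro i
    rcases Nat.mod_two_eq_zero_or_one i with h | h
    · simp only [pFun, h, if_pos]
      have hs := (plateA_spec hg hT hK hN hLip hlen hfa (i/2)).1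
      exact ⟨⟨(aS_succ_pos hT ha1 hK hN (i/2)).le, Or.inl hs⟩, hs⟩
    · simp only [pFun, h]
      norm_num
      have hs := (plateB_spec hg hT hK hN hLip hlen hfa (i/2)).1
      exact ⟨⟨((aS_succ_pos hT ha1 hK hN (i/2)).trans (aS_lt_bS hT hK (i/2))).le,
        Or.inl hs⟩, hs⟩
  · -- q i ∈ coll ∧ x₁ = x₂
    intro i
    rcases Nat.mod_two_eq_zero_or_one i with h | h
    · simp only [qFun, h, if_pos]
      have hs := (cross1_spec hg hT hK hN hLip hlen hfa (i/2)).1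
      exact ⟨⟨((aS_succ_pos hT ha1 hK hN (i/2)).trans (chain1 hT hK hN (i/2))).le,
        Or.inr hs⟩, hs⟩
    · simp only [qFun, h]
      norm_num
      have hs := (cross2_spec hg hT hK hN hLip hlen hfa (i/2)).1
      exact ⟨⟨((aS_succ_pos hT ha1 hK hN (i/2)).trans ((aS_lt_bS hT hK (i/2)).trans
        (chain3 hT hK hN (i/2)))).le, Or.inr hs⟩, hs⟩
  · -- plate surjectivity
    intro t ht hX2
    rcases plate_char hg hT ha2 hK hN hLip hlen hfa ht.1 hX2 with ⟨i, rfl⟩ | ⟨i, rfl⟩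
    · refine ⟨2*i, ?_⟩
      have h1 : (2*i) % 2 = 0 := by omega
      have h2 : (2*i)/2 = i := by omega
      simp [pFun, h1, h2]
    · refine ⟨2*i+1, ?_⟩
      have h1 : (2*i+1) % 2 = 1 := by omega
      have h2 : (2*i+1)/2 = i := by omega
      simp [pFun, h1, h2]
  · -- cross surjectivity
    intro t ht hX1
    rcases cross_char hg hT ha1 ha2 hK hN ht.1 hX1 with ⟨i, rfl | rfl⟩
    · refine ⟨2*i, ?_⟩
      have h1 : (2*i) % 2 = 0 := by omega
      have h2 : (2*i)/2 = i := by omega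
      simp [qFun, h1, h2]
    · refine ⟨2*i+1, ?_⟩
      have h1 : (2*i+1) % 2 = 1 := by omega
      have h2 : (2*i+1)/2 = i := by omega
      simp [qFun, h1, h2]
  · -- tendsto v₂ right at p i
    intro i
    rcases Nat.mod_two_eq_zero_or_one i with h | h
    · simp only [pFun, h, if_pos]
      norm_num
      exact tendsto_V2_right_aS hg hT ha1 ha2 hK hN hLip hlen hfa (i/2)
    · simp only [pFun, h]
      norm_num
      exact tendsto_V2_right_bS hg hT ha1 ha2 hK hN hLip hlen hfa (i/2)
  · -- tendsto v₁ right at q i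
    intro i
    rcases Nat.mod_two_eq_zero_or_one i with h | h
    · simp only [qFun, h, if_pos]
      norm_num
      have := (tendsto_cc1 (f := f) (a1 := a1) hg hT hK hN (i/2)).2.2.1
      rw [velA_at_cc1 (g := g) hT hK hN (i/2)] at this
      exact this
    · simp only [qFun, h]
      norm_num
      have := (tendsto_cc2 (f := f) (a1 := a1) hg hT hK hN (i/2)).2.2.1
      rw [velB_at_cc2 (g := g) hT hK hN (i/2)] at this
      exact this
  · -- tendsto |V₁| atTop
    have hlin : Tendsto (fun i : ℕ => g*T/4*(i:ℝ)) atTop atTop :=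
      Tendsto.const_mul_atTop (by positivity) tendsto_natCast_atTop_atTop
    apply tendsto_atTop_mono _ hlin
    intro i
    have hcast : ((i:ℝ)) ≤ 2*((i/2 : ℕ):ℝ) + 2 := by
      exact_mod_cast (by omega : i ≤ 2*(i/2) + 2)
    have hgT : (0:ℝ) < g*T := mul_pos hg hT
    dsimp only
    rcases Nat.mod_two_eq_zero_or_one i with h | h
    · rw [if_pos h]
      have hv := vel_cc1_ge (a1 := a1) hg hT hK hN (i/2)
      have hpos : (0:ℝ) < g*T/2*(((i/2 : ℕ):ℝ)+1) := by positivity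
      rw [abs_of_pos (lt_of_lt_of_le hpos hv)]
      nlinarith [hv]
    · rw [if_neg (by omega : ¬ i % 2 = 0)]
      have hv := vel_cc2_ge (a1 := a1) hg hT hK hN (i/2)
      have hpos : (0:ℝ) < g*T/2*(((i/2 : ℕ):ℝ)+1) := by positivity
      rw [abs_of_pos (lt_of_lt_of_le hpos hv)]
      nlinarith [hv]
  · -- tendsto |V₂| atTop
    have hlin : Tendsto (fun i : ℕ => g*T/4*(i:ℝ)) atTop atTop :=
      Tendsto.const_mul_atTop (by positivity) tendsto_natCast_atTop_atTop
    apply tendsto_atTop_mono _ hlin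
    intro i
    have hcast : ((i:ℝ)) ≤ 2*((i/2 : ℕ):ℝ) + 2 := by
      exact_mod_cast (by omega : i ≤ 2*(i/2) + 2)
    have hgT : (0:ℝ) < g*T := mul_pos hg hT
    have hK0 : (0:ℝ) ≤ (K:ℝ) := le_trans zero_le_one hK
    have hi2 : (0:ℝ) ≤ ((i/2 : ℕ):ℝ) := Nat.cast_nonneg _
    dsimp only
    rcases Nat.mod_two_eq_zero_or_one i with h | h
    · rw [if_pos h]
      have e1 := aS_succ_sub (a1 := a1) (T := T) (N := N) (K := K) (i/2+1)
      have hv : g*T/2*(((i/2 : ℕ):ℝ)+1) ≤ g/2*(aS a1 T N K (i/2+2) - aS a1 T N K (i/2+1)) := by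
        rw [show (i/2+2) = (i/2+1)+1 from rfl, e1]
        push_cast
        nlinarith [mul_nonneg (mul_nonneg hg.le hT.le) (mul_nonneg hK0 hi2),
          mul_nonneg (mul_nonneg hg.le hT.le) hK0]
      have hpos : (0:ℝ) < g*T/2*(((i/2 : ℕ):ℝ)+1) := by positivity
      rw [abs_of_pos (lt_of_lt_of_le hpos hv)]
      nlinarith [hv]
    · rw [if_neg (by omega : ¬ i % 2 = 0)]
      have e1 := bS_succ_sub (a1 := a1) (T := T) (N := N) (K := K) (i/2+1)
      have hv : g*T/2*(((i/2 : ℕ):ℝ)+1) ≤ g/2*(bS a1 T N K (i/2+2) - bS a1 T N K (i/2+1)) := by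
        rw [show (i/2+2) = (i/2+1)+1 from rfl, e1]
        push_cast
        nlinarith [mul_nonneg (mul_nonneg hg.le hT.le) (mul_nonneg hK0 hi2),
          mul_nonneg (mul_nonneg hg.le hT.le) hK0]
      have hpos : (0:ℝ) < g*T/2*(((i/2 : ℕ):ℝ)+1) := by positivity
      rw [abs_of_pos (lt_of_lt_of_le hpos hv)]
      nlinarith [hv]

end main
end BBConstr

/-- Theorem 3,2(a): for two balls of equal positive mass above a plate whose
motion `f` belongs to the class `𝒞` (there are `t₀` and a positive integer `K`
with `f'(t₀) = K·T·g/2`), there is a motion in which the post-collision speeds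
of both balls tend to infinity.  Here `p i` enumerates the collisions of the
lower ball `P₂` with the plate (`V₂ i` the velocity just afterwards) and `q i`
enumerates the collisions of the upper ball `P₁` with `P₂` (`V₁ i` the velocity
of `P₁` just afterwards). -/
theorem equal_masses_both_velocities_tendsto_infinity
    (g T m : ℝ) (hg : 0 < g) (hT : 0 < T) (hm : 0 < m)
    (f : ℝ → ℝ) (hf : ContDiff ℝ 1 f) (hfper : Function.Periodic f T)
    (hclass : ∃ t₀ : ℝ, ∃ K : ℕ, 0 < K ∧ deriv f t₀ = K * T * g / 2) :
    ∃ M : BouncingBallMotion g f m m, ∃ p q V₁ V₂ : ℕ → ℝ,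
      StrictMono p ∧ StrictMono q ∧
      (∀ i : ℕ, p i ∈ M.coll ∧ M.x₂ (p i) = f (p i)) ∧
      (∀ i : ℕ, q i ∈ M.coll ∧ M.x₁ (q i) = M.x₂ (q i)) ∧
      (∀ t ∈ M.coll, M.x₂ t = f t → ∃ i : ℕ, p i = t) ∧
      (∀ t ∈ M.coll, M.x₁ t = M.x₂ t → ∃ i : ℕ, q i = t) ∧
      (∀ i : ℕ, Tendsto M.v₂ (𝓝[>] (p i)) (𝓝 (V₂ i))) ∧
      (∀ i : ℕ, Tendsto M.v₁ (𝓝[>] (q i)) (𝓝 (V₁ i))) ∧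
      Tendsto (fun i : ℕ => |V₁ i|) atTop atTop ∧
      Tendsto (fun i : ℕ => |V₂ i|) atTop atTop := by
  obtain ⟨t₀, K, hKpos, hder⟩ := hclass
  have hdf : Differentiable ℝ f := hf.differentiable one_ne_zero
  have hdc : Continuous (deriv f) := hf.continuous_deriv le_rfl
  have hper' : Function.Periodic (deriv f) T := by
    intro x
    have h1 : deriv (fun y => f (y + T)) x = deriv f (x + T) := deriv_comp_add_const f T x
    have h2 : (fun y => f (y + T)) = f := funext hfper
    rw [h2] at h1; exact h1.symm
  have hperZ : ∀ (φ : ℝ → ℝ), Function.Periodic φ T → ∀ (z : ℤ) (x : ℝ), φ (x + z*T) = φ x := by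
    intro φ hφ z x
    simpa using (hφ.int_mul z x)
  obtain ⟨x₀, _, hx₀⟩ := isCompact_Icc.exists_isMaxOn
    (Set.nonempty_Icc.2 hT.le)
    ((continuous_abs.comp hdc).continuousOn : ContinuousOn (fun x => |deriv f x|) (Icc 0 T))
  set L := |deriv f x₀| with hL
  have hbound : ∀ x : ℝ, |deriv f x| ≤ L := by
    intro x
    have h1 : 0 ≤ x - ⌊x/T⌋*T := Int.sub_floor_div_mul_nonneg x hT
    have h2 : x - ⌊x/T⌋*T < T := Int.sub_floor_div_mul_lt x hT
    have h3 : deriv f x = deriv f (x - ⌊x/T⌋*T) := by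
      have h4 := hperZ (deriv f) hper' ⌊x/T⌋ (x - ⌊x/T⌋*T)
      rw [sub_add_cancel] at h4
      exact h4
    rw [h3]
    exact hx₀ ⟨h1, h2.le⟩
  have hLip : ∀ x y : ℝ, |f x - f y| ≤ L*|x - y| := by
    have hC : ∀ x : ℝ, ‖deriv f x‖₊ ≤ ‖deriv f x₀‖₊ := by
      intro x
      rw [← NNReal.coe_le_coe]
      simpa [coe_nnnorm, Real.norm_eq_abs] using hbound x
    have hlw := lipschitzWith_of_nnnorm_deriv_le hdf hC
    intro x y
    have h5 := hlw.dist_le_mul x y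
    simpa [Real.dist_eq, hL, coe_nnnorm, Real.norm_eq_abs] using h5
  set a1 := t₀ - ⌊t₀/T⌋*T + T with ha1def
  have hfrac0 : 0 ≤ t₀ - ⌊t₀/T⌋*T := Int.sub_floor_div_mul_nonneg t₀ hT
  have hfrac1 : t₀ - ⌊t₀/T⌋*T < T := Int.sub_floor_div_mul_lt t₀ hT
  have ha1 : 0 < a1 := by rw [ha1def]; linarith
  have ha2 : a1 < 2*T := by rw [ha1def]; linarith
  set N := 2*K + 9 + ⌈(4*L)/(g*T)⌉₊ with hNdef
  have hK1 : 1 ≤ (K:ℝ) := by exact_mod_cast hKpos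
  have hNc : 2*(K:ℝ) + 8 ≤ (N:ℝ) := by
    rw [hNdef]
    push_cast
    have := Nat.cast_nonneg (α := ℝ) ⌈(4*L)/(g*T)⌉₊
    linarith
  have hlen : 4*L < g*(T*((N:ℝ) - 2*K)) := by
    have hceil : (4*L)/(g*T) ≤ (⌈(4*L)/(g*T)⌉₊ : ℝ) := Nat.le_ceil _
    have hgt : 0 < g*T := mul_pos hg hT
    have h9 : (N:ℝ) - 2*K = 9 + (⌈(4*L)/(g*T)⌉₊ : ℝ) := by rw [hNdef]; push_cast; ring
    have h10 : g*T*((4*L)/(g*T)) = 4*L := by field_simp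
    nlinarith [mul_le_mul_of_nonneg_left hceil hgt.le]
  have hfa : ∀ z : ℤ, f (a1 + z*T) = f a1 := by
    intro z
    have h1 : a1 + (z:ℝ)*T = t₀ + ((1 - ⌊t₀/T⌋ + z : ℤ) : ℝ)*T := by
      rw [ha1def]; push_cast; ring
    have h2 : a1 = t₀ + ((1 - ⌊t₀/T⌋ : ℤ) : ℝ)*T := by
      rw [ha1def]; push_cast; ring
    rw [h1, h2, hperZ f hfper _ t₀, hperZ f hfper _ t₀]
  have hda : ∀ z : ℤ, deriv f (a1 + z*T) = (K:ℝ)*T*g/2 := by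
    intro z
    have h1 : a1 + (z:ℝ)*T = t₀ + ((1 - ⌊t₀/T⌋ + z : ℤ) : ℝ)*T := by
      rw [ha1def]; push_cast; ring
    rw [h1, hperZ (deriv f) hper' _ t₀, hder]
  exact BBConstr.construction hg hT ha1 ha2 hK1 hNc hLip hlen hfa hda m hm
end
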